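/- arXiv:2305.17643 — 14 statements merged into one kernel-verified Lean document; each statement's English description precedes it below -/
import Mathlib

section
/- (Theorem 1, counterfactual means, outcome regression.) Under the sensitivity parametrization, E[(1−Z)·Y(1)] = E[(1−Z)·μ1(X)/ε1(X)] and E[Z·Y(0)] = E[Z·μ0(X)·ε0(X)]; equivalently, E[Y(1) ∣ Z=0] = E[μ1(X)/ε1(X) ∣ Z=0] and E[Y(0) ∣ Z=1] = E[μ0(X)·ε0(X) ∣ Z=1] whenever P(Z=0) > 0 and P(Z=1) > 0. -/
open MeasureTheory

private lemma integral_indicator' {Ω : Type*} (m : MeasurableSpace Ω) (P : @MeasureTheory.Measure Ω m)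
    (f : Ω → ℝ) {s : Set Ω} (hs : @MeasurableSet Ω m s) :
    ∫ ω, s.indicator f ω ∂P = ∫ ω in s, f ω ∂P :=
  integral_indicator hs

/-- Theorem 1 (counterfactual means, outcome regression). -/
theorem counterfactual_means_outcome_regression
    {Ω : Type*} [F : MeasurableSpace Ω] (P : Measure Ω) [IsProbabilityMeasure P]
    (Z Y1 Y0 Y : Ω → ℝ)
    (hZmeas : Measurable Z) (hZ01 : ∀ ω, Z ω = 0 ∨ Z ω = 1)
    (hY1int : Integrable Y1 P) (hY0int : Integrable Y0 P)
    (hYdef : ∀ ω, Y ω = Z ω * Y1 ω + (1 - Z ω) * Y0 ω)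
    (mX : MeasurableSpace Ω) (hmX : mX ≤ F)
    (eX : Ω → ℝ) (heXmeas : Measurable[mX] eX) (heX : eX =ᵐ[P] P[Z|mX])
    (hov : ∀ᵐ ω ∂P, 0 < eX ω ∧ eX ω < 1)
    (mu1 mu0 : Ω → ℝ) (hmu1meas : Measurable[mX] mu1) (hmu0meas : Measurable[mX] mu0)
    (hmu1 : (fun ω => mu1 ω * eX ω) =ᵐ[P] P[fun ω => Z ω * Y ω|mX])
    (hmu0 : (fun ω => mu0 ω * (1 - eX ω)) =ᵐ[P] P[fun ω => (1 - Z ω) * Y ω|mX])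
    (eps1 eps0 : Ω → ℝ)
    (heps1meas : Measurable[mX] eps1) (heps0meas : Measurable[mX] eps0)
    (heps1pos : ∀ᵐ ω ∂P, 0 < eps1 ω) (heps0pos : ∀ᵐ ω ∂P, 0 < eps0 ω)
    (hsens1 : ∀ᵐ ω ∂P, (1 - eX ω) * (P[fun ω' => Z ω' * Y1 ω'|mX]) ω
        = eps1 ω * eX ω * (P[fun ω' => (1 - Z ω') * Y1 ω'|mX]) ω)
    (hsens0 : ∀ᵐ ω ∂P, (1 - eX ω) * (P[fun ω' => Z ω' * Y0 ω'|mX]) ω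
        = eps0 ω * eX ω * (P[fun ω' => (1 - Z ω') * Y0 ω'|mX]) ω)
    (hint1 : Integrable (fun ω => (1 - Z ω) * Y1 ω) P)
    (hint2 : Integrable (fun ω => (1 - Z ω) * (mu1 ω / eps1 ω)) P)
    (hint3 : Integrable (fun ω => Z ω * Y0 ω) P)
    (hint4 : Integrable (fun ω => Z ω * (mu0 ω * eps0 ω)) P) :
    (∫ ω, (1 - Z ω) * Y1 ω ∂P = ∫ ω, (1 - Z ω) * (mu1 ω / eps1 ω) ∂P)
    ∧ (∫ ω, Z ω * Y0 ω ∂P = ∫ ω, Z ω * (mu0 ω * eps0 ω) ∂P)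
    ∧ (0 < P {ω | Z ω = 0} → 0 < P {ω | Z ω = 1} →
        (∫ ω, Y1 ω ∂(ProbabilityTheory.cond P {ω | Z ω = 0})
          = ∫ ω, mu1 ω / eps1 ω ∂(ProbabilityTheory.cond P {ω | Z ω = 0}))
        ∧ (∫ ω, Y0 ω ∂(ProbabilityTheory.cond P {ω | Z ω = 1})
          = ∫ ω, mu0 ω * eps0 ω ∂(ProbabilityTheory.cond P {ω | Z ω = 1}))) := by
  -- Z is an indicator
  have hZind : Z = Set.indicator {ω | Z ω = 1} (fun _ => (1:ℝ)) := by
    funext ω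
    rcases hZ01 ω with h | h <;> simp [Set.indicator, h]
  have hZset : MeasurableSet[F] {ω | Z ω = 1} := hZmeas (measurableSet_singleton 1)
  have hZint : Integrable Z P := by
    refine (integrable_const (1:ℝ)).mono' hZmeas.aestronglyMeasurable (ae_of_all _ fun ω => ?_)
    rcases hZ01 ω with h | h <;> simp [h]
  have h1mZint : Integrable (fun ω => 1 - Z ω) P := (integrable_const (1:ℝ)).sub hZint
  -- Z*Y = Z*Y1 and (1-Z)*Y = (1-Z)*Y0 pointwise
  have hZY : (fun ω => Z ω * Y ω) = fun ω => Z ω * Y1 ω := by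
    funext ω; rcases hZ01 ω with h | h <;> simp [hYdef ω, h]
  have h1ZY : (fun ω => (1 - Z ω) * Y ω) = fun ω => (1 - Z ω) * Y0 ω := by
    funext ω; rcases hZ01 ω with h | h <;> simp [hYdef ω, h]
  -- conditional expectation of 1 - Z
  have hcond1mZ : P[fun ω => 1 - Z ω|mX] =ᵐ[P] fun ω => 1 - eX ω := by
    have h : (fun ω => 1 - Z ω) = (fun _ => (1:ℝ)) - Z := rfl
    rw [h]
    calc P[(fun _ => (1:ℝ)) - Z|mX]
        =ᵐ[P] P[fun _ => (1:ℝ)|mX] - P[Z|mX] :=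
          condExp_sub (integrable_const 1) hZint mX
      _ =ᵐ[P] fun ω => 1 - eX ω := by
          have hc : P[fun _ => (1:ℝ)|mX] = fun _ => (1:ℝ) := condExp_const hmX 1
          filter_upwards [heX] with ω h1
          simp [hc, ← h1]
  -- identification of E[(1-Z)Y1 | X]
  have hcondZY1 : P[fun ω => Z ω * Y1 ω|mX] =ᵐ[P] fun ω => mu1 ω * eX ω := by
    rw [← hZY]; exact hmu1.symm
  have hkey1 : P[fun ω => (1 - Z ω) * Y1 ω|mX] =ᵐ[P] fun ω => mu1 ω / eps1 ω * (1 - eX ω) := by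
    filter_upwards [hsens1, hcondZY1, hov, heps1pos] with ω hs hc hov hε
    rw [hc] at hs
    have he0 : eX ω ≠ 0 := ne_of_gt hov.1
    have hε0 : eps1 ω ≠ 0 := ne_of_gt hε
    have h2 : eps1 ω * eX ω * (mu1 ω / eps1 ω * (1 - eX ω)) = (1 - eX ω) * (mu1 ω * eX ω) := by
      field_simp
    exact (mul_left_cancel₀ (mul_ne_zero hε0 he0) (h2.trans hs)).symm
  -- identification of E[(1-Z)Y0 | X]
  have hcond1ZY0 : P[fun ω => (1 - Z ω) * Y0 ω|mX] =ᵐ[P] fun ω => mu0 ω * (1 - eX ω) := by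
    rw [← h1ZY]; exact hmu0.symm
  have hkey0 : P[fun ω => Z ω * Y0 ω|mX] =ᵐ[P] fun ω => mu0 ω * eps0 ω * eX ω := by
    filter_upwards [hsens0, hcond1ZY0, hov] with ω hs hc hov
    rw [hc] at hs
    have h1e0 : (1 : ℝ) - eX ω ≠ 0 := ne_of_gt (by linarith [hov.2])
    have h2 : (1 - eX ω) * (mu0 ω * eps0 ω * eX ω) = eps0 ω * eX ω * (mu0 ω * (1 - eX ω)) := by
      ring
    exact mul_left_cancel₀ h1e0 (hs.trans h2.symm)
  -- pull-out for the mu1/eps1 side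
  have hf1 : StronglyMeasurable[mX] fun ω => mu1 ω / eps1 ω :=
    (hmu1meas.div heps1meas).stronglyMeasurable
  have hmulint1 : Integrable ((fun ω => mu1 ω / eps1 ω) * fun ω => 1 - Z ω) P := by
    have : ((fun ω => mu1 ω / eps1 ω) * fun ω => 1 - Z ω)
        = fun ω => (1 - Z ω) * (mu1 ω / eps1 ω) := by funext ω; simp [mul_comm]
    rw [this]; exact hint2
  have hpull1 :
      P[(fun ω => mu1 ω / eps1 ω) * fun ω => 1 - Z ω|mX]
        =ᵐ[P] (fun ω => mu1 ω / eps1 ω) * P[fun ω => 1 - Z ω|mX] :=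
    condExp_mul_of_stronglyMeasurable_left hf1 hmulint1 h1mZint
  have hf0 : StronglyMeasurable[mX] fun ω => mu0 ω * eps0 ω :=
    (hmu0meas.mul heps0meas).stronglyMeasurable
  have hmulint0 : Integrable ((fun ω => mu0 ω * eps0 ω) * Z) P := by
    have : ((fun ω => mu0 ω * eps0 ω) * Z) = fun ω => Z ω * (mu0 ω * eps0 ω) := by
      funext ω; simp [mul_comm]
    rw [this]; exact hint4
  have hpull0 :
      P[(fun ω => mu0 ω * eps0 ω) * Z|mX]
        =ᵐ[P] (fun ω => mu0 ω * eps0 ω) * P[Z|mX] :=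
    condExp_mul_of_stronglyMeasurable_left hf0 hmulint0 hZint
  -- first main equality
  have main1 : ∫ ω, (1 - Z ω) * Y1 ω ∂P = ∫ ω, (1 - Z ω) * (mu1 ω / eps1 ω) ∂P := by
    have e1 : ∫ ω, (1 - Z ω) * Y1 ω ∂P = ∫ ω, mu1 ω / eps1 ω * (1 - eX ω) ∂P := by
      rw [← integral_condExp hmX]
      exact integral_congr_ae hkey1
    have e2 : ∫ ω, (1 - Z ω) * (mu1 ω / eps1 ω) ∂P = ∫ ω, mu1 ω / eps1 ω * (1 - eX ω) ∂P := by
      have hfg : (fun ω => (1 - Z ω) * (mu1 ω / eps1 ω))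
          = (fun ω => mu1 ω / eps1 ω) * fun ω => 1 - Z ω := by funext ω; simp [mul_comm]
      rw [hfg, ← integral_condExp hmX]
      refine integral_congr_ae (hpull1.trans ?_)
      filter_upwards [hcond1mZ] with ω h
      simp [h]
    rw [e1, e2]
  -- second main equality
  have main0 : ∫ ω, Z ω * Y0 ω ∂P = ∫ ω, Z ω * (mu0 ω * eps0 ω) ∂P := by
    have e1 : ∫ ω, Z ω * Y0 ω ∂P = ∫ ω, mu0 ω * eps0 ω * eX ω ∂P := by
      rw [← integral_condExp hmX]
      exact integral_congr_ae hkey0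
    have e2 : ∫ ω, Z ω * (mu0 ω * eps0 ω) ∂P = ∫ ω, mu0 ω * eps0 ω * eX ω ∂P := by
      have hfg : (fun ω => Z ω * (mu0 ω * eps0 ω))
          = (fun ω => mu0 ω * eps0 ω) * Z := by funext ω; simp [mul_comm]
      rw [hfg, ← integral_condExp hmX]
      refine integral_congr_ae (hpull0.trans ?_)
      filter_upwards [heX] with ω h
      simp [← h]
    rw [e1, e2]
  refine ⟨main1, main0, fun hP0 hP1 => ?_⟩
  -- conditional measure statements
  have hA0 : MeasurableSet[F] {ω | Z ω = 0} := hZmeas (measurableSet_singleton 0)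
  have hA1 : MeasurableSet[F] {ω | Z ω = 1} := hZset
  have hind0 : ∀ f : Ω → ℝ, (fun ω => (1 - Z ω) * f ω) = Set.indicator {ω | Z ω = 0} f := by
    intro f; funext ω; rcases hZ01 ω with h | h <;> simp [Set.indicator, h]
  have hind1 : ∀ f : Ω → ℝ, (fun ω => Z ω * f ω) = Set.indicator {ω | Z ω = 1} f := by
    intro f; funext ω; rcases hZ01 ω with h | h <;> simp [Set.indicator, h]
  constructor
  · have hset0 : ∫ ω in {ω | Z ω = 0}, Y1 ω ∂P = ∫ ω in {ω | Z ω = 0}, mu1 ω / eps1 ω ∂P := by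
      rw [← integral_indicator' F P Y1 hA0, ← integral_indicator' F P _ hA0, ← hind0 Y1,
        ← hind0 (fun ω => mu1 ω / eps1 ω)]
      exact main1
    simp only [ProbabilityTheory.cond, integral_smul_measure]
    rw [hset0]
  · have hset1 : ∫ ω in {ω | Z ω = 1}, Y0 ω ∂P = ∫ ω in {ω | Z ω = 1}, mu0 ω * eps0 ω ∂P := by
      rw [← integral_indicator' F P Y0 hA1, ← integral_indicator' F P _ hA1, ← hind1 Y0,
        ← hind1 (fun ω => mu0 ω * eps0 ω)]
      exact main0
    simp only [ProbabilityTheory.cond, integral_smul_measure]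
    rw [hset1]
end

section
/- (Theorem 1, predictive identification of the average causal effect.) Under the sensitivity parametrization, τ = E[Z·Y + (1−Z)·μ1(X)/ε1(X)] − E[Z·μ0(X)·ε0(X) + (1−Z)·Y]. -/
open MeasureTheory

/-- Theorem 1 (predictive identification of the average causal effect). -/
theorem predictive_identification_ate
    {Ω : Type*} [F : MeasurableSpace Ω] (P : Measure Ω) [IsProbabilityMeasure P]
    (Z Y1 Y0 Y : Ω → ℝ)
    (hZmeas : Measurable Z) (hZ01 : ∀ ω, Z ω = 0 ∨ Z ω = 1)
    (hY1int : Integrable Y1 P) (hY0int : Integrable Y0 P)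
    (hYdef : ∀ ω, Y ω = Z ω * Y1 ω + (1 - Z ω) * Y0 ω)
    (mX : MeasurableSpace Ω) (hmX : mX ≤ F)
    (eX : Ω → ℝ) (heXmeas : Measurable[mX] eX) (heX : eX =ᵐ[P] P[Z|mX])
    (hov : ∀ᵐ ω ∂P, 0 < eX ω ∧ eX ω < 1)
    (mu1 mu0 : Ω → ℝ) (hmu1meas : Measurable[mX] mu1) (hmu0meas : Measurable[mX] mu0)
    (hmu1 : (fun ω => mu1 ω * eX ω) =ᵐ[P] P[fun ω => Z ω * Y ω|mX])
    (hmu0 : (fun ω => mu0 ω * (1 - eX ω)) =ᵐ[P] P[fun ω => (1 - Z ω) * Y ω|mX])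
    (eps1 eps0 : Ω → ℝ)
    (heps1meas : Measurable[mX] eps1) (heps0meas : Measurable[mX] eps0)
    (heps1pos : ∀ᵐ ω ∂P, 0 < eps1 ω) (heps0pos : ∀ᵐ ω ∂P, 0 < eps0 ω)
    (hsens1 : ∀ᵐ ω ∂P, (1 - eX ω) * (P[fun ω' => Z ω' * Y1 ω'|mX]) ω
        = eps1 ω * eX ω * (P[fun ω' => (1 - Z ω') * Y1 ω'|mX]) ω)
    (hsens0 : ∀ᵐ ω ∂P, (1 - eX ω) * (P[fun ω' => Z ω' * Y0 ω'|mX]) ω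
        = eps0 ω * eX ω * (P[fun ω' => (1 - Z ω') * Y0 ω'|mX]) ω)
    (hint1 : Integrable (fun ω => Z ω * Y ω + (1 - Z ω) * (mu1 ω / eps1 ω)) P)
    (hint2 : Integrable (fun ω => Z ω * (mu0 ω * eps0 ω) + (1 - Z ω) * Y ω) P) :
    ∫ ω, Y1 ω ∂P - ∫ ω, Y0 ω ∂P
      = ∫ ω, (Z ω * Y ω + (1 - Z ω) * (mu1 ω / eps1 ω)) ∂P
        - ∫ ω, (Z ω * (mu0 ω * eps0 ω) + (1 - Z ω) * Y ω) ∂P := by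
  -- basic pointwise facts
  have hZbd : ∀ ω, ‖Z ω‖ ≤ 1 := fun ω => by rcases hZ01 ω with h | h <;> simp [h]
  have h1Zbd : ∀ ω, ‖1 - Z ω‖ ≤ 1 := fun ω => by rcases hZ01 ω with h | h <;> simp [h]
  have hZm : AEStronglyMeasurable[F] Z P := hZmeas.aestronglyMeasurable
  have h1Zm : AEStronglyMeasurable[F] (fun ω => 1 - Z ω) P :=
    aestronglyMeasurable_const.sub hZm
  have hZY1eq : ∀ ω, Z ω * Y ω = Z ω * Y1 ω := fun ω => by
    rcases hZ01 ω with h | h <;> simp [hYdef, h]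
  have h1ZY0eq : ∀ ω, (1 - Z ω) * Y ω = (1 - Z ω) * Y0 ω := fun ω => by
    rcases hZ01 ω with h | h <;> simp [hYdef, h]
  -- integrability
  have hZint : Integrable Z P := by
    have h := (integrable_const (1 : ℝ)).bdd_mul hZm (Filter.Eventually.of_forall hZbd)
    simpa using h
  have hZY1int : Integrable (fun ω => Z ω * Y1 ω) P := hY1int.bdd_mul hZm (Filter.Eventually.of_forall hZbd)
  have hZY0int : Integrable (fun ω => Z ω * Y0 ω) P := hY0int.bdd_mul hZm (Filter.Eventually.of_forall hZbd)
  have h1ZY1int : Integrable (fun ω => (1 - Z ω) * Y1 ω) P := hY1int.bdd_mul h1Zm (Filter.Eventually.of_forall h1Zbd)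
  have h1ZY0int : Integrable (fun ω => (1 - Z ω) * Y0 ω) P := hY0int.bdd_mul h1Zm (Filter.Eventually.of_forall h1Zbd)
  have hZYint : Integrable (fun ω => Z ω * Y ω) P := by
    have : (fun ω => Z ω * Y ω) = fun ω => Z ω * Y1 ω := funext hZY1eq
    rw [this]; exact hZY1int
  have h1ZYint : Integrable (fun ω => (1 - Z ω) * Y ω) P := by
    have : (fun ω => (1 - Z ω) * Y ω) = fun ω => (1 - Z ω) * Y0 ω := funext h1ZY0eq
    rw [this]; exact h1ZY0int
  have h1Zg1int : Integrable (fun ω => (1 - Z ω) * (mu1 ω / eps1 ω)) P := by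
    have h : (fun ω => (1 - Z ω) * (mu1 ω / eps1 ω))
        = fun ω => (Z ω * Y ω + (1 - Z ω) * (mu1 ω / eps1 ω)) - Z ω * Y ω := by
      funext ω; ring
    rw [h]; exact hint1.sub hZYint
  have hZh0int : Integrable (fun ω => Z ω * (mu0 ω * eps0 ω)) P := by
    have h : (fun ω => Z ω * (mu0 ω * eps0 ω))
        = fun ω => (Z ω * (mu0 ω * eps0 ω) + (1 - Z ω) * Y ω) - (1 - Z ω) * Y ω := by
      funext ω; ring
    rw [h]; exact hint2.sub h1ZYint
  -- conditional expectation of 1 - Z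
  have hce1Z : P[fun ω => 1 - Z ω|mX] =ᵐ[P] fun ω => 1 - eX ω := by
    have h := condExp_sub (m := mX) (μ := P) (f := fun _ : Ω => (1 : ℝ)) (g := Z)
      (integrable_const 1) hZint
    have hc : P[fun _ : Ω => (1 : ℝ)|mX] = fun _ => (1 : ℝ) := condExp_const hmX 1
    filter_upwards [h, heX] with ω hω hω2
    have : (P[fun ω => 1 - Z ω|mX]) ω
        = (P[fun _ : Ω => (1 : ℝ)|mX]) ω - (P[Z|mX]) ω := hω
    rw [this, hc, ← hω2]
  -- key a.e. identity 1: (mu1/eps1)·(1-e) = E[(1-Z)Y1 | X]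
  have hZY1c : P[fun ω' => Z ω' * Y1 ω'|mX] =ᵐ[P] fun ω => mu1 ω * eX ω := by
    have h : (fun ω => Z ω * Y ω) = fun ω => Z ω * Y1 ω := funext hZY1eq
    rw [← h]; exact hmu1.symm
  have hkey1 : (fun ω => mu1 ω / eps1 ω * (1 - eX ω))
      =ᵐ[P] P[fun ω => (1 - Z ω) * Y1 ω|mX] := by
    filter_upwards [hsens1, hZY1c, hov, heps1pos] with ω h1 h2 hovω hpω
    rw [h2] at h1
    set C := (P[fun ω' => (1 - Z ω') * Y1 ω'|mX]) ω with hC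
    have h3 : (1 - eX ω) * mu1 ω * eX ω = eps1 ω * C * eX ω := by linear_combination h1
    have h4 : (1 - eX ω) * mu1 ω = eps1 ω * C := mul_right_cancel₀ hovω.1.ne' h3
    rw [div_mul_eq_mul_div, div_eq_iff hpω.ne']
    linear_combination h4
  -- key a.e. identity 0: e·(mu0·eps0) = E[Z·Y0 | X]
  have h1ZY0c : P[fun ω' => (1 - Z ω') * Y0 ω'|mX] =ᵐ[P] fun ω => mu0 ω * (1 - eX ω) := by
    have h : (fun ω => (1 - Z ω) * Y ω) = fun ω => (1 - Z ω) * Y0 ω := funext h1ZY0eq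
    rw [← h]; exact hmu0.symm
  have hkey0 : (fun ω => mu0 ω * eps0 ω * eX ω)
      =ᵐ[P] P[fun ω => Z ω * Y0 ω|mX] := by
    filter_upwards [hsens0, h1ZY0c, hov, heps0pos] with ω h1 h2 hovω hpω
    rw [h2] at h1
    set C := (P[fun ω' => Z ω' * Y0 ω'|mX]) ω with hC
    have hne : (1 : ℝ) - eX ω ≠ 0 := sub_ne_zero.2 (ne_of_gt hovω.2)
    have h3 : C * (1 - eX ω) = mu0 ω * eps0 ω * eX ω * (1 - eX ω) := by
      linear_combination h1
    exact (mul_right_cancel₀ hne h3).symm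
  -- first integral equality
  have e1 : ∫ ω, (1 - Z ω) * (mu1 ω / eps1 ω) ∂P = ∫ ω, (1 - Z ω) * Y1 ω ∂P := by
    rw [← integral_condExp hmX (f := fun ω => (1 - Z ω) * (mu1 ω / eps1 ω)),
      ← integral_condExp hmX (f := fun ω => (1 - Z ω) * Y1 ω)]
    refine integral_congr_ae ?_
    have hg1sm : StronglyMeasurable[mX] (fun ω => mu1 ω / eps1 ω) :=
      (hmu1meas.div heps1meas).stronglyMeasurable
    have hre : (fun ω => (1 - Z ω) * (mu1 ω / eps1 ω))
        = (fun ω => mu1 ω / eps1 ω) * (fun ω => 1 - Z ω) := by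
      funext ω; simp [mul_comm]
    have hpull := condExp_mul_of_stronglyMeasurable_left (μ := P) hg1sm
      (by rw [← hre]; exact h1Zg1int)
      (by exact (integrable_const (1 : ℝ)).sub hZint)
    rw [hre]
    filter_upwards [hpull, hce1Z, hkey1] with ω hp hz hk
    rw [hp]
    simp only [Pi.mul_apply]
    rw [hz]
    exact hk
  -- second integral equality
  have e0 : ∫ ω, Z ω * (mu0 ω * eps0 ω) ∂P = ∫ ω, Z ω * Y0 ω ∂P := by
    rw [← integral_condExp hmX (f := fun ω => Z ω * (mu0 ω * eps0 ω)),
      ← integral_condExp hmX (f := fun ω => Z ω * Y0 ω)]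
    refine integral_congr_ae ?_
    have hh0sm : StronglyMeasurable[mX] (fun ω => mu0 ω * eps0 ω) :=
      (hmu0meas.mul heps0meas).stronglyMeasurable
    have hre : (fun ω => Z ω * (mu0 ω * eps0 ω))
        = (fun ω => mu0 ω * eps0 ω) * Z := by
      funext ω; simp [mul_comm]
    have hpull := condExp_mul_of_stronglyMeasurable_left (μ := P) hh0sm
      (by rw [← hre]; exact hZh0int) hZint
    rw [hre]
    filter_upwards [hpull, heX, hkey0] with ω hp hz hk
    rw [hp]
    simp only [Pi.mul_apply]
    rw [← hz, ← hk]
  -- assemble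
  have hY1split : ∫ ω, Y1 ω ∂P = ∫ ω, Z ω * Y1 ω ∂P + ∫ ω, (1 - Z ω) * Y1 ω ∂P := by
    rw [← integral_add hZY1int h1ZY1int]
    refine integral_congr_ae (Filter.Eventually.of_forall fun ω => ?_)
    ring
  have hY0split : ∫ ω, Y0 ω ∂P = ∫ ω, Z ω * Y0 ω ∂P + ∫ ω, (1 - Z ω) * Y0 ω ∂P := by
    rw [← integral_add hZY0int h1ZY0int]
    refine integral_congr_ae (Filter.Eventually.of_forall fun ω => ?_)
    ring
  have hR1 : ∫ ω, (Z ω * Y ω + (1 - Z ω) * (mu1 ω / eps1 ω)) ∂P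
      = ∫ ω, Z ω * Y ω ∂P + ∫ ω, (1 - Z ω) * (mu1 ω / eps1 ω) ∂P :=
    integral_add hZYint h1Zg1int
  have hR0 : ∫ ω, (Z ω * (mu0 ω * eps0 ω) + (1 - Z ω) * Y ω) ∂P
      = ∫ ω, Z ω * (mu0 ω * eps0 ω) ∂P + ∫ ω, (1 - Z ω) * Y ω ∂P :=
    integral_add hZh0int h1ZYint
  have hZYeqI : ∫ ω, Z ω * Y ω ∂P = ∫ ω, Z ω * Y1 ω ∂P := by
    refine integral_congr_ae (Filter.Eventually.of_forall fun ω => hZY1eq ω)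
  have h1ZYeqI : ∫ ω, (1 - Z ω) * Y ω ∂P = ∫ ω, (1 - Z ω) * Y0 ω ∂P := by
    refine integral_congr_ae (Filter.Eventually.of_forall fun ω => h1ZY0eq ω)
  rw [hR1, hR0, hZYeqI, h1ZYeqI, e1, e0, hY1split, hY0split]
end

section
/- (Theorem 1, projective identification of the average causal effect.) Under the sensitivity parametrization, τ = E[Z·μ1(X) + (1−Z)·μ1(X)/ε1(X)] − E[Z·μ0(X)·ε0(X) + (1−Z)·μ0(X)]. -/
open MeasureTheory

/-- Theorem 1 (projective identification of the average causal effect). -/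
theorem projective_identification_ate
    {Ω : Type*} [F : MeasurableSpace Ω] (P : Measure Ω) [IsProbabilityMeasure P]
    (Z Y1 Y0 Y : Ω → ℝ)
    (hZmeas : Measurable Z) (hZ01 : ∀ ω, Z ω = 0 ∨ Z ω = 1)
    (hY1int : Integrable Y1 P) (hY0int : Integrable Y0 P)
    (hYdef : ∀ ω, Y ω = Z ω * Y1 ω + (1 - Z ω) * Y0 ω)
    (mX : MeasurableSpace Ω) (hmX : mX ≤ F)
    (eX : Ω → ℝ) (heXmeas : Measurable[mX] eX) (heX : eX =ᵐ[P] P[Z|mX])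
    (hov : ∀ᵐ ω ∂P, 0 < eX ω ∧ eX ω < 1)
    (mu1 mu0 : Ω → ℝ) (hmu1meas : Measurable[mX] mu1) (hmu0meas : Measurable[mX] mu0)
    (hmu1 : (fun ω => mu1 ω * eX ω) =ᵐ[P] P[fun ω => Z ω * Y ω|mX])
    (hmu0 : (fun ω => mu0 ω * (1 - eX ω)) =ᵐ[P] P[fun ω => (1 - Z ω) * Y ω|mX])
    (eps1 eps0 : Ω → ℝ)
    (heps1meas : Measurable[mX] eps1) (heps0meas : Measurable[mX] eps0)
    (heps1pos : ∀ᵐ ω ∂P, 0 < eps1 ω) (heps0pos : ∀ᵐ ω ∂P, 0 < eps0 ω)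
    (hsens1 : ∀ᵐ ω ∂P, (1 - eX ω) * (P[fun ω' => Z ω' * Y1 ω'|mX]) ω
        = eps1 ω * eX ω * (P[fun ω' => (1 - Z ω') * Y1 ω'|mX]) ω)
    (hsens0 : ∀ᵐ ω ∂P, (1 - eX ω) * (P[fun ω' => Z ω' * Y0 ω'|mX]) ω
        = eps0 ω * eX ω * (P[fun ω' => (1 - Z ω') * Y0 ω'|mX]) ω)
    (hint1 : Integrable (fun ω => Z ω * mu1 ω + (1 - Z ω) * (mu1 ω / eps1 ω)) P)
    (hint2 : Integrable (fun ω => Z ω * (mu0 ω * eps0 ω) + (1 - Z ω) * mu0 ω) P) :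
    ∫ ω, Y1 ω ∂P - ∫ ω, Y0 ω ∂P
      = ∫ ω, (Z ω * mu1 ω + (1 - Z ω) * (mu1 ω / eps1 ω)) ∂P
        - ∫ ω, (Z ω * (mu0 ω * eps0 ω) + (1 - Z ω) * mu0 ω) ∂P := by

  haveI : SigmaFinite (P.trim hmX) := inferInstance
  -- pointwise facts about Z
  have hZbd : ∀ ω, ‖Z ω‖ ≤ 1 := fun ω => by rcases hZ01 ω with h | h <;> simp [h]
  have h1Zbd : ∀ ω, ‖1 - Z ω‖ ≤ 1 := fun ω => by rcases hZ01 ω with h | h <;> simp [h]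
  have hZm : AEStronglyMeasurable[F] Z P := hZmeas.aestronglyMeasurable
  have h1Zm : AEStronglyMeasurable[F] (fun ω => 1 - Z ω) P :=
    (measurable_const.sub hZmeas).aestronglyMeasurable
  have mulZ : ∀ {g : Ω → ℝ}, Integrable g P → Integrable (fun ω => Z ω * g ω) P :=
    fun hg => hg.bdd_mul hZm (Filter.Eventually.of_forall hZbd)
  have mul1Z : ∀ {g : Ω → ℝ}, Integrable g P → Integrable (fun ω => (1 - Z ω) * g ω) P :=
    fun hg => hg.bdd_mul h1Zm (Filter.Eventually.of_forall h1Zbd)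
  have hZint : Integrable Z P := by
    have h := mulZ (integrable_const (1 : ℝ)); simpa using h
  have h1Zint : Integrable (fun ω => 1 - Z ω) P := (integrable_const (1 : ℝ)).sub hZint
  -- Z*Y = Z*Y1 and (1-Z)*Y = (1-Z)*Y0 pointwise
  have hZY1 : (fun ω => Z ω * Y1 ω) = fun ω => Z ω * Y ω := by
    funext ω; rcases hZ01 ω with h | h <;> simp [hYdef ω, h]
  have h1ZY0 : (fun ω => (1 - Z ω) * Y0 ω) = fun ω => (1 - Z ω) * Y ω := by
    funext ω; rcases hZ01 ω with h | h <;> simp [hYdef ω, h]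
  have hA1 : P[fun ω => Z ω * Y1 ω|mX] =ᵐ[P] fun ω => mu1 ω * eX ω := by
    rw [hZY1]; exact hmu1.symm
  have hB0 : P[fun ω => (1 - Z ω) * Y0 ω|mX] =ᵐ[P] fun ω => mu0 ω * (1 - eX ω) := by
    rw [h1ZY0]; exact hmu0.symm
  have hB1 : P[fun ω => (1 - Z ω) * Y1 ω|mX] =ᵐ[P]
      fun ω => (1 - eX ω) * (mu1 ω / eps1 ω) := by
    filter_upwards [hsens1, hA1, heps1pos, hov] with ω hs hA hε hoe
    obtain ⟨he0, he1⟩ := hoe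
    have hε' : eps1 ω ≠ 0 := ne_of_gt hε
    have hne : eps1 ω * eX ω ≠ 0 := by positivity
    apply mul_left_cancel₀ hne
    rw [← hs, hA]
    field_simp
  have hA0 : P[fun ω => Z ω * Y0 ω|mX] =ᵐ[P] fun ω => (mu0 ω * eps0 ω) * eX ω := by
    filter_upwards [hsens0, hB0, hov] with ω hs hB hoe
    obtain ⟨he0, he1⟩ := hoe
    have hne : (1 - eX ω) ≠ 0 := by linarith
    apply mul_left_cancel₀ hne
    rw [hs, hB]
    ring
  -- conditional expectation of 1 - Z
  have h1Zce : P[fun ω => 1 - Z ω|mX] =ᵐ[P] fun ω => 1 - eX ω := by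
    have hsub := condExp_sub (μ := P) (m := mX) (f := fun _ => (1 : ℝ)) (g := Z)
      (integrable_const (1 : ℝ)) hZint
    have hc : P[fun _ : Ω => (1 : ℝ)|mX] = fun _ => (1 : ℝ) := condExp_const hmX 1
    filter_upwards [hsub, heX] with ω h1 h2
    have : (P[fun ω => 1 - Z ω|mX]) ω = (P[fun _ : Ω => (1 : ℝ)|mX]) ω - (P[Z|mX]) ω := h1
    rw [this, hc, ← h2]
  -- conditional expectation identity for Y1
  have hEY1 : P[Y1|mX] =ᵐ[P] fun ω => mu1 ω * eX ω + (1 - eX ω) * (mu1 ω / eps1 ω) := by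
    have hrw : Y1 = (fun ω => Z ω * Y1 ω) + fun ω => (1 - Z ω) * Y1 ω := by
      funext ω; simp only [Pi.add_apply]; ring
    calc P[Y1|mX] = P[(fun ω => Z ω * Y1 ω) + fun ω => (1 - Z ω) * Y1 ω|mX] := by rw [← hrw]
      _ =ᵐ[P] P[fun ω => Z ω * Y1 ω|mX] + P[fun ω => (1 - Z ω) * Y1 ω|mX] :=
          condExp_add (mulZ hY1int) (mul1Z hY1int) mX
      _ =ᵐ[P] fun ω => mu1 ω * eX ω + (1 - eX ω) * (mu1 ω / eps1 ω) := by
          filter_upwards [hA1, hB1] with ω h1 h2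
          simp only [Pi.add_apply, h1, h2]
  -- conditional expectation identity for Y0
  have hEY0 : P[Y0|mX] =ᵐ[P] fun ω => (mu0 ω * eps0 ω) * eX ω + mu0 ω * (1 - eX ω) := by
    have hrw : Y0 = (fun ω => Z ω * Y0 ω) + fun ω => (1 - Z ω) * Y0 ω := by
      funext ω; simp only [Pi.add_apply]; ring
    calc P[Y0|mX] = P[(fun ω => Z ω * Y0 ω) + fun ω => (1 - Z ω) * Y0 ω|mX] := by rw [← hrw]
      _ =ᵐ[P] P[fun ω => Z ω * Y0 ω|mX] + P[fun ω => (1 - Z ω) * Y0 ω|mX] :=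
          condExp_add (mulZ hY0int) (mul1Z hY0int) mX
      _ =ᵐ[P] fun ω => (mu0 ω * eps0 ω) * eX ω + mu0 ω * (1 - eX ω) := by
          filter_upwards [hA0, hB0] with ω h1 h2
          simp only [Pi.add_apply, h1, h2]
  -- conditional expectation of the first identified integrand
  have hintA1 : Integrable (fun ω => mu1 ω * Z ω) P := by
    refine (mulZ hint1).congr (Filter.Eventually.of_forall fun ω => ?_)
    rcases hZ01 ω with h | h <;> simp [h] <;> ring
  have hintB1 : Integrable (fun ω => (mu1 ω / eps1 ω) * (1 - Z ω)) P := by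
    refine (mul1Z hint1).congr (Filter.Eventually.of_forall fun ω => ?_)
    rcases hZ01 ω with h | h <;> simp [h] <;> ring
  have hmulA1 : P[fun ω => mu1 ω * Z ω|mX] =ᵐ[P] fun ω => mu1 ω * (P[Z|mX]) ω :=
    condExp_mul_of_stronglyMeasurable_left (μ := P) (f := mu1) (g := Z)
      hmu1meas.stronglyMeasurable hintA1 hZint
  have hmulB1 : P[fun ω => mu1 ω / eps1 ω * (1 - Z ω)|mX]
      =ᵐ[P] fun ω => mu1 ω / eps1 ω * (P[fun ω => 1 - Z ω|mX]) ω :=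
    condExp_mul_of_stronglyMeasurable_left (μ := P) (f := fun ω => mu1 ω / eps1 ω)
      (g := fun ω => 1 - Z ω) (hmu1meas.div heps1meas).stronglyMeasurable hintB1 h1Zint
  have hEf1 : P[fun ω => Z ω * mu1 ω + (1 - Z ω) * (mu1 ω / eps1 ω)|mX]
      =ᵐ[P] fun ω => mu1 ω * eX ω + (1 - eX ω) * (mu1 ω / eps1 ω) := by
    have hrw : (fun ω => Z ω * mu1 ω + (1 - Z ω) * (mu1 ω / eps1 ω))
        = (fun ω => mu1 ω * Z ω) + fun ω => (mu1 ω / eps1 ω) * (1 - Z ω) := by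
      funext ω; simp only [Pi.add_apply]; ring
    calc P[fun ω => Z ω * mu1 ω + (1 - Z ω) * (mu1 ω / eps1 ω)|mX]
        = P[(fun ω => mu1 ω * Z ω) + fun ω => (mu1 ω / eps1 ω) * (1 - Z ω)|mX] := by rw [hrw]
      _ =ᵐ[P] P[fun ω => mu1 ω * Z ω|mX] + P[fun ω => (mu1 ω / eps1 ω) * (1 - Z ω)|mX] :=
          condExp_add hintA1 hintB1 mX
      _ =ᵐ[P] fun ω => mu1 ω * eX ω + (1 - eX ω) * (mu1 ω / eps1 ω) := by
          filter_upwards [hmulA1, hmulB1, heX, h1Zce] with ω h1 h2 h3 h4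
          simp only [Pi.add_apply, Pi.mul_apply] at h1 h2 ⊢
          rw [h1, h2, ← h3, h4]
          ring
  -- conditional expectation of the second identified integrand
  have hintA0 : Integrable (fun ω => (mu0 ω * eps0 ω) * Z ω) P := by
    refine (mulZ hint2).congr (Filter.Eventually.of_forall fun ω => ?_)
    rcases hZ01 ω with h | h <;> simp [h] <;> ring
  have hintB0 : Integrable (fun ω => mu0 ω * (1 - Z ω)) P := by
    refine (mul1Z hint2).congr (Filter.Eventually.of_forall fun ω => ?_)
    rcases hZ01 ω with h | h <;> simp [h] <;> ring
  have hmulA0 : P[fun ω => mu0 ω * eps0 ω * Z ω|mX]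
      =ᵐ[P] fun ω => mu0 ω * eps0 ω * (P[Z|mX]) ω :=
    condExp_mul_of_stronglyMeasurable_left (μ := P) (f := fun ω => mu0 ω * eps0 ω)
      (g := Z) (hmu0meas.mul heps0meas).stronglyMeasurable hintA0 hZint
  have hmulB0 : P[fun ω => mu0 ω * (1 - Z ω)|mX]
      =ᵐ[P] fun ω => mu0 ω * (P[fun ω => 1 - Z ω|mX]) ω :=
    condExp_mul_of_stronglyMeasurable_left (μ := P) (f := mu0)
      (g := fun ω => 1 - Z ω) hmu0meas.stronglyMeasurable hintB0 h1Zint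
  have hEf0 : P[fun ω => Z ω * (mu0 ω * eps0 ω) + (1 - Z ω) * mu0 ω|mX]
      =ᵐ[P] fun ω => (mu0 ω * eps0 ω) * eX ω + mu0 ω * (1 - eX ω) := by
    have hrw : (fun ω => Z ω * (mu0 ω * eps0 ω) + (1 - Z ω) * mu0 ω)
        = (fun ω => (mu0 ω * eps0 ω) * Z ω) + fun ω => mu0 ω * (1 - Z ω) := by
      funext ω; simp only [Pi.add_apply]; ring
    calc P[fun ω => Z ω * (mu0 ω * eps0 ω) + (1 - Z ω) * mu0 ω|mX]
        = P[(fun ω => (mu0 ω * eps0 ω) * Z ω) + fun ω => mu0 ω * (1 - Z ω)|mX] := by rw [hrw]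
      _ =ᵐ[P] P[fun ω => (mu0 ω * eps0 ω) * Z ω|mX] + P[fun ω => mu0 ω * (1 - Z ω)|mX] :=
          condExp_add hintA0 hintB0 mX
      _ =ᵐ[P] fun ω => (mu0 ω * eps0 ω) * eX ω + mu0 ω * (1 - eX ω) := by
          filter_upwards [hmulA0, hmulB0, heX, h1Zce] with ω h1 h2 h3 h4
          simp only [Pi.add_apply, Pi.mul_apply] at h1 h2 ⊢
          rw [h1, h2, ← h3, h4]
  -- put everything together
  have key1 : ∫ ω, Y1 ω ∂P = ∫ ω, (Z ω * mu1 ω + (1 - Z ω) * (mu1 ω / eps1 ω)) ∂P := by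
    calc ∫ ω, Y1 ω ∂P = ∫ ω, (P[Y1|mX]) ω ∂P := (integral_condExp hmX).symm
      _ = ∫ ω, (P[fun ω => Z ω * mu1 ω + (1 - Z ω) * (mu1 ω / eps1 ω)|mX]) ω ∂P :=
          integral_congr_ae (hEY1.trans hEf1.symm)
      _ = ∫ ω, (Z ω * mu1 ω + (1 - Z ω) * (mu1 ω / eps1 ω)) ∂P := integral_condExp hmX
  have key0 : ∫ ω, Y0 ω ∂P = ∫ ω, (Z ω * (mu0 ω * eps0 ω) + (1 - Z ω) * mu0 ω) ∂P := by
    calc ∫ ω, Y0 ω ∂P = ∫ ω, (P[Y0|mX]) ω ∂P := (integral_condExp hmX).symm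
      _ = ∫ ω, (P[fun ω => Z ω * (mu0 ω * eps0 ω) + (1 - Z ω) * mu0 ω|mX]) ω ∂P :=
          integral_congr_ae (hEY0.trans hEf0.symm)
      _ = ∫ ω, (Z ω * (mu0 ω * eps0 ω) + (1 - Z ω) * mu0 ω) ∂P := integral_condExp hmX
  rw [key1, key0]
end

section
/- (Theorem 2, inverse probability weighting identification for the treated-arm mean.) Under the sensitivity parametrization, with weight w1(X) = e(X) + (1−e(X))/ε1(X), the mean of the potential outcome under treatment is identified as E[Y(1)] = E[w1(X)·Z·Y / e(X)]. -/
open MeasureTheory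

/-- Theorem 2 (inverse probability weighting identification, treated arm). -/
theorem ipw_identification_treated
    {Ω : Type*} [F : MeasurableSpace Ω] (P : Measure Ω) [IsProbabilityMeasure P]
    (Z Y1 Y0 Y : Ω → ℝ)
    (hZmeas : Measurable Z) (hZ01 : ∀ ω, Z ω = 0 ∨ Z ω = 1)
    (hY1int : Integrable Y1 P) (hY0int : Integrable Y0 P)
    (hYdef : ∀ ω, Y ω = Z ω * Y1 ω + (1 - Z ω) * Y0 ω)
    (mX : MeasurableSpace Ω) (hmX : mX ≤ F)
    (eX : Ω → ℝ) (heXmeas : Measurable[mX] eX) (heX : eX =ᵐ[P] P[Z|mX])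
    (hov : ∀ᵐ ω ∂P, 0 < eX ω ∧ eX ω < 1)
    (mu1 mu0 : Ω → ℝ) (hmu1meas : Measurable[mX] mu1) (hmu0meas : Measurable[mX] mu0)
    (hmu1 : (fun ω => mu1 ω * eX ω) =ᵐ[P] P[fun ω => Z ω * Y ω|mX])
    (hmu0 : (fun ω => mu0 ω * (1 - eX ω)) =ᵐ[P] P[fun ω => (1 - Z ω) * Y ω|mX])
    (eps1 eps0 : Ω → ℝ)
    (heps1meas : Measurable[mX] eps1) (heps0meas : Measurable[mX] eps0)
    (heps1pos : ∀ᵐ ω ∂P, 0 < eps1 ω) (heps0pos : ∀ᵐ ω ∂P, 0 < eps0 ω)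
    (hsens1 : ∀ᵐ ω ∂P, (1 - eX ω) * (P[fun ω' => Z ω' * Y1 ω'|mX]) ω
        = eps1 ω * eX ω * (P[fun ω' => (1 - Z ω') * Y1 ω'|mX]) ω)
    (hsens0 : ∀ᵐ ω ∂P, (1 - eX ω) * (P[fun ω' => Z ω' * Y0 ω'|mX]) ω
        = eps0 ω * eX ω * (P[fun ω' => (1 - Z ω') * Y0 ω'|mX]) ω)
    (hint1 : Integrable (fun ω => (eX ω + (1 - eX ω) / eps1 ω) * (Z ω * Y ω) / eX ω) P) :
    ∫ ω, Y1 ω ∂P = ∫ ω, (eX ω + (1 - eX ω) / eps1 ω) * (Z ω * Y ω) / eX ω ∂P := by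

  classical
  -- Z * Y = Z * Y1 pointwise
  have hZY : ∀ ω, Z ω * Y ω = Z ω * Y1 ω := by
    intro ω
    rcases hZ01 ω with h | h <;> rw [hYdef ω, h] <;> ring
  set f : Ω → ℝ := fun ω => (eX ω + (1 - eX ω) / eps1 ω) / eX ω with hf
  have hrw : ∀ ω, (eX ω + (1 - eX ω) / eps1 ω) * (Z ω * Y ω) / eX ω
      = f ω * (Z ω * Y1 ω) := by
    intro ω; rw [hZY ω]; simp only [hf]; ring
  have hfmeas : StronglyMeasurable[mX] f :=
    ((heXmeas.add ((measurable_const.sub heXmeas).div heps1meas)).div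
      heXmeas).stronglyMeasurable
  have hg1 : Integrable (fun ω => Z ω * Y1 ω) P := by
    refine hY1int.bdd_mul (c := 1) (hZmeas.aestronglyMeasurable) (Filter.Eventually.of_forall fun ω => ?_)
    rcases hZ01 ω with h | h <;> simp [h]
  have hg0 : Integrable (fun ω => (1 - Z ω) * Y1 ω) P := by
    refine hY1int.bdd_mul ((measurable_const.sub hZmeas).aestronglyMeasurable)
      (c := 1) (Filter.Eventually.of_forall fun ω => ?_)
    rcases hZ01 ω with h | h <;> simp [h]
  have hfg : Integrable (f * fun ω => Z ω * Y1 ω) P := by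
    refine hint1.congr (Filter.Eventually.of_forall fun ω => ?_)
    simp only [Pi.mul_apply]; exact hrw ω
  have hpull : P[f * fun ω => Z ω * Y1 ω|mX] =ᵐ[P] f * P[fun ω => Z ω * Y1 ω|mX] :=
    condExp_mul_of_stronglyMeasurable_left hfmeas hfg hg1
  have hadd : P[Y1|mX] =ᵐ[P] P[fun ω => Z ω * Y1 ω|mX] + P[fun ω => (1 - Z ω) * Y1 ω|mX] := by
    have h1 : P[fun ω => Z ω * Y1 ω + (1 - Z ω) * Y1 ω|mX]
        =ᵐ[P] P[fun ω => Z ω * Y1 ω|mX] + P[fun ω => (1 - Z ω) * Y1 ω|mX] :=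
      condExp_add hg1 hg0 mX
    have h2 : Y1 =ᵐ[P] fun ω => Z ω * Y1 ω + (1 - Z ω) * Y1 ω :=
      Filter.Eventually.of_forall fun ω => by ring
    exact (condExp_congr_ae h2).trans h1
  -- a.e. identity: f * E[Z Y1 | X] = E[Z Y1|X] + E[(1-Z) Y1|X]
  have hkey : f * P[fun ω => Z ω * Y1 ω|mX] =ᵐ[P] P[Y1|mX] := by
    filter_upwards [hov, heps1pos, hsens1, hadd] with ω hov hε hs ha
    have he0 : eX ω ≠ 0 := ne_of_gt hov.1
    have hε0 : eps1 ω ≠ 0 := ne_of_gt hε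
    simp only [Pi.mul_apply, Pi.add_apply, hf] at *
    rw [ha]
    field_simp
    linear_combination hs
  have hcond : P[fun ω => (eX ω + (1 - eX ω) / eps1 ω) * (Z ω * Y ω) / eX ω|mX]
      =ᵐ[P] P[Y1|mX] := by
    have hfun : (fun ω => (eX ω + (1 - eX ω) / eps1 ω) * (Z ω * Y ω) / eX ω)
        = f * fun ω => Z ω * Y1 ω := by
      funext ω; exact hrw ω
    rw [hfun]
    exact hpull.trans hkey
  calc ∫ ω, Y1 ω ∂P = ∫ ω, (P[Y1|mX]) ω ∂P := (integral_condExp hmX).symm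
    _ = ∫ ω, (P[fun ω => (eX ω + (1 - eX ω) / eps1 ω) * (Z ω * Y ω) / eX ω|mX]) ω ∂P :=
        (integral_congr_ae hcond).symm
    _ = ∫ ω, (eX ω + (1 - eX ω) / eps1 ω) * (Z ω * Y ω) / eX ω ∂P := integral_condExp hmX
end

section
/- (Theorem 2, inverse probability weighting identification for the control-arm mean.) Under the sensitivity parametrization, with weight w0(X) = e(X)·ε0(X) + 1 − e(X), the mean of the potential outcome under control is identified as E[Y(0)] = E[w0(X)·(1−Z)·Y / (1−e(X))]. -/
open MeasureTheory

/-- Theorem 2 (inverse probability weighting identification, control arm). -/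
theorem ipw_identification_control
    {Ω : Type*} [F : MeasurableSpace Ω] (P : Measure Ω) [IsProbabilityMeasure P]
    (Z Y1 Y0 Y : Ω → ℝ)
    (hZmeas : Measurable Z) (hZ01 : ∀ ω, Z ω = 0 ∨ Z ω = 1)
    (hY1int : Integrable Y1 P) (hY0int : Integrable Y0 P)
    (hYdef : ∀ ω, Y ω = Z ω * Y1 ω + (1 - Z ω) * Y0 ω)
    (mX : MeasurableSpace Ω) (hmX : mX ≤ F)
    (eX : Ω → ℝ) (heXmeas : Measurable[mX] eX) (heX : eX =ᵐ[P] P[Z|mX])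
    (hov : ∀ᵐ ω ∂P, 0 < eX ω ∧ eX ω < 1)
    (mu1 mu0 : Ω → ℝ) (hmu1meas : Measurable[mX] mu1) (hmu0meas : Measurable[mX] mu0)
    (hmu1 : (fun ω => mu1 ω * eX ω) =ᵐ[P] P[fun ω => Z ω * Y ω|mX])
    (hmu0 : (fun ω => mu0 ω * (1 - eX ω)) =ᵐ[P] P[fun ω => (1 - Z ω) * Y ω|mX])
    (eps1 eps0 : Ω → ℝ)
    (heps1meas : Measurable[mX] eps1) (heps0meas : Measurable[mX] eps0)
    (heps1pos : ∀ᵐ ω ∂P, 0 < eps1 ω) (heps0pos : ∀ᵐ ω ∂P, 0 < eps0 ω)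
    (hsens1 : ∀ᵐ ω ∂P, (1 - eX ω) * (P[fun ω' => Z ω' * Y1 ω'|mX]) ω
        = eps1 ω * eX ω * (P[fun ω' => (1 - Z ω') * Y1 ω'|mX]) ω)
    (hsens0 : ∀ᵐ ω ∂P, (1 - eX ω) * (P[fun ω' => Z ω' * Y0 ω'|mX]) ω
        = eps0 ω * eX ω * (P[fun ω' => (1 - Z ω') * Y0 ω'|mX]) ω)
    (hint1 : Integrable
      (fun ω => (eX ω * eps0 ω + 1 - eX ω) * ((1 - Z ω) * Y ω) / (1 - eX ω)) P) :
    ∫ ω, Y0 ω ∂P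
      = ∫ ω, (eX ω * eps0 ω + 1 - eX ω) * ((1 - Z ω) * Y ω) / (1 - eX ω) ∂P := by
  haveI : SigmaFinite (P.trim hmX) := (isFiniteMeasure_trim hmX).toSigmaFinite
  set w : Ω → ℝ := fun ω => (eX ω * eps0 ω + 1 - eX ω) / (1 - eX ω) with hw
  set g : Ω → ℝ := fun ω' => (1 - Z ω') * Y0 ω' with hg
  have hgY : ∀ ω, (1 - Z ω) * Y ω = g ω := by
    intro ω; rcases hZ01 ω with h | h <;> simp [hg, hYdef, h]
  have hpoint : ∀ ω,
      (eX ω * eps0 ω + 1 - eX ω) * ((1 - Z ω) * Y ω) / (1 - eX ω) = w ω * g ω := by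
    intro ω; rw [hgY ω, hw]; ring
  have hZY0 : Integrable (fun ω' => Z ω' * Y0 ω') P := by
    refine Integrable.bdd_mul hY0int hZmeas.aestronglyMeasurable (c := 1) (Filter.Eventually.of_forall fun ω => ?_)
    rcases hZ01 ω with h | h <;> simp [h]
  have hgint : Integrable g P := by
    have : Integrable (fun ω => Y0 ω - Z ω * Y0 ω) P := hY0int.sub hZY0
    exact this.congr (Filter.Eventually.of_forall fun ω => by simp [hg]; ring)
  have hwg : Integrable (w * g) P :=
    hint1.congr (Filter.Eventually.of_forall hpoint)
  have hwmeas : StronglyMeasurable[mX] w :=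
    ((((heXmeas.mul heps0meas).add measurable_const).sub heXmeas).div
      (measurable_const.sub heXmeas)).stronglyMeasurable
  have hpull : P[w * g|mX] =ᵐ[P] w * P[g|mX] :=
    condExp_mul_of_stronglyMeasurable_left hwmeas hwg hgint
  have hsum : (fun ω => (P[fun ω' => Z ω' * Y0 ω'|mX]) ω + (P[g|mX]) ω) =ᵐ[P] P[Y0|mX] := by
    have h1 := (condExp_add (μ := P) (m := mX) hZY0 hgint).symm
    have h2 : P[fun ω => Z ω * Y0 ω + g ω|mX] =ᵐ[P] P[Y0|mX] := by
      refine condExp_congr_ae (Filter.Eventually.of_forall fun ω => ?_)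
      simp [hg]; ring
    exact h1.trans h2
  have hkey : w * P[g|mX] =ᵐ[P] P[Y0|mX] := by
    refine hsum.symm.mp ?_
    filter_upwards [hov, hsens0] with ω ⟨h0, h1⟩ hs heq
    have hne : (1 : ℝ) - eX ω ≠ 0 := by linarith
    rw [heq]
    show w ω * (P[g|mX]) ω = _
    rw [hw]
    field_simp
    linarith [hs]
  calc ∫ ω, Y0 ω ∂P = ∫ ω, (P[Y0|mX]) ω ∂P := (integral_condExp hmX).symm
    _ = ∫ ω, (w * P[g|mX]) ω ∂P := integral_congr_ae hkey.symm
    _ = ∫ ω, (P[w * g|mX]) ω ∂P := integral_congr_ae hpull.symm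
    _ = ∫ ω, (w * g) ω ∂P := integral_condExp hmX
    _ = ∫ ω, (eX ω * eps0 ω + 1 - eX ω) * ((1 - Z ω) * Y ω) / (1 - eX ω) ∂P :=
      integral_congr_ae (Filter.Eventually.of_forall fun ω => (hpoint ω).symm)
end

section
/- (Theorem 3, doubly robust representation: mean-zero property of the efficient influence function.) Under the sensitivity parametrization, with w1(X) = e(X) + (1−e(X))/ε1(X) and w0(X) = e(X)·ε0(X) + 1 − e(X), the average causal effect admits the representation τ = E[ w1(X)·Z·Y/e(X) − (Z−e(X))·μ1(X)/(e(X)·ε1(X)) ] − E[ w0(X)·(1−Z)·Y/(1−e(X)) − (e(X)−Z)·μ0(X)·ε0(X)/(1−e(X)) ]. -/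
open MeasureTheory Filter

lemma aux_side
    {Ω : Type*} [F : MeasurableSpace Ω] (P : Measure Ω) [IsProbabilityMeasure P]
    (W Y' Y : Ω → ℝ)
    (hW : Measurable W) (hW01 : ∀ ω, W ω = 0 ∨ W ω = 1)
    (hY'int : Integrable Y' P)
    (hWY : ∀ ω, W ω * Y ω = W ω * Y' ω)
    (mX : MeasurableSpace Ω) (hmX : mX ≤ F)
    (e : Ω → ℝ) (hemeas : Measurable[mX] e) (he : e =ᵐ[P] P[W|mX])
    (hov : ∀ᵐ ω ∂P, 0 < e ω ∧ e ω < 1)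
    (mu : Ω → ℝ) (hmumeas : Measurable[mX] mu)
    (hmu : (fun ω => mu ω * e ω) =ᵐ[P] P[fun ω => W ω * Y ω|mX])
    (eps : Ω → ℝ) (hepsmeas : Measurable[mX] eps) (hepspos : ∀ᵐ ω ∂P, 0 < eps ω)
    (hsens : ∀ᵐ ω ∂P, (1 - e ω) * (P[fun ω' => W ω' * Y' ω'|mX]) ω
        = eps ω * e ω * (P[fun ω' => (1 - W ω') * Y' ω'|mX]) ω)
    (hint : Integrable (fun ω => (e ω + (1 - e ω) / eps ω) * (W ω * Y ω) / e ω
        - (W ω - e ω) * mu ω / (e ω * eps ω)) P) :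
    ∫ ω, ((e ω + (1 - e ω) / eps ω) * (W ω * Y ω) / e ω
        - (W ω - e ω) * mu ω / (e ω * eps ω)) ∂P = ∫ ω, Y' ω ∂P := by
  haveI : SigmaFinite (P.trim hmX) := inferInstance
  set A : Ω → ℝ := fun ω => (e ω + (1 - e ω) / eps ω) * (W ω * Y ω) / e ω
      - (W ω - e ω) * mu ω / (e ω * eps ω) with hAdef
  set c : Ω → ℝ := fun ω => (1 - e ω) * mu ω / (e ω * eps ω + (1 - e ω)) with hcdef
  set g : Ω → ℝ := fun ω => (e ω + (1 - e ω) / eps ω) / e ω with hgdef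
  set hfun : Ω → ℝ := fun ω => W ω * (Y' ω - c ω) with hhdef
  set k : Ω → ℝ := fun ω => mu ω / eps ω with hkdef
  -- measurability of ingredients w.r.t. F
  have heF : Measurable[F] e := fun s hs => hmX _ (hemeas hs)
  have hmuF : Measurable[F] mu := fun s hs => hmX _ (hmumeas hs)
  have hepsF : Measurable[F] eps := fun s hs => hmX _ (hepsmeas hs)
  have hcF : Measurable[F] c := ((measurable_const.sub heF).mul hmuF).div
      ((heF.mul hepsF).add (measurable_const.sub heF))
  have hWb : ∀ ω, ‖W ω‖ ≤ 1 := fun ω => by rcases hW01 ω with h | h <;> simp [h]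
  have h1Wb : ∀ ω, ‖1 - W ω‖ ≤ 1 := fun ω => by rcases hW01 ω with h | h <;> simp [h]
  -- integrability facts
  have hWint : Integrable W P :=
    (integrable_const (1 : ℝ)).mono' hW.aestronglyMeasurable (Eventually.of_forall hWb)
  have h1Wint : Integrable (fun ω => 1 - W ω) P := (integrable_const 1).sub hWint
  have hWY'int : Integrable (fun ω => W ω * Y' ω) P :=
    hY'int.bdd_mul hW.aestronglyMeasurable (Eventually.of_forall hWb)
  have h1WY'int : Integrable (fun ω => (1 - W ω) * Y' ω) P :=
    hY'int.bdd_mul (measurable_const.sub hW).aestronglyMeasurable (Eventually.of_forall h1Wb)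
  have hWAint : Integrable (fun ω => W ω * A ω) P :=
    hint.bdd_mul hW.aestronglyMeasurable (Eventually.of_forall hWb)
  have h1WAint : Integrable (fun ω => (1 - W ω) * A ω) P :=
    hint.bdd_mul (measurable_const.sub hW).aestronglyMeasurable (Eventually.of_forall h1Wb)
  -- key pointwise identity : W * A = g * hfun a.e.
  have haeWA : (fun ω => W ω * A ω) =ᵐ[P] fun ω => g ω * hfun ω := by
    filter_upwards [hov, hepspos] with ω hoω hε
    obtain ⟨he0, he1⟩ := hoω
    rcases hW01 ω with h | h
    · simp [hAdef, hgdef, hhdef, h]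
    · have hy : Y ω = Y' ω := by have := hWY ω; rw [h] at this; simpa using this
      have h1 : e ω ≠ 0 := ne_of_gt he0
      have h2 : eps ω ≠ 0 := ne_of_gt hε
      have h3 : e ω * eps ω + (1 - e ω) ≠ 0 := by
        have := mul_pos he0 hε; intro hcon; nlinarith
      simp only [hAdef, hgdef, hhdef, hcdef, h, hy]
      field_simp
  -- hfun is integrable (dominated by ‖W * A‖)
  have hfun_aesm : @AEStronglyMeasurable Ω ℝ _ F F hfun P :=
    (hW.aestronglyMeasurable.mul (hY'int.1.sub (hcF.aestronglyMeasurable (μ := P))))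
  have hhint : Integrable hfun P := by
    refine Integrable.mono' hWAint.norm hfun_aesm ?_
    filter_upwards [hov, hepspos, haeWA] with ω hoω hε heq
    obtain ⟨he0, he1⟩ := hoω
    rcases hW01 ω with h | h
    · simp [hhdef, h]
    · have hg1 : (1 : ℝ) ≤ g ω := by
        have hd : 0 < (1 - e ω) / eps ω := div_pos (by linarith) hε
        rw [hgdef]
        rw [le_div_iff₀ he0]
        linarith
      calc ‖hfun ω‖ ≤ ‖g ω‖ * ‖hfun ω‖ :=
            le_mul_of_one_le_left (norm_nonneg _) (hg1.trans (le_abs_self _))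
        _ = ‖g ω * hfun ω‖ := (norm_mul _ _).symm
        _ = ‖W ω * A ω‖ := by rw [heq]
  -- c * W is integrable
  have hWc : Integrable (fun ω => c ω * W ω) P := by
    refine (hWY'int.sub hhint).congr (Eventually.of_forall fun ω => ?_)
    simp only [hhdef, hcdef, Pi.sub_apply]
    ring
  -- conditional expectation of W * Y'
  have e2 : P[(fun ω => W ω * Y' ω)|mX] =ᵐ[P] fun ω => mu ω * e ω := by
    have hfe : (fun ω => W ω * Y ω) = fun ω => W ω * Y' ω := funext hWY
    rw [← hfe]
    exact hmu.symm
  -- conditional expectation of c * W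
  have e3 : P[(fun ω => c ω * W ω)|mX] =ᵐ[P] fun ω => c ω * e ω := by
    have hcm : StronglyMeasurable[mX] c :=
      (((measurable_const.sub hemeas).mul hmumeas).div
        ((hemeas.mul hepsmeas).add (measurable_const.sub hemeas))).stronglyMeasurable
    have hpull := condExp_mul_of_stronglyMeasurable_left (m := mX) (μ := P) hcm
      (show Integrable (c * W) P from hWc) hWint
    refine hpull.trans ?_
    filter_upwards [he] with ω hω
    simp only [Pi.mul_apply]
    rw [← hω]
  -- conditional expectation of hfun
  have hPh : P[hfun|mX] =ᵐ[P] fun ω => mu ω * e ω - c ω * e ω := by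
    have hsplit : hfun = (fun ω => W ω * Y' ω) - fun ω => c ω * W ω :=
      funext fun ω => by simp only [hhdef, hcdef, Pi.sub_apply]; ring
    rw [hsplit]
    refine (condExp_sub hWY'int hWc mX).trans ?_
    filter_upwards [e2, e3] with ω h2 h3
    simp only [Pi.sub_apply, h2, h3]
  -- integral of W * A
  have hIWA : ∫ ω, W ω * A ω ∂P = ∫ ω, mu ω * e ω ∂P := by
    have hghint : Integrable (fun ω => g ω * hfun ω) P := hWAint.congr haeWA
    have hgm : StronglyMeasurable[mX] g :=
      ((hemeas.add ((measurable_const.sub hemeas).div hepsmeas)).div hemeas).stronglyMeasurable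
    have hpull := condExp_mul_of_stronglyMeasurable_left (m := mX) (μ := P) hgm
      (show Integrable (g * hfun) P from hghint) hhint
    have hkey : P[(fun ω => g ω * hfun ω)|mX] =ᵐ[P] fun ω => mu ω * e ω := by
      refine hpull.trans ?_
      filter_upwards [hPh, hov, hepspos] with ω h1 hoω hε
      obtain ⟨he0, he1⟩ := hoω
      simp only [Pi.mul_apply, h1, hgdef, hcdef]
      have h2 : e ω ≠ 0 := ne_of_gt he0
      have h3 : eps ω ≠ 0 := ne_of_gt hε
      have h4 : e ω * eps ω + (1 - e ω) ≠ 0 := by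
        have := mul_pos he0 hε; intro hcon; nlinarith
      field_simp
      ring
    calc ∫ ω, W ω * A ω ∂P = ∫ ω, g ω * hfun ω ∂P := integral_congr_ae haeWA
      _ = ∫ ω, (P[(fun ω => g ω * hfun ω)|mX]) ω ∂P := (integral_condExp hmX).symm
      _ = ∫ ω, mu ω * e ω ∂P := integral_congr_ae hkey
  -- conditional expectation of 1 - W
  have hP1W : P[(fun ω => 1 - W ω)|mX] =ᵐ[P] fun ω => 1 - e ω := by
    have hsplit : (fun ω : Ω => 1 - W ω) = (fun _ : Ω => (1 : ℝ)) - W := rfl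
    rw [hsplit]
    refine (condExp_sub (integrable_const 1) hWint mX).trans ?_
    filter_upwards [he] with ω hω
    simp only [Pi.sub_apply, condExp_const hmX]
    rw [← hω]
  -- integral of (1 - W) * A
  have hI1WA : ∫ ω, (1 - W ω) * A ω ∂P = ∫ ω, k ω * (1 - e ω) ∂P := by
    have hae1WA : (fun ω => (1 - W ω) * A ω) =ᵐ[P] fun ω => k ω * (1 - W ω) := by
      filter_upwards [hov, hepspos] with ω hoω hε
      obtain ⟨he0, he1⟩ := hoω
      rcases hW01 ω with h | h
      · have h1 : e ω ≠ 0 := ne_of_gt he0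
        have h2 : eps ω ≠ 0 := ne_of_gt hε
        simp only [hAdef, hkdef, h]
        field_simp
        ring
      · simp [hkdef, h]
    have hkWint : Integrable (fun ω => k ω * (1 - W ω)) P := h1WAint.congr hae1WA
    have hkm : StronglyMeasurable[mX] k := (hmumeas.div hepsmeas).stronglyMeasurable
    have hpull := condExp_mul_of_stronglyMeasurable_left (m := mX) (μ := P) hkm
      (show Integrable (k * fun ω => 1 - W ω) P from hkWint) h1Wint
    have hkey : P[(fun ω => k ω * (1 - W ω))|mX] =ᵐ[P] fun ω => k ω * (1 - e ω) := by
      refine hpull.trans ?_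
      filter_upwards [hP1W] with ω h1
      simp only [Pi.mul_apply, h1]
    calc ∫ ω, (1 - W ω) * A ω ∂P = ∫ ω, k ω * (1 - W ω) ∂P := integral_congr_ae hae1WA
      _ = ∫ ω, (P[(fun ω => k ω * (1 - W ω))|mX]) ω ∂P := (integral_condExp hmX).symm
      _ = ∫ ω, k ω * (1 - e ω) ∂P := integral_congr_ae hkey
  -- conditional expectation of (1 - W) * Y'
  have hq : P[(fun ω => (1 - W ω) * Y' ω)|mX] =ᵐ[P] fun ω => k ω * (1 - e ω) := by
    filter_upwards [hsens, e2, hov, hepspos] with ω hs h2 hoω hε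
    obtain ⟨he0, he1⟩ := hoω
    rw [h2] at hs
    have hne : eps ω * e ω ≠ 0 := ne_of_gt (mul_pos hε he0)
    apply mul_left_cancel₀ hne
    rw [← hs]
    simp only [hkdef]
    field_simp
  -- integral of Y'
  have hIY : ∫ ω, Y' ω ∂P = ∫ ω, mu ω * e ω ∂P + ∫ ω, k ω * (1 - e ω) ∂P := by
    have hsplit : ∫ ω, Y' ω ∂P = ∫ ω, (W ω * Y' ω + (1 - W ω) * Y' ω) ∂P := by
      refine integral_congr_ae (Eventually.of_forall fun ω => ?_)
      ring
    rw [hsplit, integral_add hWY'int h1WY'int]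
    congr 1
    · rw [← integral_condExp hmX (f := fun ω => W ω * Y' ω)]
      exact integral_congr_ae e2
    · rw [← integral_condExp hmX (f := fun ω => (1 - W ω) * Y' ω)]
      exact integral_congr_ae hq
  -- assemble
  have hIA : ∫ ω, A ω ∂P = ∫ ω, (W ω * A ω + (1 - W ω) * A ω) ∂P := by
    refine integral_congr_ae (Eventually.of_forall fun ω => ?_)
    ring
  rw [hIA, integral_add hWAint h1WAint, hIWA, hI1WA, hIY]

open Filter in
/-- Theorem 3 (doubly robust representation from the efficient influence function). -/
theorem doubly_robust_representation_ate
    {Ω : Type*} [F : MeasurableSpace Ω] (P : Measure Ω) [IsProbabilityMeasure P]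
    (Z Y1 Y0 Y : Ω → ℝ)
    (hZmeas : Measurable Z) (hZ01 : ∀ ω, Z ω = 0 ∨ Z ω = 1)
    (hY1int : Integrable Y1 P) (hY0int : Integrable Y0 P)
    (hYdef : ∀ ω, Y ω = Z ω * Y1 ω + (1 - Z ω) * Y0 ω)
    (mX : MeasurableSpace Ω) (hmX : mX ≤ F)
    (eX : Ω → ℝ) (heXmeas : Measurable[mX] eX) (heX : eX =ᵐ[P] P[Z|mX])
    (hov : ∀ᵐ ω ∂P, 0 < eX ω ∧ eX ω < 1)
    (mu1 mu0 : Ω → ℝ) (hmu1meas : Measurable[mX] mu1) (hmu0meas : Measurable[mX] mu0)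
    (hmu1 : (fun ω => mu1 ω * eX ω) =ᵐ[P] P[fun ω => Z ω * Y ω|mX])
    (hmu0 : (fun ω => mu0 ω * (1 - eX ω)) =ᵐ[P] P[fun ω => (1 - Z ω) * Y ω|mX])
    (eps1 eps0 : Ω → ℝ)
    (heps1meas : Measurable[mX] eps1) (heps0meas : Measurable[mX] eps0)
    (heps1pos : ∀ᵐ ω ∂P, 0 < eps1 ω) (heps0pos : ∀ᵐ ω ∂P, 0 < eps0 ω)
    (hsens1 : ∀ᵐ ω ∂P, (1 - eX ω) * (P[fun ω' => Z ω' * Y1 ω'|mX]) ω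
        = eps1 ω * eX ω * (P[fun ω' => (1 - Z ω') * Y1 ω'|mX]) ω)
    (hsens0 : ∀ᵐ ω ∂P, (1 - eX ω) * (P[fun ω' => Z ω' * Y0 ω'|mX]) ω
        = eps0 ω * eX ω * (P[fun ω' => (1 - Z ω') * Y0 ω'|mX]) ω)
    (hint1 : Integrable (fun ω =>
      (eX ω + (1 - eX ω) / eps1 ω) * (Z ω * Y ω) / eX ω
        - (Z ω - eX ω) * mu1 ω / (eX ω * eps1 ω)) P)
    (hint0 : Integrable (fun ω =>
      (eX ω * eps0 ω + 1 - eX ω) * ((1 - Z ω) * Y ω) / (1 - eX ω)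
        - (eX ω - Z ω) * (mu0 ω * eps0 ω) / (1 - eX ω)) P) :
    ∫ ω, Y1 ω ∂P - ∫ ω, Y0 ω ∂P
      = ∫ ω, ((eX ω + (1 - eX ω) / eps1 ω) * (Z ω * Y ω) / eX ω
            - (Z ω - eX ω) * mu1 ω / (eX ω * eps1 ω)) ∂P
        - ∫ ω, ((eX ω * eps0 ω + 1 - eX ω) * ((1 - Z ω) * Y ω) / (1 - eX ω)
            - (eX ω - Z ω) * (mu0 ω * eps0 ω) / (1 - eX ω)) ∂P := by
  -- treated side
  have hWY1 : ∀ ω, Z ω * Y ω = Z ω * Y1 ω := by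
    intro ω; rcases hZ01 ω with h | h <;> simp [hYdef ω, h]
  have hside1 := aux_side (F := F) P Z Y1 Y hZmeas hZ01 hY1int hWY1 mX hmX eX heXmeas heX hov
    mu1 hmu1meas hmu1 eps1 heps1meas heps1pos hsens1 hint1
  -- control side
  have hW01' : ∀ ω, (1 - Z ω) = 0 ∨ (1 - Z ω) = 1 := by
    intro ω; rcases hZ01 ω with h | h <;> simp [h]
  have hWY0 : ∀ ω, (1 - Z ω) * Y ω = (1 - Z ω) * Y0 ω := by
    intro ω; rcases hZ01 ω with h | h <;> simp [hYdef ω, h]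
  have hZint : Integrable Z P :=
    (integrable_const (1 : ℝ)).mono' hZmeas.aestronglyMeasurable
      (Eventually.of_forall fun ω => by rcases hZ01 ω with h | h <;> simp [h])
  have he' : (fun ω => 1 - eX ω) =ᵐ[P] P[(fun ω => 1 - Z ω)|mX] := by
    have hsplit : (fun ω : Ω => 1 - Z ω) = (fun _ : Ω => (1 : ℝ)) - Z := rfl
    rw [hsplit]
    refine EventuallyEq.trans ?_ (condExp_sub (integrable_const 1) hZint mX).symm
    filter_upwards [heX] with ω hω
    simp only [Pi.sub_apply, condExp_const hmX]
    rw [hω]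
  have hov' : ∀ᵐ ω ∂P, 0 < 1 - eX ω ∧ 1 - eX ω < 1 := by
    filter_upwards [hov] with ω hω
    obtain ⟨h1, h2⟩ := hω
    constructor <;> linarith
  have hepspos' : ∀ᵐ ω ∂P, 0 < (eps0 ω)⁻¹ := by
    filter_upwards [heps0pos] with ω h
    exact inv_pos.2 h
  have hfun_eq : (fun ω' => (1 - (1 - Z ω')) * Y0 ω') = fun ω' => Z ω' * Y0 ω' :=
    funext fun ω' => by ring
  have hsens0' : ∀ᵐ ω ∂P, (1 - (1 - eX ω)) * (P[fun ω' => (1 - Z ω') * Y0 ω'|mX]) ω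
      = (eps0 ω)⁻¹ * (1 - eX ω) * (P[fun ω' => (1 - (1 - Z ω')) * Y0 ω'|mX]) ω := by
    rw [hfun_eq]
    filter_upwards [hsens0, heps0pos] with ω hs hε
    have hne : eps0 ω ≠ 0 := ne_of_gt hε
    field_simp
    linarith [hs]
  have haeB : (fun ω => (eX ω * eps0 ω + 1 - eX ω) * ((1 - Z ω) * Y ω) / (1 - eX ω)
        - (eX ω - Z ω) * (mu0 ω * eps0 ω) / (1 - eX ω))
      =ᵐ[P] fun ω => ((1 - eX ω) + (1 - (1 - eX ω)) / (eps0 ω)⁻¹) * ((1 - Z ω) * Y ω) / (1 - eX ω)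
        - ((1 - Z ω) - (1 - eX ω)) * mu0 ω / ((1 - eX ω) * (eps0 ω)⁻¹) := by
    filter_upwards [hov, heps0pos] with ω hω hε
    obtain ⟨h1, h2⟩ := hω
    have h3 : (1 : ℝ) - eX ω ≠ 0 := ne_of_gt (by linarith)
    have h4 : eps0 ω ≠ 0 := ne_of_gt hε
    field_simp
    ring
  have hint0' : Integrable (fun ω =>
      ((1 - eX ω) + (1 - (1 - eX ω)) / (eps0 ω)⁻¹) * ((1 - Z ω) * Y ω) / (1 - eX ω)
        - ((1 - Z ω) - (1 - eX ω)) * mu0 ω / ((1 - eX ω) * (eps0 ω)⁻¹)) P :=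
    hint0.congr haeB
  have hside0 := aux_side (F := F) P (fun ω => 1 - Z ω) Y0 Y (measurable_const.sub hZmeas) hW01'
    hY0int hWY0 mX hmX (fun ω => 1 - eX ω) (measurable_const.sub heXmeas) he' hov'
    mu0 hmu0meas hmu0 (fun ω => (eps0 ω)⁻¹) heps0meas.inv hepspos' hsens0' hint0'
  have h0 : ∫ ω, ((eX ω * eps0 ω + 1 - eX ω) * ((1 - Z ω) * Y ω) / (1 - eX ω)
      - (eX ω - Z ω) * (mu0 ω * eps0 ω) / (1 - eX ω)) ∂P = ∫ ω, Y0 ω ∂P :=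
    (integral_congr_ae haeB).trans hside0
  rw [hside1, h0]
end

section
/- (Theorem 4, double robustness: correct propensity score.) For any 𝔛-measurable integrable functions μ1*(X), μ0*(X), if the working propensity score is correct (e*(X) = e(X) almost surely), then the population doubly robust functional equals τ: E[ {e(X) + (1−e(X))/ε1(X)}·Z·Y/e(X) − (Z−e(X))·μ1*(X)/(e(X)·ε1(X)) ] − E[ {e(X)·ε0(X) + 1−e(X)}·(1−Z)·Y/(1−e(X)) − (e(X)−Z)·μ0*(X)·ε0(X)/(1−e(X)) ] = τ. -/
open MeasureTheory

lemma key_dr_lemma {Ω : Type*} [F : MeasurableSpace Ω] (P : Measure Ω) [IsProbabilityMeasure P]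
    {mX : MeasurableSpace Ω} (hmX : mX ≤ F)
    (W YY μs d c p f : Ω → ℝ)
    (hWmeas : Measurable[F] W) (hW01 : ∀ ω, W ω = 0 ∨ W ω = 1)
    (hYY : Integrable YY P) (hμs : Integrable μs P)
    (hμsm : Measurable[mX] μs) (hdm : Measurable[mX] d) (hcm : Measurable[mX] c)
    (hp : p =ᵐ[P] P[W|mX])
    (hc : (fun ω => c ω * (1 - p ω)) =ᵐ[P] (fun ω => d ω * (μs ω * p ω)))
    (hsens : ∀ᵐ ω ∂P, d ω * (P[fun ω' => W ω' * YY ω'|mX]) ω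
        = (P[fun ω' => (1 - W ω') * YY ω'|mX]) ω)
    (hf : Integrable f P)
    (hfeq : ∀ᵐ ω ∂P, f ω = W ω * YY ω + d ω * (W ω * (YY ω - μs ω)) + c ω * (1 - W ω)) :
    ∫ ω, f ω ∂P = ∫ ω, YY ω ∂P := by
  have hW1 : ∀ ω, ‖W ω‖ ≤ 1 := by
    intro ω; rcases hW01 ω with h | h <;> simp [h]
  have h1mW1 : ∀ ω, ‖1 - W ω‖ ≤ 1 := by
    intro ω; rcases hW01 ω with h | h <;> simp [h]
  have hWSM : AEStronglyMeasurable[F] W P := hWmeas.stronglyMeasurable.aestronglyMeasurable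
  have h1mWSM : AEStronglyMeasurable[F] (fun ω => 1 - W ω) P :=
    (measurable_const.sub hWmeas).stronglyMeasurable.aestronglyMeasurable
  have hWint : Integrable W P := by
    simpa using (integrable_const (1 : ℝ)).bdd_mul hWSM (ae_of_all _ hW1)
  have h1mWint : Integrable (fun ω => 1 - W ω) P := (integrable_const 1).sub hWint
  have hWYY : Integrable (fun ω => W ω * YY ω) P := hYY.bdd_mul hWSM (ae_of_all _ hW1)
  have h1mWYY : Integrable (fun ω => (1 - W ω) * YY ω) P := hYY.bdd_mul h1mWSM (ae_of_all _ h1mW1)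
  have hμsW : Integrable (fun ω => μs ω * W ω) P := by
    simpa [mul_comm] using hμs.bdd_mul hWSM (ae_of_all _ hW1)
  have hcW : Integrable (fun ω => c ω * (1 - W ω)) P := by
    apply (hf.bdd_mul h1mWSM (ae_of_all _ h1mW1)).congr
    filter_upwards [hfeq] with ω hfω
    rcases hW01 ω with h | h <;> rw [hfω, h] <;> ring
  have hg2 : Integrable (fun ω => W ω * (YY ω - μs ω)) P := by
    apply (hWYY.sub hμsW).congr
    exact Filter.Eventually.of_forall fun ω => by simp only [Pi.sub_apply]; ring
  have hdg2 : Integrable (fun ω => d ω * (W ω * (YY ω - μs ω))) P := by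
    apply ((hf.sub hWYY).sub hcW).congr
    filter_upwards [hfeq] with ω hfω
    simp only [Pi.sub_apply]; rw [hfω]; ring
  -- conditional expectation facts
  have hmulc : P[fun ω => c ω * (1 - W ω)|mX]
      =ᵐ[P] fun ω => c ω * (P[fun ω' => 1 - W ω'|mX]) ω :=
    condExp_mul_of_stronglyMeasurable_left hcm.stronglyMeasurable hcW h1mWint
  have h1mWce : P[fun ω => 1 - W ω|mX] =ᵐ[P] fun ω => 1 - p ω := by
    have hsub : P[(fun _ : Ω => (1:ℝ)) - W|mX]
        =ᵐ[P] P[fun _ : Ω => (1:ℝ)|mX] - P[W|mX] := condExp_sub (integrable_const 1) hWint mX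
    have hconst : P[fun _ : Ω => (1:ℝ)|mX] = fun _ => (1:ℝ) := condExp_const hmX 1
    have : P[fun ω => 1 - W ω|mX] =ᵐ[P] P[(fun _ : Ω => (1:ℝ)) - W|mX] :=
      condExp_congr_ae (Filter.Eventually.of_forall fun ω => by simp [Pi.sub_apply])
    refine this.trans (hsub.trans ?_)
    filter_upwards [hp] with ω hω
    simp [Pi.sub_apply, hconst, ← hω]
  have hA : P[fun ω => c ω * (1 - W ω)|mX] =ᵐ[P] fun ω => d ω * (μs ω * p ω) := by
    refine hmulc.trans (.trans ?_ hc)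
    filter_upwards [h1mWce] with ω hω
    rw [hω]
  have hmulμs : P[fun ω => μs ω * W ω|mX] =ᵐ[P] fun ω => μs ω * p ω := by
    refine (condExp_mul_of_stronglyMeasurable_left hμsm.stronglyMeasurable hμsW hWint).trans ?_
    filter_upwards [hp] with ω hω
    simp [Pi.mul_apply, ← hω]
  have hB1 : P[fun ω => W ω * (YY ω - μs ω)|mX]
      =ᵐ[P] fun ω => (P[fun ω' => W ω' * YY ω'|mX]) ω - μs ω * p ω := by
    have h1 : P[fun ω => W ω * (YY ω - μs ω)|mX]
        =ᵐ[P] P[(fun ω => W ω * YY ω) - (fun ω => μs ω * W ω)|mX] :=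
      condExp_congr_ae (Filter.Eventually.of_forall fun ω => by simp [Pi.sub_apply]; ring)
    refine h1.trans ((condExp_sub hWYY hμsW mX).trans ?_)
    filter_upwards [hmulμs] with ω hω
    simp [Pi.sub_apply, hω]
  have hmuld : P[fun ω => d ω * (W ω * (YY ω - μs ω))|mX]
      =ᵐ[P] fun ω => d ω * (P[fun ω' => W ω' * (YY ω' - μs ω')|mX]) ω :=
    condExp_mul_of_stronglyMeasurable_left hdm.stronglyMeasurable hdg2 hg2
  -- integrability of the conditional expressions
  have hI1 : Integrable (fun ω => d ω * (P[fun ω' => W ω' * (YY ω' - μs ω')|mX]) ω) P :=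
    integrable_condExp.congr hmuld
  have hI2 : Integrable (fun ω => d ω * (μs ω * p ω)) P :=
    integrable_condExp.congr hA
  -- compute the three integrals
  have e3 : ∫ ω, c ω * (1 - W ω) ∂P = ∫ ω, d ω * (μs ω * p ω) ∂P := by
    rw [← integral_condExp hmX (f := fun ω => c ω * (1 - W ω))]
    exact integral_congr_ae hA
  have e2 : ∫ ω, d ω * (W ω * (YY ω - μs ω)) ∂P
      = ∫ ω, d ω * (P[fun ω' => W ω' * (YY ω' - μs ω')|mX]) ω ∂P := by
    rw [← integral_condExp hmX (f := fun ω => d ω * (W ω * (YY ω - μs ω)))]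
    exact integral_congr_ae hmuld
  have hsplit : ∫ ω, f ω ∂P = ∫ ω, W ω * YY ω ∂P
      + ∫ ω, d ω * (W ω * (YY ω - μs ω)) ∂P + ∫ ω, c ω * (1 - W ω) ∂P := by
    have h12 : Integrable (fun ω => W ω * YY ω + d ω * (W ω * (YY ω - μs ω))) P :=
      hWYY.add hdg2
    rw [integral_congr_ae hfeq, ← integral_add hWYY hdg2, ← integral_add h12 hcW]
  have hcomb : ∫ ω, d ω * (P[fun ω' => W ω' * (YY ω' - μs ω')|mX]) ω ∂P
      + ∫ ω, d ω * (μs ω * p ω) ∂P = ∫ ω, (1 - W ω) * YY ω ∂P := by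
    rw [← integral_add hI1 hI2, ← integral_condExp hmX (f := fun ω => (1 - W ω) * YY ω)]
    apply integral_congr_ae
    filter_upwards [hB1, hsens] with ω h1 h2
    rw [h1, ← h2]; ring
  rw [hsplit, e2, e3, add_assoc, hcomb, ← integral_add hWYY h1mWYY]
  apply integral_congr_ae
  exact Filter.Eventually.of_forall fun ω => by ring

/-- Theorem 4 (double robustness: correct propensity score). -/
theorem double_robustness_correct_pscore
    {Ω : Type*} [F : MeasurableSpace Ω] (P : Measure Ω) [IsProbabilityMeasure P]
    (Z Y1 Y0 Y : Ω → ℝ)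
    (hZmeas : Measurable Z) (hZ01 : ∀ ω, Z ω = 0 ∨ Z ω = 1)
    (hY1int : Integrable Y1 P) (hY0int : Integrable Y0 P)
    (hYdef : ∀ ω, Y ω = Z ω * Y1 ω + (1 - Z ω) * Y0 ω)
    (mX : MeasurableSpace Ω) (hmX : mX ≤ F)
    (eX : Ω → ℝ) (heXmeas : Measurable[mX] eX) (heX : eX =ᵐ[P] P[Z|mX])
    (hov : ∀ᵐ ω ∂P, 0 < eX ω ∧ eX ω < 1)
    (mu1 mu0 : Ω → ℝ) (hmu1meas : Measurable[mX] mu1) (hmu0meas : Measurable[mX] mu0)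
    (hmu1 : (fun ω => mu1 ω * eX ω) =ᵐ[P] P[fun ω => Z ω * Y ω|mX])
    (hmu0 : (fun ω => mu0 ω * (1 - eX ω)) =ᵐ[P] P[fun ω => (1 - Z ω) * Y ω|mX])
    (eps1 eps0 : Ω → ℝ)
    (heps1meas : Measurable[mX] eps1) (heps0meas : Measurable[mX] eps0)
    (heps1pos : ∀ᵐ ω ∂P, 0 < eps1 ω) (heps0pos : ∀ᵐ ω ∂P, 0 < eps0 ω)
    (hsens1 : ∀ᵐ ω ∂P, (1 - eX ω) * (P[fun ω' => Z ω' * Y1 ω'|mX]) ω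
        = eps1 ω * eX ω * (P[fun ω' => (1 - Z ω') * Y1 ω'|mX]) ω)
    (hsens0 : ∀ᵐ ω ∂P, (1 - eX ω) * (P[fun ω' => Z ω' * Y0 ω'|mX]) ω
        = eps0 ω * eX ω * (P[fun ω' => (1 - Z ω') * Y0 ω'|mX]) ω)
    (mu1s mu0s : Ω → ℝ)
    (hmu1smeas : Measurable[mX] mu1s) (hmu0smeas : Measurable[mX] mu0s)
    (hmu1sint : Integrable mu1s P) (hmu0sint : Integrable mu0s P)
    (hint1 : Integrable (fun ω =>
      (eX ω + (1 - eX ω) / eps1 ω) * (Z ω * Y ω) / eX ω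
        - (Z ω - eX ω) * mu1s ω / (eX ω * eps1 ω)) P)
    (hint0 : Integrable (fun ω =>
      (eX ω * eps0 ω + 1 - eX ω) * ((1 - Z ω) * Y ω) / (1 - eX ω)
        - (eX ω - Z ω) * (mu0s ω * eps0 ω) / (1 - eX ω)) P) :
    ∫ ω, ((eX ω + (1 - eX ω) / eps1 ω) * (Z ω * Y ω) / eX ω
        - (Z ω - eX ω) * mu1s ω / (eX ω * eps1 ω)) ∂P
      - ∫ ω, ((eX ω * eps0 ω + 1 - eX ω) * ((1 - Z ω) * Y ω) / (1 - eX ω)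
        - (eX ω - Z ω) * (mu0s ω * eps0 ω) / (1 - eX ω)) ∂P
      = ∫ ω, Y1 ω ∂P - ∫ ω, Y0 ω ∂P := by
  have hZY1 : ∀ ω, Z ω * Y ω = Z ω * Y1 ω := by
    intro ω; rcases hZ01 ω with h | h <;> simp [hYdef ω, h]
  have hZY0 : ∀ ω, (1 - Z ω) * Y ω = (1 - Z ω) * Y0 ω := by
    intro ω; rcases hZ01 ω with h | h <;> simp [hYdef ω, h]
  have case1 : ∫ ω, ((eX ω + (1 - eX ω) / eps1 ω) * (Z ω * Y ω) / eX ω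
      - (Z ω - eX ω) * mu1s ω / (eX ω * eps1 ω)) ∂P = ∫ ω, Y1 ω ∂P := by
    refine key_dr_lemma (F := F) P hmX Z Y1 mu1s
      (fun ω => (1 - eX ω) / (eX ω * eps1 ω)) (fun ω => mu1s ω / eps1 ω) eX _
      hZmeas hZ01 hY1int hmu1sint hmu1smeas
      ((measurable_const.sub heXmeas).div (heXmeas.mul heps1meas))
      (hmu1smeas.div heps1meas) heX ?_ ?_ hint1 ?_
    · filter_upwards [hov, heps1pos] with ω ⟨he0, he1⟩ hep
      field_simp
    · filter_upwards [hov, heps1pos, hsens1] with ω ⟨he0, he1⟩ hep hs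
      field_simp
      linear_combination hs
    · filter_upwards [hov, heps1pos] with ω ⟨he0, he1⟩ hep
      rw [hZY1 ω]
      field_simp
      ring
  have case0 : ∫ ω, ((eX ω * eps0 ω + 1 - eX ω) * ((1 - Z ω) * Y ω) / (1 - eX ω)
      - (eX ω - Z ω) * (mu0s ω * eps0 ω) / (1 - eX ω)) ∂P = ∫ ω, Y0 ω ∂P := by
    have hZint : Integrable Z P := by
      have hZ1 : ∀ ω, ‖Z ω‖ ≤ 1 := by
        intro ω; rcases hZ01 ω with h | h <;> simp [h]
      simpa using (integrable_const (1 : ℝ)).bdd_mul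
        hZmeas.stronglyMeasurable.aestronglyMeasurable (ae_of_all _ hZ1)
    have hp0 : (fun ω => 1 - eX ω) =ᵐ[P] P[fun ω => 1 - Z ω|mX] := by
      have hsub : P[(fun _ : Ω => (1:ℝ)) - Z|mX]
          =ᵐ[P] P[fun _ : Ω => (1:ℝ)|mX] - P[Z|mX] := condExp_sub (integrable_const 1) hZint mX
      have hconst : P[fun _ : Ω => (1:ℝ)|mX] = fun _ => (1:ℝ) := condExp_const hmX 1
      have hcg : P[fun ω => 1 - Z ω|mX] =ᵐ[P] P[(fun _ : Ω => (1:ℝ)) - Z|mX] :=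
        condExp_congr_ae (Filter.Eventually.of_forall fun ω => by simp [Pi.sub_apply])
      refine .symm (hcg.trans (hsub.trans ?_))
      filter_upwards [heX] with ω hω
      simp [Pi.sub_apply, hconst, ← hω]
    have hfun : (fun ω' => (1 - (1 - Z ω')) * Y0 ω') = fun ω' => Z ω' * Y0 ω' := by
      funext ω'; ring
    refine key_dr_lemma (F := F) P hmX (fun ω => 1 - Z ω) Y0 mu0s
      (fun ω => eX ω * eps0 ω / (1 - eX ω)) (fun ω => mu0s ω * eps0 ω) (fun ω => 1 - eX ω) _
      (measurable_const.sub hZmeas) (fun ω => by rcases hZ01 ω with h | h <;> simp [h])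
      hY0int hmu0sint hmu0smeas
      ((heXmeas.mul heps0meas).div (measurable_const.sub heXmeas))
      (hmu0smeas.mul heps0meas) hp0 ?_ ?_ hint0 ?_
    · filter_upwards [hov, heps0pos] with ω ⟨he0, he1⟩ hep
      have h1e : (1:ℝ) - eX ω ≠ 0 := by linarith
      field_simp
      ring
    · rw [hfun]
      filter_upwards [hov, heps0pos, hsens0] with ω ⟨he0, he1⟩ hep hs
      have h1e : (1:ℝ) - eX ω ≠ 0 := by linarith
      field_simp
      linear_combination -hs
    · filter_upwards [hov, heps0pos] with ω ⟨he0, he1⟩ hep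
      rw [hZY0 ω]
      have h1e : (1:ℝ) - eX ω ≠ 0 := by linarith
      field_simp
      ring
  rw [case1, case0]
end

section
/- (Theorem 4, double robustness: correct outcome model.) For any 𝔛-measurable function e*(X) with 0 < e*(X) < 1 almost surely, if the working outcome models are correct (μ1*(X) = μ1(X) and μ0*(X) = μ0(X) almost surely), then the population doubly robust functional equals τ: E[ {e*(X) + (1−e*(X))/ε1(X)}·Z·Y/e*(X) − (Z−e*(X))·μ1(X)/(e*(X)·ε1(X)) ] − E[ {e*(X)·ε0(X) + 1−e*(X)}·(1−Z)·Y/(1−e*(X)) − (e*(X)−Z)·μ0(X)·ε0(X)/(1−e*(X)) ] = τ. -/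
open MeasureTheory

section AuxDR

lemma aux_min_meas {Ω : Type*} [m : MeasurableSpace Ω] {g : Ω → ℝ}
    (hg : Measurable g) (c : ℝ) : Measurable fun ω => min |g ω| c :=
  (hg.abs).min measurable_const

lemma aux_meas_div {Ω : Type*} [m : MeasurableSpace Ω] {a b : Ω → ℝ}
    (ha : Measurable a) (hb : Measurable b) : Measurable fun ω => a ω / b ω := ha.div hb

lemma aux_meas_mul {Ω : Type*} [m : MeasurableSpace Ω] {a b : Ω → ℝ}
    (ha : Measurable a) (hb : Measurable b) : Measurable fun ω => a ω * b ω := ha.mul hb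

lemma aux_meas_one_sub {Ω : Type*} [m : MeasurableSpace Ω] {a : Ω → ℝ}
    (ha : Measurable a) : Measurable fun ω => 1 - a ω := measurable_const.sub ha



variable {Ω : Type*} {m : MeasurableSpace Ω} [F : MeasurableSpace Ω] {P : Measure Ω}
  [IsProbabilityMeasure P]

lemma aux_condexp_one_sub (hm : m ≤ F) {Z eX : Ω → ℝ} (hZ : Measurable Z)
    (hZ01 : ∀ ω, Z ω = 0 ∨ Z ω = 1) (heX : eX =ᵐ[P] P[Z|m]) :
    (fun ω => 1 - eX ω) =ᵐ[P] P[fun ω => 1 - Z ω|m] := by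
  have hZint : Integrable Z P := by
    refine Integrable.mono' (integrable_const (1 : ℝ)) hZ.aestronglyMeasurable
      (ae_of_all _ fun ω => ?_)
    rcases hZ01 ω with h | h <;> simp [h]
  have hsub := condExp_sub (μ := P) (m := m) (integrable_const (1 : ℝ)) hZint
  have hconst : P[(fun _ : Ω => (1 : ℝ))|m] = fun _ => 1 := condExp_const hm 1
  filter_upwards [hsub, heX] with ω h1 h2
  have h1' : (P[(fun ω => 1 - Z ω)|m]) ω
      = (P[(fun _ : Ω => (1 : ℝ))|m]) ω - (P[Z|m]) ω := h1
  rw [h1', hconst, ← h2]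




lemma aux_integral_mul_condexp (hm : m ≤ F) {f g : Ω → ℝ}
    (hf : Measurable[m] f) (hfg : Integrable (fun ω => f ω * g ω) P)
    (hg : Integrable g P) :
    ∫ ω, f ω * g ω ∂P = ∫ ω, f ω * (P[g|m]) ω ∂P := by
  have h : P[(fun ω => f ω * g ω)|m] =ᵐ[P] fun ω => f ω * (P[g|m]) ω :=
    condExp_mul_of_stronglyMeasurable_left hf.stronglyMeasurable hfg hg
  calc ∫ ω, f ω * g ω ∂P = ∫ ω, (P[(fun ω => f ω * g ω)|m]) ω ∂P :=
        (integral_condExp hm).symm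
    _ = ∫ ω, f ω * (P[g|m]) ω ∂P := integral_congr_ae h

lemma aux_integrable_mul (hm : m ≤ F) {ζ g : Ω → ℝ}
    (hζ : Measurable ζ) (hζ01 : ∀ ω, ζ ω = 0 ∨ ζ ω = 1)
    (hg : Measurable[m] g) (hint : Integrable (fun ω => g ω * (P[ζ|m]) ω) P) :
    Integrable (fun ω => ζ ω * g ω) P := by
  have hgF : Measurable g := hg.mono hm le_rfl
  have hζ0 : ∀ ω, 0 ≤ ζ ω := fun ω => by rcases hζ01 ω with h | h <;> simp [h]
  have hζ1 : ∀ ω, ζ ω ≤ 1 := fun ω => by rcases hζ01 ω with h | h <;> simp [h]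
  have hζint : Integrable ζ P := by
    refine Integrable.mono' (integrable_const (1 : ℝ)) hζ.aestronglyMeasurable
      (ae_of_all _ fun ω => ?_)
    rw [Real.norm_eq_abs, abs_of_nonneg (hζ0 ω)]; exact hζ1 ω
  have hcE0 : 0 ≤ᵐ[P] P[ζ|m] := condExp_nonneg (ae_of_all _ hζ0)
  set f : ℕ → Ω → ℝ := fun n ω => min |g ω| n * ζ ω with hfdef
  have hfn0 : ∀ n ω, 0 ≤ f n ω := fun n ω =>
    mul_nonneg (le_min (abs_nonneg _) (n.cast_nonneg)) (hζ0 ω)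
  have hfmeas : ∀ n, Measurable (f n) := fun n => (aux_min_meas hgF n).mul hζ
  have hfint : ∀ n, Integrable (f n) P := by
    intro n
    refine Integrable.mono' (integrable_const (n : ℝ)) (hfmeas n).aestronglyMeasurable
      (ae_of_all _ fun ω => ?_)
    rw [Real.norm_eq_abs, abs_of_nonneg (hfn0 n ω)]
    calc min |g ω| n * ζ ω ≤ min |g ω| n * 1 :=
          mul_le_mul_of_nonneg_left (hζ1 ω) (le_min (abs_nonneg _) (n.cast_nonneg))
      _ ≤ (n : ℝ) := by rw [mul_one]; exact min_le_right _ _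
  have hgcEint : Integrable (fun ω => |g ω * (P[ζ|m]) ω|) P := hint.abs
  have hIbound : ∀ n, ∫ ω, f n ω ∂P ≤ ∫ ω, |g ω * (P[ζ|m]) ω| ∂P := by
    intro n
    have hminmeas : Measurable[m] (fun ω => min |g ω| (n : ℝ)) :=
      aux_min_meas (m := m) hg n
    have hptwise : ∀ᵐ ω ∂P, min |g ω| (n : ℝ) * (P[ζ|m]) ω ≤ |g ω * (P[ζ|m]) ω| := by
      filter_upwards [hcE0] with ω h0
      rw [abs_mul]
      exact mul_le_mul (min_le_left _ _) (le_abs_self _) h0 (abs_nonneg _)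
    have h2 : Integrable (fun ω => min |g ω| (n : ℝ) * (P[ζ|m]) ω) P := by
      refine Integrable.mono' hgcEint
        (((aux_min_meas hgF n).mul
          ((stronglyMeasurable_condExp.mono hm).measurable)).aestronglyMeasurable) ?_
      filter_upwards [hptwise, hcE0] with ω hle h0
      rw [Real.norm_eq_abs,
        abs_of_nonneg (mul_nonneg (le_min (abs_nonneg _) (n.cast_nonneg)) h0)]
      exact hle
    calc ∫ ω, f n ω ∂P = ∫ ω, min |g ω| (n : ℝ) * (P[ζ|m]) ω ∂P :=
          aux_integral_mul_condexp hm hminmeas (hfint n) hζint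
      _ ≤ ∫ ω, |g ω * (P[ζ|m]) ω| ∂P := integral_mono_ae h2 hgcEint hptwise
  refine ⟨(hζ.mul hgF).aestronglyMeasurable, ?_⟩
  have key : ∫⁻ ω, ‖ζ ω * g ω‖₊ ∂P = ⨆ n, ∫⁻ ω, ENNReal.ofReal (f n ω) ∂P := by
    rw [← lintegral_iSup (fun n => (hfmeas n).ennreal_ofReal)]
    · refine lintegral_congr fun ω => ?_
      have hsup : (⨆ n, ENNReal.ofReal (f n ω)) = ENNReal.ofReal (|g ω| * ζ ω) := by
        refine le_antisymm (iSup_le fun n => ENNReal.ofReal_le_ofReal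
          (mul_le_mul_of_nonneg_right (min_le_left _ _) (hζ0 ω))) ?_
        refine le_iSup_of_le ⌈|g ω|⌉₊ (le_of_eq ?_)
        rw [hfdef]
        simp only
        rw [min_eq_left (Nat.le_ceil _)]
      rw [hsup, ← enorm_eq_nnnorm, Real.enorm_eq_ofReal_abs, abs_mul, abs_of_nonneg (hζ0 ω)]
      exact congrArg ENNReal.ofReal (mul_comm _ _)
    · intro i j hij
      refine fun ω => ENNReal.ofReal_le_ofReal ?_
      exact mul_le_mul_of_nonneg_right (min_le_min le_rfl (Nat.cast_le.mpr hij)) (hζ0 ω)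
  show (∫⁻ ω, (‖ζ ω * g ω‖₊ : ENNReal) ∂P) < ⊤
  rw [key]
  have hb : ∀ n, ∫⁻ ω, ENNReal.ofReal (f n ω) ∂P
      ≤ ENNReal.ofReal (∫ ω, |g ω * (P[ζ|m]) ω| ∂P) := by
    intro n
    rw [← ofReal_integral_eq_lintegral_ofReal (hfint n) (ae_of_all _ (hfn0 n))]
    exact ENNReal.ofReal_le_ofReal (hIbound n)
  exact (iSup_le hb).trans_lt ENNReal.ofReal_lt_top

lemma aux_core (hm : m ≤ F) {ζ V mu W c ebar T : Ω → ℝ}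
    (hζ : Measurable ζ) (hζ01 : ∀ ω, ζ ω = 0 ∨ ζ ω = 1)
    (hV : Integrable V P)
    (hmumeas : Measurable[m] mu) (hWmeas : Measurable[m] W) (hcmeas : Measurable[m] c)
    (hebar : ebar =ᵐ[P] P[ζ|m])
    (hmu : (fun ω => mu ω * ebar ω) =ᵐ[P] P[fun ω => ζ ω * V ω|m])
    (hc : (fun ω => c ω * (1 - ebar ω)) =ᵐ[P] P[fun ω => (1 - ζ ω) * V ω|m])
    (hT : Integrable T P)
    (hTrep : ∀ᵐ ω ∂P, T ω = ζ ω * V ω + W ω * (ζ ω * (V ω - mu ω)) + (1 - ζ ω) * c ω) :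
    ∫ ω, T ω ∂P = ∫ ω, V ω ∂P := by
  have hζ0 : ∀ ω, 0 ≤ ζ ω := fun ω => by rcases hζ01 ω with h | h <;> simp [h]
  have hζ1 : ∀ ω, ζ ω ≤ 1 := fun ω => by rcases hζ01 ω with h | h <;> simp [h]
  have hζint : Integrable ζ P := by
    refine Integrable.mono' (integrable_const (1 : ℝ)) hζ.aestronglyMeasurable
      (ae_of_all _ fun ω => ?_)
    rw [Real.norm_eq_abs, abs_of_nonneg (hζ0 ω)]; exact hζ1 ω
  have hζV : Integrable (fun ω => ζ ω * V ω) P := by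
    refine Integrable.mono' hV.abs (hζ.aestronglyMeasurable.mul hV.1)
      (ae_of_all _ fun ω => ?_)
    rw [Real.norm_eq_abs]
    rcases hζ01 ω with h | h <;> simp [h, abs_nonneg]
  have h1mζV : Integrable (fun ω => (1 - ζ ω) * V ω) P := by
    refine Integrable.mono' hV.abs
      (((aestronglyMeasurable_const.sub hζ.aestronglyMeasurable)).mul hV.1)
      (ae_of_all _ fun ω => ?_)
    rw [Real.norm_eq_abs]
    rcases hζ01 ω with h | h <;> simp [h, abs_nonneg]
  have hmuE : Integrable (fun ω => mu ω * (P[ζ|m]) ω) P := by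
    have h1 : Integrable (fun ω => mu ω * ebar ω) P := integrable_condExp.congr hmu.symm
    refine h1.congr ?_
    filter_upwards [hebar] with ω h
    rw [h]
  have hζmu : Integrable (fun ω => ζ ω * mu ω) P :=
    aux_integrable_mul hm hζ hζ01 hmumeas hmuE
  have hφ : Integrable (fun ω => ζ ω * (V ω - mu ω)) P :=
    (hζV.sub hζmu).congr (ae_of_all _ fun ω => by simp only [Pi.sub_apply]; ring)
  -- conditional expectation of φ is 0
  have hcEζmu : P[(fun ω => mu ω * ζ ω)|m] =ᵐ[P] fun ω => mu ω * (P[ζ|m]) ω :=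
    condExp_mul_of_stronglyMeasurable_left hmumeas.stronglyMeasurable
      (hζmu.congr (ae_of_all _ fun ω => mul_comm _ _)) hζint
  have hcEφ : P[(fun ω => ζ ω * (V ω - mu ω))|m] =ᵐ[P] fun _ => (0 : ℝ) := by
    have hsplit : (fun ω => ζ ω * (V ω - mu ω))
        = (fun ω => ζ ω * V ω) - fun ω => mu ω * ζ ω := by
      funext ω; simp only [Pi.sub_apply]; ring
    rw [hsplit]
    have hsub := condExp_sub (μ := P) (m := m) hζV
      (hζmu.congr (ae_of_all _ fun ω => mul_comm _ _))
    filter_upwards [hsub, hmu, hcEζmu, hebar] with ω h1 h2 h3 h4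
    have h2' : mu ω * ebar ω = (P[fun ω => ζ ω * V ω|m]) ω := h2
    rw [h1]
    simp only [Pi.sub_apply]
    rw [h3, ← h2', h4]
    ring
  -- integrability of the pieces
  have hWφ : Integrable (fun ω => W ω * (ζ ω * (V ω - mu ω))) P := by
    have h0 : Integrable (fun ω => ζ ω * (T ω - ζ ω * V ω)) P := by
      refine Integrable.mono' (hT.sub hζV).abs
        (hζ.aestronglyMeasurable.mul ((hT.sub hζV).1)) (ae_of_all _ fun ω => ?_)
      rw [Real.norm_eq_abs]
      rcases hζ01 ω with h | h <;> simp [h, abs_nonneg]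
    refine h0.congr ?_
    filter_upwards [hTrep] with ω h
    rw [h]
    rcases hζ01 ω with h0 | h0 <;> rw [h0] <;> ring
  have h1ζc : Integrable (fun ω => (1 - ζ ω) * c ω) P := by
    have h0 : Integrable (fun ω => (1 - ζ ω) * (T ω - ζ ω * V ω)) P := by
      refine Integrable.mono' (hT.sub hζV).abs
        ((aestronglyMeasurable_const.sub hζ.aestronglyMeasurable).mul ((hT.sub hζV).1))
        (ae_of_all _ fun ω => ?_)
      rw [Real.norm_eq_abs]
      rcases hζ01 ω with h | h <;> simp [h, abs_nonneg]
    refine h0.congr ?_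
    filter_upwards [hTrep] with ω h
    rw [h]
    rcases hζ01 ω with h0 | h0 <;> rw [h0] <;> ring
  -- split the integral
  have hsplitint : ∫ ω, T ω ∂P = ∫ ω, ζ ω * V ω ∂P
      + ∫ ω, W ω * (ζ ω * (V ω - mu ω)) ∂P + ∫ ω, (1 - ζ ω) * c ω ∂P := by
    have hAB : Integrable (fun ω => ζ ω * V ω + W ω * (ζ ω * (V ω - mu ω))) P :=
      hζV.add hWφ
    rw [integral_congr_ae hTrep, integral_add hAB h1ζc, integral_add hζV hWφ]
  -- middle piece is zero
  have hmid : ∫ ω, W ω * (ζ ω * (V ω - mu ω)) ∂P = 0 := by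
    rw [aux_integral_mul_condexp hm hWmeas hWφ hφ]
    have h0 : (fun ω => W ω * (P[(fun ω => ζ ω * (V ω - mu ω))|m]) ω) =ᵐ[P]
        fun _ => (0 : ℝ) := by
      filter_upwards [hcEφ] with ω h
      rw [h, mul_zero]
    rw [integral_congr_ae h0, integral_zero]
  -- last piece
  have hlast : ∫ ω, (1 - ζ ω) * c ω ∂P = ∫ ω, (1 - ζ ω) * V ω ∂P := by
    have h1ζint : Integrable (fun ω => 1 - ζ ω) P := (integrable_const (1 : ℝ)).sub hζint
    have hcE1ζ : P[(fun ω => 1 - ζ ω)|m] =ᵐ[P] fun ω => 1 - (P[ζ|m]) ω := by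
      have hsub := condExp_sub (μ := P) (m := m) (integrable_const (1 : ℝ)) hζint
      have hconst : P[(fun _ : Ω => (1 : ℝ))|m] = fun _ => (1 : ℝ) := condExp_const hm 1
      filter_upwards [hsub] with ω h
      have h' : (P[(fun _ : Ω => (1 : ℝ))|m]) ω = 1 := by rw [hconst]
      calc (P[(fun ω => 1 - ζ ω)|m]) ω
          = (P[(fun _ : Ω => (1 : ℝ))|m]) ω - (P[ζ|m]) ω := h
        _ = 1 - (P[ζ|m]) ω := by rw [h']
    calc ∫ ω, (1 - ζ ω) * c ω ∂P = ∫ ω, c ω * (1 - ζ ω) ∂P :=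
          integral_congr_ae (ae_of_all _ fun ω => mul_comm _ _)
      _ = ∫ ω, c ω * (P[(fun ω => 1 - ζ ω)|m]) ω ∂P :=
          aux_integral_mul_condexp hm hcmeas
            (h1ζc.congr (ae_of_all _ fun ω => mul_comm _ _)) h1ζint
      _ = ∫ ω, (P[(fun ω => (1 - ζ ω) * V ω)|m]) ω ∂P := by
          refine integral_congr_ae ?_
          filter_upwards [hcE1ζ, hebar, hc] with ω h1 h2 h3
          have h3' : c ω * (1 - ebar ω) = (P[(fun ω => (1 - ζ ω) * V ω)|m]) ω := h3
          rw [h1, ← h3', h2]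
      _ = ∫ ω, (1 - ζ ω) * V ω ∂P := integral_condExp hm
  rw [hsplitint, hmid, hlast, add_zero, ← integral_add hζV h1mζV]
  exact integral_congr_ae (ae_of_all _ fun ω => by ring)

lemma aux_part (hm : m ≤ F) {Z V mu eps es eX : Ω → ℝ}
    (hZmeas : Measurable Z) (hZ01 : ∀ ω, Z ω = 0 ∨ Z ω = 1)
    (hV : Integrable V P)
    (hmumeas : Measurable[m] mu) (hepsmeas : Measurable[m] eps) (hesmeas : Measurable[m] es)
    (heX : eX =ᵐ[P] P[Z|m])
    (hov : ∀ᵐ ω ∂P, 0 < eX ω ∧ eX ω < 1)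
    (hepspos : ∀ᵐ ω ∂P, 0 < eps ω)
    (hes01 : ∀ᵐ ω ∂P, 0 < es ω ∧ es ω < 1)
    (hmu : (fun ω => mu ω * eX ω) =ᵐ[P] P[fun ω => Z ω * V ω|m])
    (hsens : ∀ᵐ ω ∂P, (1 - eX ω) * (P[fun ω' => Z ω' * V ω'|m]) ω
        = eps ω * eX ω * (P[fun ω' => (1 - Z ω') * V ω'|m]) ω)
    (hT : Integrable (fun ω =>
      (es ω + (1 - es ω) / eps ω) * (Z ω * V ω) / es ω
        - (Z ω - es ω) * mu ω / (es ω * eps ω)) P) :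
    ∫ ω, ((es ω + (1 - es ω) / eps ω) * (Z ω * V ω) / es ω
        - (Z ω - es ω) * mu ω / (es ω * eps ω)) ∂P = ∫ ω, V ω ∂P := by
  have hWmeas : Measurable[m] fun ω => (1 - es ω) / (es ω * eps ω) :=
    aux_meas_div (m := m) (aux_meas_one_sub (m := m) hesmeas)
      (aux_meas_mul (m := m) hesmeas hepsmeas)
  have hcmeas : Measurable[m] fun ω => mu ω / eps ω :=
    aux_meas_div (m := m) hmumeas hepsmeas
  have hc : (fun ω => (mu ω / eps ω) * (1 - eX ω)) =ᵐ[P]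
      P[fun ω => (1 - Z ω) * V ω|m] := by
    filter_upwards [hsens, hmu, hov, hepspos] with ω h1 h2 h3 h4
    have h2' : mu ω * eX ω = (P[fun ω => Z ω * V ω|m]) ω := h2
    have hx : eX ω ≠ 0 := ne_of_gt h3.1
    have he : eps ω ≠ 0 := ne_of_gt h4
    rw [← h2'] at h1
    field_simp
    nlinarith [h1]
  have hTrep : ∀ᵐ ω ∂P, (es ω + (1 - es ω) / eps ω) * (Z ω * V ω) / es ω
      - (Z ω - es ω) * mu ω / (es ω * eps ω)
      = Z ω * V ω + ((1 - es ω) / (es ω * eps ω)) * (Z ω * (V ω - mu ω))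
        + (1 - Z ω) * (mu ω / eps ω) := by
    filter_upwards [hes01, hepspos] with ω h1 h2
    have ha : es ω ≠ 0 := ne_of_gt h1.1
    have hb : eps ω ≠ 0 := ne_of_gt h2
    rcases hZ01 ω with h | h <;> rw [h] <;> field_simp <;> ring
  exact aux_core hm hZmeas hZ01 hV hmumeas hWmeas hcmeas heX hmu hc hT hTrep

end AuxDR

/-- Theorem 4 (double robustness: correct outcome model). -/
theorem double_robustness_correct_outcome_model
    {Ω : Type*} [F : MeasurableSpace Ω] (P : Measure Ω) [IsProbabilityMeasure P]
    (Z Y1 Y0 Y : Ω → ℝ)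
    (hZmeas : Measurable Z) (hZ01 : ∀ ω, Z ω = 0 ∨ Z ω = 1)
    (hY1int : Integrable Y1 P) (hY0int : Integrable Y0 P)
    (hYdef : ∀ ω, Y ω = Z ω * Y1 ω + (1 - Z ω) * Y0 ω)
    (mX : MeasurableSpace Ω) (hmX : mX ≤ F)
    (eX : Ω → ℝ) (heXmeas : Measurable[mX] eX) (heX : eX =ᵐ[P] P[Z|mX])
    (hov : ∀ᵐ ω ∂P, 0 < eX ω ∧ eX ω < 1)
    (mu1 mu0 : Ω → ℝ) (hmu1meas : Measurable[mX] mu1) (hmu0meas : Measurable[mX] mu0)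
    (hmu1 : (fun ω => mu1 ω * eX ω) =ᵐ[P] P[fun ω => Z ω * Y ω|mX])
    (hmu0 : (fun ω => mu0 ω * (1 - eX ω)) =ᵐ[P] P[fun ω => (1 - Z ω) * Y ω|mX])
    (eps1 eps0 : Ω → ℝ)
    (heps1meas : Measurable[mX] eps1) (heps0meas : Measurable[mX] eps0)
    (heps1pos : ∀ᵐ ω ∂P, 0 < eps1 ω) (heps0pos : ∀ᵐ ω ∂P, 0 < eps0 ω)
    (hsens1 : ∀ᵐ ω ∂P, (1 - eX ω) * (P[fun ω' => Z ω' * Y1 ω'|mX]) ω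
        = eps1 ω * eX ω * (P[fun ω' => (1 - Z ω') * Y1 ω'|mX]) ω)
    (hsens0 : ∀ᵐ ω ∂P, (1 - eX ω) * (P[fun ω' => Z ω' * Y0 ω'|mX]) ω
        = eps0 ω * eX ω * (P[fun ω' => (1 - Z ω') * Y0 ω'|mX]) ω)
    (es : Ω → ℝ) (hesmeas : Measurable[mX] es)
    (hes01 : ∀ᵐ ω ∂P, 0 < es ω ∧ es ω < 1)
    (hint1 : Integrable (fun ω =>
      (es ω + (1 - es ω) / eps1 ω) * (Z ω * Y ω) / es ω
        - (Z ω - es ω) * mu1 ω / (es ω * eps1 ω)) P)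
    (hint0 : Integrable (fun ω =>
      (es ω * eps0 ω + 1 - es ω) * ((1 - Z ω) * Y ω) / (1 - es ω)
        - (es ω - Z ω) * (mu0 ω * eps0 ω) / (1 - es ω)) P) :
    ∫ ω, ((es ω + (1 - es ω) / eps1 ω) * (Z ω * Y ω) / es ω
        - (Z ω - es ω) * mu1 ω / (es ω * eps1 ω)) ∂P
      - ∫ ω, ((es ω * eps0 ω + 1 - es ω) * ((1 - Z ω) * Y ω) / (1 - es ω)
        - (es ω - Z ω) * (mu0 ω * eps0 ω) / (1 - es ω)) ∂P
      = ∫ ω, Y1 ω ∂P - ∫ ω, Y0 ω ∂P := by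
  -- replace Y by the potential outcomes
  have hZY1 : ∀ ω, Z ω * Y ω = Z ω * Y1 ω := fun ω => by
    rcases hZ01 ω with h | h <;> simp [hYdef ω, h]
  have hZY0 : ∀ ω, (1 - Z ω) * Y ω = (1 - Z ω) * Y0 ω := fun ω => by
    rcases hZ01 ω with h | h <;> simp [hYdef ω, h]
  simp only [hZY1] at hmu1 hint1 ⊢
  simp only [hZY0] at hmu0 hint0 ⊢
  -- part 1
  have h1 : ∫ ω, ((es ω + (1 - es ω) / eps1 ω) * (Z ω * Y1 ω) / es ω
      - (Z ω - es ω) * mu1 ω / (es ω * eps1 ω)) ∂P = ∫ ω, Y1 ω ∂P :=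
    aux_part (F := F) hmX hZmeas hZ01 hY1int hmu1meas heps1meas hesmeas heX hov heps1pos hes01
      hmu1 hsens1 hint1
  -- part 0 : apply aux_part with 1 - Z, 1 - eX, 1 - es, 1/eps0
  have hZ'meas : Measurable[F] (fun ω => 1 - Z ω) := aux_meas_one_sub (m := F) hZmeas
  have hZ'01 : ∀ ω, (1 - Z ω) = 0 ∨ (1 - Z ω) = 1 := fun ω => by
    rcases hZ01 ω with h | h <;> simp [h]
  have heX' : (fun ω => 1 - eX ω) =ᵐ[P] P[fun ω => 1 - Z ω|mX] :=
    aux_condexp_one_sub (F := F) hmX hZmeas hZ01 heX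
  have hov' : ∀ᵐ ω ∂P, 0 < 1 - eX ω ∧ 1 - eX ω < 1 := by
    filter_upwards [hov] with ω h
    constructor <;> linarith [h.1, h.2]
  have hes01' : ∀ᵐ ω ∂P, 0 < 1 - es ω ∧ 1 - es ω < 1 := by
    filter_upwards [hes01] with ω h
    constructor <;> linarith [h.1, h.2]
  have heps'meas : Measurable[mX] (fun ω => 1 / eps0 ω) :=
    aux_meas_div (m := mX) measurable_const heps0meas
  have hes'meas : Measurable[mX] (fun ω => 1 - es ω) := aux_meas_one_sub (m := mX) hesmeas
  have heX'meas : Measurable[mX] (fun ω => 1 - eX ω) := aux_meas_one_sub (m := mX) heXmeas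
  have heps'pos : ∀ᵐ ω ∂P, 0 < 1 / eps0 ω := by
    filter_upwards [heps0pos] with ω h
    positivity
  have hmu0' : (fun ω => mu0 ω * (1 - eX ω)) =ᵐ[P] P[fun ω => (1 - Z ω) * Y0 ω|mX] := hmu0
  have hlam : (fun ω' => (1 - (1 - Z ω')) * Y0 ω') = fun ω' => Z ω' * Y0 ω' := by
    funext ω'; ring
  have hsens0' : ∀ᵐ ω ∂P, (1 - (1 - eX ω)) * (P[fun ω' => (1 - Z ω') * Y0 ω'|mX]) ω
      = (1 / eps0 ω) * (1 - eX ω) * (P[fun ω' => (1 - (1 - Z ω')) * Y0 ω'|mX]) ω := by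
    rw [hlam]
    filter_upwards [hsens0, heps0pos, hov] with ω h1 h2 h3
    have he : eps0 ω ≠ 0 := ne_of_gt h2
    field_simp
    nlinarith [h1]
  have hpt0 : ∀ᵐ ω ∂P, (es ω * eps0 ω + 1 - es ω) * ((1 - Z ω) * Y0 ω) / (1 - es ω)
      - (es ω - Z ω) * (mu0 ω * eps0 ω) / (1 - es ω)
      = ((1 - es ω) + (1 - (1 - es ω)) / (1 / eps0 ω)) * ((1 - Z ω) * Y0 ω) / (1 - es ω)
      - ((1 - Z ω) - (1 - es ω)) * mu0 ω / ((1 - es ω) * (1 / eps0 ω)) := by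
    filter_upwards [hes01, heps0pos] with ω h1 h2
    have ha : (1 : ℝ) - es ω ≠ 0 := by have := h1.2; intro hq; linarith [h1.2]
    have hb : eps0 ω ≠ 0 := ne_of_gt h2
    field_simp
    ring
  have hint0' : Integrable (fun ω =>
      ((1 - es ω) + (1 - (1 - es ω)) / (1 / eps0 ω)) * ((1 - Z ω) * Y0 ω) / (1 - es ω)
      - ((1 - Z ω) - (1 - es ω)) * mu0 ω / ((1 - es ω) * (1 / eps0 ω))) P :=
    hint0.congr hpt0
  have h0' : ∫ ω, (((1 - es ω) + (1 - (1 - es ω)) / (1 / eps0 ω)) * ((1 - Z ω) * Y0 ω)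
        / (1 - es ω)
      - ((1 - Z ω) - (1 - es ω)) * mu0 ω / ((1 - es ω) * (1 / eps0 ω))) ∂P
      = ∫ ω, Y0 ω ∂P :=
    aux_part (F := F) hmX hZ'meas hZ'01 hY0int hmu0meas heps'meas hes'meas heX' hov' heps'pos
      hes01' hmu0' hsens0' hint0'
  have h0 : ∫ ω, ((es ω * eps0 ω + 1 - es ω) * ((1 - Z ω) * Y0 ω) / (1 - es ω)
      - (es ω - Z ω) * (mu0 ω * eps0 ω) / (1 - es ω)) ∂P = ∫ ω, Y0 ω ∂P := by
    rw [integral_congr_ae hpt0]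
    exact h0'
  rw [h1, h0]
end

section
/- (Proposition 1, worst-case bounds for non-negative outcomes.) Suppose Y(1) ≥ 0 and Y(0) ≥ 0 almost surely, and there are constants 0 < ε_{1,L} ≤ ε_{1,U} and 0 < ε_{0,L} ≤ ε_{0,U} with ε_{1,L} ≤ ε1(X) ≤ ε_{1,U} and ε_{0,L} ≤ ε0(X) ≤ ε_{0,U} almost surely. Then τ_L ≤ τ ≤ τ_U, where τ_L = E[Z·μ1(X) + (1−Z)·μ1(X)/ε_{1,U}] − E[Z·μ0(X)·ε_{0,U} + (1−Z)·μ0(X)], and τ_U = E[Z·μ1(X) + (1−Z)·μ1(X)/ε_{1,L}] − E[Z·μ0(X)·ε_{0,L} + (1−Z)·μ0(X)]. -/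
open MeasureTheory

/-- Proposition 1 (worst-case bounds for non-negative outcomes). -/
theorem worst_case_bounds_nonneg_outcomes
    {Ω : Type*} [F : MeasurableSpace Ω] (P : Measure Ω) [IsProbabilityMeasure P]
    (Z Y1 Y0 Y : Ω → ℝ)
    (hZmeas : Measurable Z) (hZ01 : ∀ ω, Z ω = 0 ∨ Z ω = 1)
    (hY1int : Integrable Y1 P) (hY0int : Integrable Y0 P)
    (hYdef : ∀ ω, Y ω = Z ω * Y1 ω + (1 - Z ω) * Y0 ω)
    (mX : MeasurableSpace Ω) (hmX : mX ≤ F)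
    (eX : Ω → ℝ) (heXmeas : Measurable[mX] eX) (heX : eX =ᵐ[P] P[Z|mX])
    (hov : ∀ᵐ ω ∂P, 0 < eX ω ∧ eX ω < 1)
    (mu1 mu0 : Ω → ℝ) (hmu1meas : Measurable[mX] mu1) (hmu0meas : Measurable[mX] mu0)
    (hmu1 : (fun ω => mu1 ω * eX ω) =ᵐ[P] P[fun ω => Z ω * Y ω|mX])
    (hmu0 : (fun ω => mu0 ω * (1 - eX ω)) =ᵐ[P] P[fun ω => (1 - Z ω) * Y ω|mX])
    (eps1 eps0 : Ω → ℝ)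
    (heps1meas : Measurable[mX] eps1) (heps0meas : Measurable[mX] eps0)
    (heps1pos : ∀ᵐ ω ∂P, 0 < eps1 ω) (heps0pos : ∀ᵐ ω ∂P, 0 < eps0 ω)
    (hsens1 : ∀ᵐ ω ∂P, (1 - eX ω) * (P[fun ω' => Z ω' * Y1 ω'|mX]) ω
        = eps1 ω * eX ω * (P[fun ω' => (1 - Z ω') * Y1 ω'|mX]) ω)
    (hsens0 : ∀ᵐ ω ∂P, (1 - eX ω) * (P[fun ω' => Z ω' * Y0 ω'|mX]) ω
        = eps0 ω * eX ω * (P[fun ω' => (1 - Z ω') * Y0 ω'|mX]) ω)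
    (hY1nn : ∀ᵐ ω ∂P, 0 ≤ Y1 ω) (hY0nn : ∀ᵐ ω ∂P, 0 ≤ Y0 ω)
    (e1L e1U e0L e0U : ℝ)
    (he1L : 0 < e1L) (he1LU : e1L ≤ e1U)
    (he0L : 0 < e0L) (he0LU : e0L ≤ e0U)
    (hb1 : ∀ᵐ ω ∂P, e1L ≤ eps1 ω ∧ eps1 ω ≤ e1U)
    (hb0 : ∀ᵐ ω ∂P, e0L ≤ eps0 ω ∧ eps0 ω ≤ e0U)
    (hintU1 : Integrable (fun ω => Z ω * mu1 ω + (1 - Z ω) * mu1 ω / e1U) P)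
    (hintU0 : Integrable (fun ω => Z ω * mu0 ω * e0U + (1 - Z ω) * mu0 ω) P)
    (hintL1 : Integrable (fun ω => Z ω * mu1 ω + (1 - Z ω) * mu1 ω / e1L) P)
    (hintL0 : Integrable (fun ω => Z ω * mu0 ω * e0L + (1 - Z ω) * mu0 ω) P) :
    (∫ ω, (Z ω * mu1 ω + (1 - Z ω) * mu1 ω / e1U) ∂P
        - ∫ ω, (Z ω * mu0 ω * e0U + (1 - Z ω) * mu0 ω) ∂P
      ≤ ∫ ω, Y1 ω ∂P - ∫ ω, Y0 ω ∂P)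
    ∧ (∫ ω, Y1 ω ∂P - ∫ ω, Y0 ω ∂P
      ≤ ∫ ω, (Z ω * mu1 ω + (1 - Z ω) * mu1 ω / e1L) ∂P
        - ∫ ω, (Z ω * mu0 ω * e0L + (1 - Z ω) * mu0 ω) ∂P) := by
  have he1U : (0:ℝ) < e1U := lt_of_lt_of_le he1L he1LU
  have he0U : (0:ℝ) < e0U := lt_of_lt_of_le he0L he0LU
  -- abbreviations for the conditional expectations
  set A1 := P[fun ω' => Z ω' * Y1 ω'|mX] with hA1def
  set B1 := P[fun ω' => (1 - Z ω') * Y1 ω'|mX] with hB1def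
  set A0 := P[fun ω' => Z ω' * Y0 ω'|mX] with hA0def
  set B0 := P[fun ω' => (1 - Z ω') * Y0 ω'|mX] with hB0def
  -- basic facts about Z
  have hZ01' : ∀ ω, (0:ℝ) ≤ Z ω ∧ Z ω ≤ 1 := fun ω => by
    rcases hZ01 ω with h | h <;> simp [h]
  have hZint : Integrable Z P := by
    refine Integrable.mono' (integrable_const (1:ℝ)) hZmeas.aestronglyMeasurable
      (Filter.Eventually.of_forall fun ω => ?_)
    rcases hZ01 ω with h | h <;> simp [h]
  -- multiplying an integrable function by Z (or 1-Z) keeps integrability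
  have hZb : ∀ f : Ω → ℝ, Integrable f P → Integrable (fun ω => f ω * Z ω) P := by
    intro f hf
    refine Integrable.mono' hf.norm (hf.1.mul hZmeas.aestronglyMeasurable)
      (Filter.Eventually.of_forall fun ω => ?_)
    rcases hZ01 ω with h | h <;> simp [h]
  have hZb' : ∀ f : Ω → ℝ, Integrable f P → Integrable (fun ω => Z ω * f ω) P := by
    intro f hf
    refine Integrable.mono' hf.norm (hZmeas.aestronglyMeasurable.mul hf.1)
      (Filter.Eventually.of_forall fun ω => ?_)
    rcases hZ01 ω with h | h <;> simp [h]
  have h1Zb' : ∀ f : Ω → ℝ, Integrable f P → Integrable (fun ω => (1 - Z ω) * f ω) P := by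
    intro f hf
    refine Integrable.mono' hf.norm
      ((aestronglyMeasurable_const.sub hZmeas.aestronglyMeasurable).mul hf.1)
      (Filter.Eventually.of_forall fun ω => ?_)
    rcases hZ01 ω with h | h <;> simp [h]
  -- multiplying an integrable function by eX (or 1-eX) keeps integrability
  have heXF : AEStronglyMeasurable (m := F) eX P := (heXmeas.mono hmX le_rfl).aestronglyMeasurable
  have heb : ∀ f : Ω → ℝ, Integrable f P → Integrable (fun ω => f ω * eX ω) P := by
    intro f hf
    refine Integrable.mono' hf.norm (hf.1.mul heXF)
      (hov.mono fun ω h => ?_)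
    have : |eX ω| ≤ 1 := abs_le.2 ⟨by linarith [h.1], le_of_lt h.2⟩
    calc ‖f ω * eX ω‖ = ‖f ω‖ * |eX ω| := by rw [norm_mul]; rfl
      _ ≤ ‖f ω‖ * 1 := by
          exact mul_le_mul_of_nonneg_left this (norm_nonneg _)
      _ = ‖f ω‖ := mul_one _
  have heb' : ∀ f : Ω → ℝ, Integrable f P → Integrable (fun ω => eX ω * f ω) P := by
    intro f hf
    exact ((heb f hf).congr (Filter.Eventually.of_forall fun ω => by ring))
  have h1eb : ∀ f : Ω → ℝ, Integrable f P → Integrable (fun ω => (1 - eX ω) * f ω) P := by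
    intro f hf
    have h1 : Integrable (fun ω => f ω - eX ω * f ω) P := hf.sub (heb' f hf)
    exact h1.congr (Filter.Eventually.of_forall fun ω => by ring)
  -- integrability of Z*Y1 etc.
  have hZY1int : Integrable (fun ω => Z ω * Y1 ω) P := hZb' Y1 hY1int
  have h1ZY1int : Integrable (fun ω => (1 - Z ω) * Y1 ω) P := h1Zb' Y1 hY1int
  have hZY0int : Integrable (fun ω => Z ω * Y0 ω) P := hZb' Y0 hY0int
  have h1ZY0int : Integrable (fun ω => (1 - Z ω) * Y0 ω) P := h1Zb' Y0 hY0int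
  -- identification of mu's with conditional expectations of potential outcomes
  have hZYeq : (fun ω => Z ω * Y ω) =ᵐ[P] (fun ω => Z ω * Y1 ω) :=
    Filter.Eventually.of_forall fun ω => by rcases hZ01 ω with h | h <;> simp [hYdef, h]
  have h1ZYeq : (fun ω => (1 - Z ω) * Y ω) =ᵐ[P] (fun ω => (1 - Z ω) * Y0 ω) :=
    Filter.Eventually.of_forall fun ω => by rcases hZ01 ω with h | h <;> simp [hYdef, h]
  have hA1 : (fun ω => mu1 ω * eX ω) =ᵐ[P] A1 := hmu1.trans (condExp_congr_ae hZYeq)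
  have hB0 : (fun ω => mu0 ω * (1 - eX ω)) =ᵐ[P] B0 := hmu0.trans (condExp_congr_ae h1ZYeq)
  -- nonnegativity of conditional expectations
  have hB1nn : 0 ≤ᵐ[P] B1 := condExp_nonneg (hY1nn.mono fun ω h => by
    have := (hZ01' ω).2
    exact mul_nonneg (by linarith) h)
  have hB0nn : 0 ≤ᵐ[P] B0 := condExp_nonneg (hY0nn.mono fun ω h => by
    have := (hZ01' ω).2
    exact mul_nonneg (by linarith) h)
  -- mu0 ≥ 0 a.e.
  have hmu0nn : ∀ᵐ ω ∂P, 0 ≤ mu0 ω := by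
    filter_upwards [hB0, hB0nn, hov] with ω h1 h2 h3
    by_contra hneg
    push_neg at hneg
    have : mu0 ω * (1 - eX ω) < 0 := mul_neg_of_neg_of_pos hneg (by linarith [h3.2])
    rw [h1] at this
    exact absurd h2 (not_le.2 this)
  -- sensitivity identities in terms of mu's
  have hB1eq : ∀ᵐ ω ∂P, (1 - eX ω) * mu1 ω = eps1 ω * B1 ω := by
    filter_upwards [hsens1, hA1, hov] with ω hs hA hov'
    have he : eX ω ≠ 0 := ne_of_gt hov'.1
    rw [← hA] at hs
    have h2 : ((1 - eX ω) * mu1 ω) * eX ω = (eps1 ω * B1 ω) * eX ω := by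
      linear_combination hs
    exact mul_right_cancel₀ he h2
  have hA0eq : ∀ᵐ ω ∂P, A0 ω = eps0 ω * eX ω * mu0 ω := by
    filter_upwards [hsens0, hB0, hov] with ω hs hB hov'
    have h1e : (1 - eX ω) ≠ 0 := ne_of_gt (by linarith [hov'.2])
    rw [← hB] at hs
    have h2 : (1 - eX ω) * A0 ω = (1 - eX ω) * (eps0 ω * eX ω * mu0 ω) := by
      linear_combination hs
    exact mul_left_cancel₀ h1e h2
  -- splitting E[Y1], E[Y0]
  have hintY1 : ∫ ω, Y1 ω ∂P = ∫ ω, (A1 ω + B1 ω) ∂P := by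
    rw [integral_add integrable_condExp integrable_condExp,
      integral_condExp hmX, integral_condExp hmX, ← integral_add hZY1int h1ZY1int]
    exact integral_congr_ae (Filter.Eventually.of_forall fun ω => by ring)
  have hintY0 : ∫ ω, Y0 ω ∂P = ∫ ω, (A0 ω + B0 ω) ∂P := by
    rw [integral_add integrable_condExp integrable_condExp,
      integral_condExp hmX, integral_condExp hmX, ← integral_add hZY0int h1ZY0int]
    exact integral_congr_ae (Filter.Eventually.of_forall fun ω => by ring)
  -- integrability of mu1 and mu0
  have hmu1int : Integrable mu1 P := by
    have h1 := hZb' _ hintU1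
    have h2 := h1Zb' _ hintU1
    have h3 := h1.add (h2.const_mul e1U)
    refine h3.congr (Filter.Eventually.of_forall fun ω => ?_)
    rcases hZ01 ω with h | h <;> simp only [Pi.add_apply, h] <;> field_simp <;> ring
  have hmu0int : Integrable mu0 P := by
    have h1 := hZb' _ hintU0
    have h2 := h1Zb' _ hintU0
    have h3 := (h1.const_mul (1/e0U)).add h2
    refine h3.congr (Filter.Eventually.of_forall fun ω => ?_)
    rcases hZ01 ω with h | h <;> simp only [Pi.add_apply, h] <;> field_simp <;> ring
  -- replacing Z by eX inside integrals of mX-measurable multiples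
  have hbase : ∀ f : Ω → ℝ, Measurable[mX] f → Integrable f P →
      ∫ ω, f ω * Z ω ∂P = ∫ ω, f ω * eX ω ∂P := by
    intro f hfm hfint
    have hfZ : Integrable (f * Z) P := hZb f hfint
    have h := condExp_mul_of_stronglyMeasurable_left (μ := P) (m := mX)
      hfm.stronglyMeasurable hfZ hZint
    calc ∫ ω, f ω * Z ω ∂P = ∫ ω, (P[f * Z|mX]) ω ∂P := (integral_condExp hmX).symm
      _ = ∫ ω, f ω * (P[Z|mX]) ω ∂P := by
          refine integral_congr_ae (h.mono fun ω hω => ?_)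
          simpa using hω
      _ = ∫ ω, f ω * eX ω ∂P := by
          refine integral_congr_ae (heX.mono fun ω hω => ?_)
          simp only [hω]
  have hgen : ∀ (g : Ω → ℝ) (a : ℝ), Measurable[mX] g → Integrable g P →
      ∫ ω, (g ω + g ω * a * Z ω) ∂P = ∫ ω, (g ω + g ω * a * eX ω) ∂P := by
    intro g a hgm hgint
    have hga : Integrable (fun ω => g ω * a) P := hgint.mul_const a
    rw [integral_add hgint (hZb _ hga), hbase _ (hgm.mul_const a) hga,
      ← integral_add hgint (heb _ hga)]
  -- the four statement integrals rewritten with eX in place of Z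
  have hstmt1 : ∀ c : ℝ, 0 < c →
      ∫ ω, (Z ω * mu1 ω + (1 - Z ω) * mu1 ω / c) ∂P
        = ∫ ω, (eX ω * mu1 ω + (1 - eX ω) * mu1 ω / c) ∂P := by
    intro c hc
    have hc' : c ≠ 0 := ne_of_gt hc
    have key := hgen (fun ω => mu1 ω * (1/c)) (c - 1)
      (hmu1meas.mul_const _) (hmu1int.mul_const _)
    calc ∫ ω, (Z ω * mu1 ω + (1 - Z ω) * mu1 ω / c) ∂P
        = ∫ ω, (mu1 ω * (1/c) + mu1 ω * (1/c) * (c - 1) * Z ω) ∂P := by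
          refine integral_congr_ae (Filter.Eventually.of_forall fun ω => ?_)
          field_simp
          ring
      _ = ∫ ω, (mu1 ω * (1/c) + mu1 ω * (1/c) * (c - 1) * eX ω) ∂P := key
      _ = ∫ ω, (eX ω * mu1 ω + (1 - eX ω) * mu1 ω / c) ∂P := by
          refine integral_congr_ae (Filter.Eventually.of_forall fun ω => ?_)
          field_simp
          ring
  have hstmt0 : ∀ c : ℝ,
      ∫ ω, (Z ω * mu0 ω * c + (1 - Z ω) * mu0 ω) ∂P
        = ∫ ω, (eX ω * mu0 ω * c + (1 - eX ω) * mu0 ω) ∂P := by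
    intro c
    have key := hgen mu0 (c - 1) hmu0meas hmu0int
    calc ∫ ω, (Z ω * mu0 ω * c + (1 - Z ω) * mu0 ω) ∂P
        = ∫ ω, (mu0 ω + mu0 ω * (c - 1) * Z ω) ∂P := by
          refine integral_congr_ae (Filter.Eventually.of_forall fun ω => ?_); ring
      _ = ∫ ω, (mu0 ω + mu0 ω * (c - 1) * eX ω) ∂P := key
      _ = ∫ ω, (eX ω * mu0 ω * c + (1 - eX ω) * mu0 ω) ∂P := by
          refine integral_congr_ae (Filter.Eventually.of_forall fun ω => ?_); ring
  -- integrability of the eX-versions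
  have hInt1 : ∀ c : ℝ, Integrable (fun ω => eX ω * mu1 ω + (1 - eX ω) * mu1 ω / c) P := by
    intro c
    exact (heb' mu1 hmu1int).add ((h1eb mu1 hmu1int).div_const c)
  have hInt0 : ∀ c : ℝ, Integrable (fun ω => eX ω * mu0 ω * c + (1 - eX ω) * mu0 ω) P := by
    intro c
    exact ((heb' mu0 hmu0int).mul_const c).add (h1eb mu0 hmu0int)
  -- comparison inequalities
  have hcmp1U : ∫ ω, (eX ω * mu1 ω + (1 - eX ω) * mu1 ω / e1U) ∂P ≤ ∫ ω, Y1 ω ∂P := by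
    rw [hintY1]
    refine integral_mono_ae (hInt1 e1U) (integrable_condExp.add integrable_condExp) ?_
    filter_upwards [hA1, hB1eq, hB1nn, hb1] with ω h1 h2 h3 h5
    have hA : eX ω * mu1 ω = A1 ω := by rw [← h1]; ring
    have hB : (1 - eX ω) * mu1 ω / e1U ≤ B1 ω := by
      rw [h2, div_le_iff₀ he1U]
      nlinarith [mul_nonneg (sub_nonneg.2 h5.2) h3]
    linarith
  have hcmp1L : ∫ ω, Y1 ω ∂P ≤ ∫ ω, (eX ω * mu1 ω + (1 - eX ω) * mu1 ω / e1L) ∂P := by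
    rw [hintY1]
    refine integral_mono_ae (integrable_condExp.add integrable_condExp) (hInt1 e1L) ?_
    filter_upwards [hA1, hB1eq, hB1nn, hb1] with ω h1 h2 h3 h5
    have hA : eX ω * mu1 ω = A1 ω := by rw [← h1]; ring
    have hB : B1 ω ≤ (1 - eX ω) * mu1 ω / e1L := by
      rw [h2, le_div_iff₀ he1L]
      nlinarith [mul_nonneg (sub_nonneg.2 h5.1) h3]
    linarith
  have hcmp0U : ∫ ω, Y0 ω ∂P ≤ ∫ ω, (eX ω * mu0 ω * e0U + (1 - eX ω) * mu0 ω) ∂P := by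
    rw [hintY0]
    refine integral_mono_ae (integrable_condExp.add integrable_condExp) (hInt0 e0U) ?_
    filter_upwards [hA0eq, hB0, hov, hb0, hmu0nn] with ω h1 h2 h4 h5 h6
    have hB : B0 ω = (1 - eX ω) * mu0 ω := by rw [← h2]; ring
    have hA : A0 ω ≤ eX ω * mu0 ω * e0U := by
      rw [h1]
      nlinarith [mul_nonneg (mul_nonneg (le_of_lt h4.1) h6) (sub_nonneg.2 h5.2)]
    linarith
  have hcmp0L : ∫ ω, (eX ω * mu0 ω * e0L + (1 - eX ω) * mu0 ω) ∂P ≤ ∫ ω, Y0 ω ∂P := by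
    rw [hintY0]
    refine integral_mono_ae (hInt0 e0L) (integrable_condExp.add integrable_condExp) ?_
    filter_upwards [hA0eq, hB0, hov, hb0, hmu0nn] with ω h1 h2 h4 h5 h6
    have hB : B0 ω = (1 - eX ω) * mu0 ω := by rw [← h2]; ring
    have hA : eX ω * mu0 ω * e0L ≤ A0 ω := by
      rw [h1]
      nlinarith [mul_nonneg (mul_nonneg (le_of_lt h4.1) h6) (sub_nonneg.2 h5.1)]
    linarith
  constructor
  · rw [hstmt1 e1U he1U, hstmt0 e0U]
    linarith
  · rw [hstmt1 e1L he1L, hstmt0 e0L]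
    linarith
end

section
/- (Proposition 1, equivalence of the three bound formulas with constant sensitivity parameters.) For any constants a > 0 and b > 0, the following three expressions are equal: (i) E[Z·μ1(X) + (1−Z)·μ1(X)/a] − E[Z·μ0(X)·b + (1−Z)·μ0(X)]; (ii) E[{e(X) + (1−e(X))/a}·Z·Y/e(X)] − E[{e(X)·b + 1−e(X)}·(1−Z)·Y/(1−e(X))]; (iii) E[{e(X) + (1−e(X))/a}·Z·Y/e(X) − (Z−e(X))·μ1(X)/(e(X)·a)] − E[{e(X)·b + 1−e(X)}·(1−Z)·Y/(1−e(X)) − (e(X)−Z)·μ0(X)·b/(1−e(X))]. -/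
open MeasureTheory

/-- Pull-out helper: for an `mX`-measurable `g`, `∫ g·h = ∫ g·E[h|mX]`. -/
lemma pullout_integral
    {Ω : Type*} [F : MeasurableSpace Ω] (P : Measure Ω) [IsProbabilityMeasure P]
    {mX : MeasurableSpace Ω} (hmX : mX ≤ F) {g h : Ω → ℝ}
    (hg : StronglyMeasurable[mX] g) (hh : Integrable h P)
    (hgh : Integrable (fun ω => g ω * h ω) P) :
    ∫ ω, g ω * h ω ∂P = ∫ ω, g ω * (P[h|mX]) ω ∂P := by
  rw [← integral_condExp hmX (f := fun ω => g ω * h ω)]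
  exact integral_congr_ae (condExp_mul_of_stronglyMeasurable_left hg hgh hh)

/-- Proposition 1 (equivalence of the three bound formulas with constant
sensitivity parameters). -/
theorem equivalence_three_bound_formulas
    {Ω : Type*} [F : MeasurableSpace Ω] (P : Measure Ω) [IsProbabilityMeasure P]
    (Z Y1 Y0 Y : Ω → ℝ)
    (hZmeas : Measurable Z) (hZ01 : ∀ ω, Z ω = 0 ∨ Z ω = 1)
    (hY1int : Integrable Y1 P) (hY0int : Integrable Y0 P)
    (hYdef : ∀ ω, Y ω = Z ω * Y1 ω + (1 - Z ω) * Y0 ω)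
    (mX : MeasurableSpace Ω) (hmX : mX ≤ F)
    (eX : Ω → ℝ) (heXmeas : Measurable[mX] eX) (heX : eX =ᵐ[P] P[Z|mX])
    (hov : ∀ᵐ ω ∂P, 0 < eX ω ∧ eX ω < 1)
    (mu1 mu0 : Ω → ℝ) (hmu1meas : Measurable[mX] mu1) (hmu0meas : Measurable[mX] mu0)
    (hmu1 : (fun ω => mu1 ω * eX ω) =ᵐ[P] P[fun ω => Z ω * Y ω|mX])
    (hmu0 : (fun ω => mu0 ω * (1 - eX ω)) =ᵐ[P] P[fun ω => (1 - Z ω) * Y ω|mX])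
    (a b : ℝ) (ha : 0 < a) (hb : 0 < b)
    (hint1 : Integrable (fun ω => Z ω * mu1 ω + (1 - Z ω) * mu1 ω / a) P)
    (hint2 : Integrable (fun ω => Z ω * mu0 ω * b + (1 - Z ω) * mu0 ω) P)
    (hint3 : Integrable (fun ω => (eX ω + (1 - eX ω) / a) * (Z ω * Y ω) / eX ω) P)
    (hint4 : Integrable
      (fun ω => (eX ω * b + 1 - eX ω) * ((1 - Z ω) * Y ω) / (1 - eX ω)) P)
    (hint5 : Integrable (fun ω => (eX ω + (1 - eX ω) / a) * (Z ω * Y ω) / eX ω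
        - (Z ω - eX ω) * mu1 ω / (eX ω * a)) P)
    (hint6 : Integrable (fun ω => (eX ω * b + 1 - eX ω) * ((1 - Z ω) * Y ω) / (1 - eX ω)
        - (eX ω - Z ω) * (mu0 ω * b) / (1 - eX ω)) P) :
    (∫ ω, (Z ω * mu1 ω + (1 - Z ω) * mu1 ω / a) ∂P
        - ∫ ω, (Z ω * mu0 ω * b + (1 - Z ω) * mu0 ω) ∂P
      = ∫ ω, (eX ω + (1 - eX ω) / a) * (Z ω * Y ω) / eX ω ∂P
        - ∫ ω, (eX ω * b + 1 - eX ω) * ((1 - Z ω) * Y ω) / (1 - eX ω) ∂P)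
    ∧ (∫ ω, (eX ω + (1 - eX ω) / a) * (Z ω * Y ω) / eX ω ∂P
        - ∫ ω, (eX ω * b + 1 - eX ω) * ((1 - Z ω) * Y ω) / (1 - eX ω) ∂P
      = ∫ ω, ((eX ω + (1 - eX ω) / a) * (Z ω * Y ω) / eX ω
            - (Z ω - eX ω) * mu1 ω / (eX ω * a)) ∂P
        - ∫ ω, ((eX ω * b + 1 - eX ω) * ((1 - Z ω) * Y ω) / (1 - eX ω)
            - (eX ω - Z ω) * (mu0 ω * b) / (1 - eX ω)) ∂P) := by
  -- basic measurability and integrability facts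
  have heXF : Measurable[F] eX := heXmeas.mono hmX le_rfl
  have hZbd : ∀ ω, ‖Z ω‖ ≤ 1 := fun ω => by
    rcases hZ01 ω with h | h <;> simp [h]
  have h1Zbd : ∀ ω, ‖1 - Z ω‖ ≤ 1 := fun ω => by
    rcases hZ01 ω with h | h <;> simp [h]
  have hZint : Integrable Z P :=
    (integrable_const (1 : ℝ)).mono' hZmeas.aestronglyMeasurable
      (Filter.Eventually.of_forall fun ω => by simpa using hZbd ω)
  have heint : Integrable eX P :=
    (integrable_const (1 : ℝ)).mono' heXF.aestronglyMeasurable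
      (hov.mono fun ω h => by
        rw [Real.norm_eq_abs, abs_of_pos h.1]; simpa using h.2.le)
  have hZY : (fun ω => Z ω * Y ω) = fun ω => Z ω * Y1 ω := by
    funext ω; rcases hZ01 ω with h | h <;> simp [hYdef ω, h]
  have h1ZY : (fun ω => (1 - Z ω) * Y ω) = fun ω => (1 - Z ω) * Y0 ω := by
    funext ω; rcases hZ01 ω with h | h <;> simp [hYdef ω, h]
  have hZYint : Integrable (fun ω => Z ω * Y ω) P := by
    rw [hZY]
    exact hY1int.bdd_mul hZmeas.aestronglyMeasurable (c := 1) (Filter.Eventually.of_forall hZbd)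
  have h1ZYint : Integrable (fun ω => (1 - Z ω) * Y ω) P := by
    rw [h1ZY]
    refine hY0int.bdd_mul (aestronglyMeasurable_const.sub hZmeas.aestronglyMeasurable) (c := 1) (Filter.Eventually.of_forall h1Zbd)
  -- conditional expectations of Z and 1 - Z
  have hcondZ : P[Z|mX] =ᵐ[P] eX := heX.symm
  have hcond1Z : P[fun ω => 1 - Z ω|mX] =ᵐ[P] fun ω => 1 - eX ω := by
    have h1 : P[fun ω => (1 : ℝ) - Z ω|mX]
        =ᵐ[P] P[fun _ => (1 : ℝ)|mX] - P[Z|mX] :=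
      condExp_sub (integrable_const 1) hZint mX
    have h2 : P[fun _ => (1 : ℝ)|mX] = fun _ => (1 : ℝ) := condExp_const hmX 1
    filter_upwards [h1, hcondZ] with ω hω hω'
    simp only [h2, Pi.sub_apply] at hω
    simp [hω, hω']
  ------------------------------------------------------------------
  -- Part 1, treated side
  ------------------------------------------------------------------
  have hae0 : ∀ᵐ ω ∂P, eX ω ≠ 0 := hov.mono fun ω h => ne_of_gt h.1
  have hae1 : ∀ᵐ ω ∂P, (1 : ℝ) - eX ω ≠ 0 := hov.mono fun ω h => by
    have := h.2; intro hc; nlinarith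
  set g1 : Ω → ℝ := fun ω => (eX ω + (1 - eX ω) / a) / eX ω with hg1def
  have hg1sm : StronglyMeasurable[mX] g1 :=
    ((heXmeas.add ((measurable_const.sub heXmeas).div_const a)).div heXmeas).stronglyMeasurable
  have hg1ZYint : Integrable (fun ω => g1 ω * (Z ω * Y ω)) P :=
    hint3.congr (Filter.Eventually.of_forall fun ω => by simp only [hg1def]; ring)
  -- μ1·e is integrable
  have hmu1e_int : Integrable (fun ω => mu1 ω * eX ω) P := integrable_condExp.congr hmu1.symm
  -- pull out: B1 = ∫ g1 · E[ZY|X]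
  have hB1 : ∫ ω, (eX ω + (1 - eX ω) / a) * (Z ω * Y ω) / eX ω ∂P
      = ∫ ω, g1 ω * (P[fun ω => Z ω * Y ω|mX]) ω ∂P := by
    rw [← pullout_integral (F := F) P hmX hg1sm hZYint hg1ZYint]
    exact integral_congr_ae (Filter.Eventually.of_forall fun ω => by simp only [hg1def]; ring)
  -- a.e. identity: g1 · (μ1 e) = μ1 e + μ1 (1-e)/a
  have hkey1 : (fun ω => g1 ω * (mu1 ω * eX ω))
      =ᵐ[P] fun ω => mu1 ω * eX ω + mu1 ω * (1 - eX ω) / a := by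
    filter_upwards [hae0] with ω h0
    simp only [hg1def]
    field_simp
  -- integrability of μ1 (1-e)/a
  have hf2_int : Integrable (fun ω => mu1 ω * (1 - eX ω) / a) P := by
    have hpull : P[fun ω => g1 ω * (Z ω * Y ω)|mX] =ᵐ[P] fun ω => g1 ω * (P[fun ω => Z ω * Y ω|mX]) ω :=
      condExp_mul_of_stronglyMeasurable_left hg1sm hg1ZYint hZYint
    have : (fun ω => mu1 ω * (1 - eX ω) / a)
        =ᵐ[P] fun ω => (P[fun ω => g1 ω * (Z ω * Y ω)|mX]) ω - (P[fun ω => Z ω * Y ω|mX]) ω := by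
      filter_upwards [hpull, hmu1, hkey1] with ω h1 h2 h3
      rw [h1, ← h2, h3]; ring
    exact (integrable_condExp.sub integrable_condExp).congr this.symm
  have hB1' : ∫ ω, (eX ω + (1 - eX ω) / a) * (Z ω * Y ω) / eX ω ∂P
      = (∫ ω, mu1 ω * eX ω ∂P) + ∫ ω, mu1 ω * (1 - eX ω) / a ∂P := by
    rw [hB1, ← integral_add hmu1e_int hf2_int]
    refine integral_congr_ae ?_
    filter_upwards [hmu1, hkey1] with ω h1 h2
    rw [← h1, h2]
  -- pieces of the LHS
  have hp1 : Integrable (fun ω => mu1 ω * Z ω) P := by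
    refine (hint1.bdd_mul hZmeas.aestronglyMeasurable (c := 1) (Filter.Eventually.of_forall hZbd)).congr
      (Filter.Eventually.of_forall fun ω => ?_)
    rcases hZ01 ω with h | h <;> simp [h] <;> ring
  have hp2 : Integrable (fun ω => mu1 ω / a * (1 - Z ω)) P := by
    refine (hint1.bdd_mul (aestronglyMeasurable_const.sub hZmeas.aestronglyMeasurable)
      (c := 1) (Filter.Eventually.of_forall h1Zbd)).congr
      (Filter.Eventually.of_forall fun ω => ?_)
    rcases hZ01 ω with h | h <;> simp [h] <;> ring
  have hA1 : ∫ ω, (Z ω * mu1 ω + (1 - Z ω) * mu1 ω / a) ∂P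
      = (∫ ω, mu1 ω * eX ω ∂P) + ∫ ω, mu1 ω * (1 - eX ω) / a ∂P := by
    have e1 : ∫ ω, (Z ω * mu1 ω + (1 - Z ω) * mu1 ω / a) ∂P
        = (∫ ω, mu1 ω * Z ω ∂P) + ∫ ω, mu1 ω / a * (1 - Z ω) ∂P := by
      rw [← integral_add hp1 hp2]
      exact integral_congr_ae (Filter.Eventually.of_forall fun ω => by ring)
    have e2 : ∫ ω, mu1 ω * Z ω ∂P = ∫ ω, mu1 ω * eX ω ∂P := by
      rw [pullout_integral (F := F) P hmX (g := mu1) (h := Z) hmu1meas.stronglyMeasurable hZint hp1]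
      exact integral_congr_ae (hcondZ.mono fun ω h => by simp only [h])
    have e3 : ∫ ω, mu1 ω / a * (1 - Z ω) ∂P = ∫ ω, mu1 ω * (1 - eX ω) / a ∂P := by
      rw [pullout_integral (F := F) P hmX (hmu1meas.div_const a).stronglyMeasurable
        (h := fun ω => 1 - Z ω) ((integrable_const 1).sub hZint) hp2]
      refine integral_congr_ae (hcond1Z.mono fun ω h => ?_)
      simp only [h]; ring
    rw [e1, e2, e3]
  ------------------------------------------------------------------
  -- Part 1, control side
  ------------------------------------------------------------------
  set g2 : Ω → ℝ := fun ω => (eX ω * b + 1 - eX ω) / (1 - eX ω) with hg2def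
  have hg2sm : StronglyMeasurable[mX] g2 :=
    (((heXmeas.mul_const b).add_const 1 |>.sub heXmeas).div
      (measurable_const.sub heXmeas)).stronglyMeasurable
  have hg2ZYint : Integrable (fun ω => g2 ω * ((1 - Z ω) * Y ω)) P :=
    hint4.congr (Filter.Eventually.of_forall fun ω => by simp only [hg2def]; ring)
  have hmu0e_int : Integrable (fun ω => mu0 ω * (1 - eX ω)) P := integrable_condExp.congr hmu0.symm
  have hB2 : ∫ ω, (eX ω * b + 1 - eX ω) * ((1 - Z ω) * Y ω) / (1 - eX ω) ∂P
      = ∫ ω, g2 ω * (P[fun ω => (1 - Z ω) * Y ω|mX]) ω ∂P := by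
    rw [← pullout_integral (F := F) P hmX hg2sm h1ZYint hg2ZYint]
    exact integral_congr_ae (Filter.Eventually.of_forall fun ω => by simp only [hg2def]; ring)
  have hkey2 : (fun ω => g2 ω * (mu0 ω * (1 - eX ω)))
      =ᵐ[P] fun ω => mu0 ω * (1 - eX ω) + mu0 ω * eX ω * b := by
    filter_upwards [hae1] with ω h0
    simp only [hg2def]
    field_simp
    ring
  have hf4_int : Integrable (fun ω => mu0 ω * eX ω * b) P := by
    have hpull : P[fun ω => g2 ω * ((1 - Z ω) * Y ω)|mX]
        =ᵐ[P] fun ω => g2 ω * (P[fun ω => (1 - Z ω) * Y ω|mX]) ω :=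
      condExp_mul_of_stronglyMeasurable_left hg2sm hg2ZYint h1ZYint
    have : (fun ω => mu0 ω * eX ω * b)
        =ᵐ[P] fun ω => (P[fun ω => g2 ω * ((1 - Z ω) * Y ω)|mX]) ω
          - (P[fun ω => (1 - Z ω) * Y ω|mX]) ω := by
      filter_upwards [hpull, hmu0, hkey2] with ω h1 h2 h3
      rw [h1, ← h2, h3]; ring
    exact (integrable_condExp.sub integrable_condExp).congr this.symm
  have hB2' : ∫ ω, (eX ω * b + 1 - eX ω) * ((1 - Z ω) * Y ω) / (1 - eX ω) ∂P
      = (∫ ω, mu0 ω * eX ω * b ∂P) + ∫ ω, mu0 ω * (1 - eX ω) ∂P := by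
    rw [hB2, ← integral_add hf4_int hmu0e_int]
    refine integral_congr_ae ?_
    filter_upwards [hmu0, hkey2] with ω h1 h2
    rw [← h1, h2]; ring
  have hq1 : Integrable (fun ω => mu0 ω * b * Z ω) P := by
    refine (hint2.bdd_mul hZmeas.aestronglyMeasurable (c := 1) (Filter.Eventually.of_forall hZbd)).congr
      (Filter.Eventually.of_forall fun ω => ?_)
    rcases hZ01 ω with h | h <;> simp [h] <;> ring
  have hq2 : Integrable (fun ω => mu0 ω * (1 - Z ω)) P := by
    refine (hint2.bdd_mul (aestronglyMeasurable_const.sub hZmeas.aestronglyMeasurable)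
      (c := 1) (Filter.Eventually.of_forall h1Zbd)).congr
      (Filter.Eventually.of_forall fun ω => ?_)
    rcases hZ01 ω with h | h <;> simp [h] <;> ring
  have hA2 : ∫ ω, (Z ω * mu0 ω * b + (1 - Z ω) * mu0 ω) ∂P
      = (∫ ω, mu0 ω * eX ω * b ∂P) + ∫ ω, mu0 ω * (1 - eX ω) ∂P := by
    have e1 : ∫ ω, (Z ω * mu0 ω * b + (1 - Z ω) * mu0 ω) ∂P
        = (∫ ω, mu0 ω * b * Z ω ∂P) + ∫ ω, mu0 ω * (1 - Z ω) ∂P := by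
      rw [← integral_add hq1 hq2]
      exact integral_congr_ae (Filter.Eventually.of_forall fun ω => by ring)
    have e2 : ∫ ω, mu0 ω * b * Z ω ∂P = ∫ ω, mu0 ω * eX ω * b ∂P := by
      rw [pullout_integral (F := F) P hmX (h := Z) (hmu0meas.mul_const b).stronglyMeasurable hZint hq1]
      refine integral_congr_ae (hcondZ.mono fun ω h => ?_)
      simp only [h]; ring
    have e3 : ∫ ω, mu0 ω * (1 - Z ω) ∂P = ∫ ω, mu0 ω * (1 - eX ω) ∂P := by
      rw [pullout_integral (F := F) P hmX hmu0meas.stronglyMeasurable (h := fun ω => 1 - Z ω) ((integrable_const 1).sub hZint) hq2]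
      exact integral_congr_ae (hcond1Z.mono fun ω h => by simp only [h])
    rw [e1, e2, e3]
  ------------------------------------------------------------------
  -- Part 2: the correction terms have zero mean
  ------------------------------------------------------------------
  have hZeint : Integrable (fun ω => Z ω - eX ω) P := hZint.sub heint
  have hcondZe : P[fun ω => Z ω - eX ω|mX] =ᵐ[P] fun _ => (0 : ℝ) := by
    have h1 : P[fun ω => Z ω - eX ω|mX] =ᵐ[P] P[Z|mX] - P[eX|mX] := condExp_sub hZint heint mX
    have h2 : P[eX|mX] = eX := condExp_of_stronglyMeasurable hmX heXmeas.stronglyMeasurable heint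
    filter_upwards [h1, hcondZ] with ω hω hω'
    simp only [Pi.sub_apply, h2] at hω
    simp [hω, hω']
  have hcorr1_int : Integrable (fun ω => (Z ω - eX ω) * mu1 ω / (eX ω * a)) P := by
    refine (hint3.sub hint5).congr (Filter.Eventually.of_forall fun ω => ?_)
    simp only [Pi.sub_apply]; ring
  have hcorr1 : ∫ ω, (Z ω - eX ω) * mu1 ω / (eX ω * a) ∂P = 0 := by
    have hgsm : StronglyMeasurable[mX] (fun ω => mu1 ω / (eX ω * a)) :=
      (hmu1meas.div (heXmeas.mul_const a)).stronglyMeasurable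
    have hgint : Integrable (fun ω => mu1 ω / (eX ω * a) * (Z ω - eX ω)) P :=
      hcorr1_int.congr (Filter.Eventually.of_forall fun ω => by ring)
    have : ∫ ω, (Z ω - eX ω) * mu1 ω / (eX ω * a) ∂P
        = ∫ ω, mu1 ω / (eX ω * a) * (Z ω - eX ω) ∂P :=
      integral_congr_ae (Filter.Eventually.of_forall fun ω => by ring)
    rw [this, pullout_integral (F := F) P hmX hgsm hZeint hgint]
    rw [integral_eq_zero_of_ae]
    filter_upwards [hcondZe] with ω h
    simp [h]
  have hcorr2_int : Integrable (fun ω => (eX ω - Z ω) * (mu0 ω * b) / (1 - eX ω)) P := by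
    refine (hint4.sub hint6).congr (Filter.Eventually.of_forall fun ω => ?_)
    simp only [Pi.sub_apply]; ring
  have hcorr2 : ∫ ω, (eX ω - Z ω) * (mu0 ω * b) / (1 - eX ω) ∂P = 0 := by
    have hgsm : StronglyMeasurable[mX] (fun ω => -(mu0 ω * b) / (1 - eX ω)) :=
      (((hmu0meas.mul_const b).neg).div (measurable_const.sub heXmeas)).stronglyMeasurable
    have hgint : Integrable (fun ω => -(mu0 ω * b) / (1 - eX ω) * (Z ω - eX ω)) P :=
      hcorr2_int.congr (Filter.Eventually.of_forall fun ω => by ring)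
    have : ∫ ω, (eX ω - Z ω) * (mu0 ω * b) / (1 - eX ω) ∂P
        = ∫ ω, -(mu0 ω * b) / (1 - eX ω) * (Z ω - eX ω) ∂P :=
      integral_congr_ae (Filter.Eventually.of_forall fun ω => by ring)
    rw [this, pullout_integral (F := F) P hmX hgsm hZeint hgint]
    rw [integral_eq_zero_of_ae]
    filter_upwards [hcondZe] with ω h
    simp [h]
  have hpart2a : ∫ ω, ((eX ω + (1 - eX ω) / a) * (Z ω * Y ω) / eX ω
        - (Z ω - eX ω) * mu1 ω / (eX ω * a)) ∂P
      = ∫ ω, (eX ω + (1 - eX ω) / a) * (Z ω * Y ω) / eX ω ∂P := by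
    rw [integral_sub hint3 hcorr1_int, hcorr1, sub_zero]
  have hpart2b : ∫ ω, ((eX ω * b + 1 - eX ω) * ((1 - Z ω) * Y ω) / (1 - eX ω)
        - (eX ω - Z ω) * (mu0 ω * b) / (1 - eX ω)) ∂P
      = ∫ ω, (eX ω * b + 1 - eX ω) * ((1 - Z ω) * Y ω) / (1 - eX ω) ∂P := by
    rw [integral_sub hint4 hcorr2_int, hcorr2, sub_zero]
  exact ⟨by rw [hA1, hA2, hB1', hB2'], by rw [hpart2a, hpart2b]⟩
end

section
/- (Theorem S1, identification of the counterfactual control mean among the treated.) Assume e := P(Z=1) > 0. Under the sensitivity parametrization, E[Y(0) ∣ Z=1] = E[Z·μ0(X)·ε0(X)] / e = E[e(X)·ε0(X)·(1−Z)·Y/(1−e(X))] / e; equivalently, E[Z·Y(0)] = E[Z·μ0(X)·ε0(X)] = E[e(X)·ε0(X)·(1−Z)·Y/(1−e(X))]. -/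
open MeasureTheory

/-- Theorem S1 (identification of the counterfactual control mean among the treated). -/
theorem att_counterfactual_control_mean_identification
    {Ω : Type*} [F : MeasurableSpace Ω] (P : Measure Ω) [IsProbabilityMeasure P]
    (Z Y1 Y0 Y : Ω → ℝ)
    (hZmeas : Measurable Z) (hZ01 : ∀ ω, Z ω = 0 ∨ Z ω = 1)
    (hY1int : Integrable Y1 P) (hY0int : Integrable Y0 P)
    (hYdef : ∀ ω, Y ω = Z ω * Y1 ω + (1 - Z ω) * Y0 ω)
    (mX : MeasurableSpace Ω) (hmX : mX ≤ F)
    (eX : Ω → ℝ) (heXmeas : Measurable[mX] eX) (heX : eX =ᵐ[P] P[Z|mX])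
    (hov : ∀ᵐ ω ∂P, 0 < eX ω ∧ eX ω < 1)
    (mu0 : Ω → ℝ) (hmu0meas : Measurable[mX] mu0)
    (hmu0 : (fun ω => mu0 ω * (1 - eX ω)) =ᵐ[P] P[fun ω => (1 - Z ω) * Y ω|mX])
    (eps0 : Ω → ℝ) (heps0meas : Measurable[mX] eps0)
    (heps0pos : ∀ᵐ ω ∂P, 0 < eps0 ω)
    (hsens0 : ∀ᵐ ω ∂P, (1 - eX ω) * (P[fun ω' => Z ω' * Y0 ω'|mX]) ω
        = eps0 ω * eX ω * (P[fun ω' => (1 - Z ω') * Y0 ω'|mX]) ω)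
    (he : 0 < P {ω | Z ω = 1})
    (hint1 : Integrable (fun ω => Z ω * Y0 ω) P)
    (hint2 : Integrable (fun ω => Z ω * (mu0 ω * eps0 ω)) P)
    (hint3 : Integrable
      (fun ω => eX ω * eps0 ω * ((1 - Z ω) * Y ω) / (1 - eX ω)) P) :
    (∫ ω, Z ω * Y0 ω ∂P = ∫ ω, Z ω * (mu0 ω * eps0 ω) ∂P)
    ∧ (∫ ω, Z ω * (mu0 ω * eps0 ω) ∂P
        = ∫ ω, eX ω * eps0 ω * ((1 - Z ω) * Y ω) / (1 - eX ω) ∂P)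
    ∧ (∫ ω, Y0 ω ∂(ProbabilityTheory.cond P {ω | Z ω = 1})
        = (∫ ω, Z ω * (mu0 ω * eps0 ω) ∂P) / (P {ω | Z ω = 1}).toReal) := by
  haveI : SigmaFinite (P.trim hmX) := by
    have : IsFiniteMeasure (P.trim hmX) := isFiniteMeasure_trim hmX
    infer_instance
  -- pointwise: (1 - Z) * Y = (1 - Z) * Y0
  have hZY : ∀ ω, (1 - Z ω) * Y ω = (1 - Z ω) * Y0 ω := by
    intro ω
    rcases hZ01 ω with h | h <;> rw [hYdef ω, h] <;> ring
  have hfun : (fun ω => (1 - Z ω) * Y ω) = fun ω => (1 - Z ω) * Y0 ω := funext hZY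
  -- measurability of Y
  have hYsm : AEStronglyMeasurable[F] Y P := by
    have : Y = fun ω => Z ω * Y1 ω + (1 - Z ω) * Y0 ω := funext hYdef
    rw [this]
    exact ((hZmeas.aestronglyMeasurable.mul hY1int.1).add
      ((aestronglyMeasurable_const.sub hZmeas.aestronglyMeasurable).mul hY0int.1))
  -- integrability of (1 - Z) * Y
  have hf2int : Integrable (fun ω => (1 - Z ω) * Y ω) P := by
    rw [hfun]
    refine hY0int.abs.mono'
      ((aestronglyMeasurable_const.sub hZmeas.aestronglyMeasurable).mul hY0int.1) ?_
    filter_upwards with ω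
    rcases hZ01 ω with h | h <;> simp [h, abs_nonneg]
  -- integrability of Z
  have hZint : Integrable Z P := by
    refine (integrable_const (1 : ℝ)).mono' hZmeas.aestronglyMeasurable ?_
    filter_upwards with ω
    rcases hZ01 ω with h | h <;> simp [h]
  -- key: P[Z*Y0|mX] = eX * eps0 * mu0 a.e.
  have hmu0' : (fun ω => mu0 ω * (1 - eX ω)) =ᵐ[P] P[fun ω' => (1 - Z ω') * Y0 ω'|mX] := by
    rw [← hfun]; exact hmu0
  have hkey : (P[fun ω' => Z ω' * Y0 ω'|mX]) =ᵐ[P] fun ω => eX ω * eps0 ω * mu0 ω := by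
    filter_upwards [hsens0, hmu0', hov] with ω hs hm hov
    rw [← hm] at hs
    have h1 : (1 : ℝ) - eX ω ≠ 0 := by linarith [hov.2]
    have := hs.trans (by ring :
      eps0 ω * eX ω * (mu0 ω * (1 - eX ω)) = (1 - eX ω) * (eX ω * eps0 ω * mu0 ω))
    exact mul_left_cancel₀ h1 this
  -- first equality: ∫ Z*Y0 = ∫ eX*eps0*mu0
  have e1 : ∫ ω, Z ω * Y0 ω ∂P = ∫ ω, eX ω * eps0 ω * mu0 ω ∂P := by
    rw [← integral_condExp hmX (f := fun ω => Z ω * Y0 ω)]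
    exact integral_congr_ae hkey
  -- second: ∫ Z*(mu0*eps0) = ∫ eX*eps0*mu0, via pull-out
  have hg : StronglyMeasurable[mX] (fun ω => mu0 ω * eps0 ω) :=
    (hmu0meas.mul heps0meas).stronglyMeasurable
  have hint2' : Integrable ((fun ω => mu0 ω * eps0 ω) * Z) P := by
    have : ((fun ω => mu0 ω * eps0 ω) * Z) = fun ω => Z ω * (mu0 ω * eps0 ω) := by
      funext ω; simp [Pi.mul_apply]; ring
    rw [this]; exact hint2
  have hpull := condExp_mul_of_stronglyMeasurable_left hg hint2' hZint
  have e2 : ∫ ω, Z ω * (mu0 ω * eps0 ω) ∂P = ∫ ω, eX ω * eps0 ω * mu0 ω ∂P := by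
    have h0 : ∫ ω, Z ω * (mu0 ω * eps0 ω) ∂P
        = ∫ ω, ((fun ω => mu0 ω * eps0 ω) * Z) ω ∂P := by
      apply integral_congr_ae
      filter_upwards with ω
      simp [Pi.mul_apply]; ring
    rw [h0, ← integral_condExp hmX (f := (fun ω => mu0 ω * eps0 ω) * Z)]
    apply integral_congr_ae
    filter_upwards [hpull, heX] with ω hp he'
    rw [hp]
    simp only [Pi.mul_apply]
    rw [← he']
    ring
  -- third: ∫ eX*eps0*(1-Z)*Y/(1-eX) = ∫ eX*eps0*mu0, via pull-out
  have hh : StronglyMeasurable[mX] (fun ω => eX ω * eps0 ω / (1 - eX ω)) :=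
    ((heXmeas.mul heps0meas).div (measurable_const.sub heXmeas)).stronglyMeasurable
  have hrw : (fun ω => eX ω * eps0 ω * ((1 - Z ω) * Y ω) / (1 - eX ω))
      = (fun ω => eX ω * eps0 ω / (1 - eX ω)) * (fun ω => (1 - Z ω) * Y ω) := by
    funext ω; simp [Pi.mul_apply]; ring
  have hint3' : Integrable
      ((fun ω => eX ω * eps0 ω / (1 - eX ω)) * (fun ω => (1 - Z ω) * Y ω)) P := by
    rw [← hrw]; exact hint3
  have hpull3 := condExp_mul_of_stronglyMeasurable_left hh hint3' hf2int
  have e3 : ∫ ω, eX ω * eps0 ω * ((1 - Z ω) * Y ω) / (1 - eX ω) ∂P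
      = ∫ ω, eX ω * eps0 ω * mu0 ω ∂P := by
    rw [hrw, ← integral_condExp hmX
      (f := (fun ω => eX ω * eps0 ω / (1 - eX ω)) * (fun ω => (1 - Z ω) * Y ω))]
    apply integral_congr_ae
    filter_upwards [hpull3, hmu0, hov] with ω hp hm hov
    rw [hp]
    simp only [Pi.mul_apply]
    rw [← hm]
    have h1 : (1 : ℝ) - eX ω ≠ 0 := by linarith [hov.2]
    field_simp
  -- part 3: conditional expectation on {Z = 1}
  have hs : MeasurableSet[F] {ω | Z ω = 1} := hZmeas (measurableSet_singleton 1)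
  have hind : (fun ω => Z ω * Y0 ω) = Set.indicator {ω | Z ω = 1} Y0 := by
    funext ω
    rcases hZ01 ω with h | h
    · rw [Set.indicator_of_notMem (by simp [Set.mem_setOf_eq, h]), h]; ring
    · rw [Set.indicator_of_mem (by simp [Set.mem_setOf_eq, h]), h]; ring
  have hsint : ∫ ω, Z ω * Y0 ω ∂P = ∫ ω in {ω | Z ω = 1}, Y0 ω ∂P := by
    rw [hind]; exact @integral_indicator Ω ℝ F _ _ Y0 _ P hs
  have hPne : P {ω | Z ω = 1} ≠ ⊤ := measure_ne_top P _
  have e4 : ∫ ω, Y0 ω ∂(ProbabilityTheory.cond P {ω | Z ω = 1})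
      = (∫ ω, Z ω * Y0 ω ∂P) / (P {ω | Z ω = 1}).toReal := by
    rw [ProbabilityTheory.cond, integral_smul_measure, hsint, ENNReal.toReal_inv,
      smul_eq_mul, inv_mul_eq_div]
  exact ⟨e1.trans e2.symm, e2.trans e3.symm, by rw [e4, e1.trans e2.symm]⟩
end

section
/- (Theorem S2, mean-zero representation from the efficient influence function for the counterfactual control mean among the treated.) Under the sensitivity parametrization, E[Z·Y(0)] = E[ Z·ε0(X)·μ0(X) + ε0(X)·e(X)·(1−Z)·(Y−μ0(X))/(1−e(X)) ]. -/
open MeasureTheory Filter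

/-- Theorem S2 (mean-zero representation from the efficient influence function for
the counterfactual control mean among the treated). -/
theorem att_eif_mean_zero_representation
    {Ω : Type*} [F : MeasurableSpace Ω] (P : Measure Ω) [IsProbabilityMeasure P]
    (Z Y1 Y0 Y : Ω → ℝ)
    (hZmeas : Measurable Z) (hZ01 : ∀ ω, Z ω = 0 ∨ Z ω = 1)
    (hY1int : Integrable Y1 P) (hY0int : Integrable Y0 P)
    (hYdef : ∀ ω, Y ω = Z ω * Y1 ω + (1 - Z ω) * Y0 ω)
    (mX : MeasurableSpace Ω) (hmX : mX ≤ F)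
    (eX : Ω → ℝ) (heXmeas : Measurable[mX] eX) (heX : eX =ᵐ[P] P[Z|mX])
    (hov : ∀ᵐ ω ∂P, 0 < eX ω ∧ eX ω < 1)
    (mu0 : Ω → ℝ) (hmu0meas : Measurable[mX] mu0)
    (hmu0 : (fun ω => mu0 ω * (1 - eX ω)) =ᵐ[P] P[fun ω => (1 - Z ω) * Y ω|mX])
    (eps0 : Ω → ℝ) (heps0meas : Measurable[mX] eps0)
    (heps0pos : ∀ᵐ ω ∂P, 0 < eps0 ω)
    (hsens0 : ∀ᵐ ω ∂P, (1 - eX ω) * (P[fun ω' => Z ω' * Y0 ω'|mX]) ω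
        = eps0 ω * eX ω * (P[fun ω' => (1 - Z ω') * Y0 ω'|mX]) ω)
    (hint1 : Integrable (fun ω => Z ω * Y0 ω) P)
    (hint2 : Integrable (fun ω => Z ω * (eps0 ω * mu0 ω)
        + eps0 ω * eX ω * ((1 - Z ω) * (Y ω - mu0 ω)) / (1 - eX ω)) P) :
    ∫ ω, Z ω * Y0 ω ∂P
      = ∫ ω, (Z ω * (eps0 ω * mu0 ω)
          + eps0 ω * eX ω * ((1 - Z ω) * (Y ω - mu0 ω)) / (1 - eX ω)) ∂P := by
  -- Notation
  set g : Ω → ℝ := fun ω => Z ω * (eps0 ω * mu0 ω)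
      + eps0 ω * eX ω * ((1 - Z ω) * (Y ω - mu0 ω)) / (1 - eX ω) with hgdef
  set h1 : Ω → ℝ := fun ω => Z ω * (eps0 ω * mu0 ω) with hh1def
  set h2 : Ω → ℝ := fun ω =>
      eps0 ω * eX ω * ((1 - Z ω) * (Y ω - mu0 ω)) / (1 - eX ω) with hh2def
  set c : Ω → ℝ := fun ω => eps0 ω * eX ω / (1 - eX ω) with hcdef
  have hcmeas : Measurable[mX] c :=
    (heps0meas.mul heXmeas).div (measurable_const.sub heXmeas)
  have hZint : Integrable Z P := by
    refine Integrable.mono' (integrable_const 1) hZmeas.aestronglyMeasurable ?_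
    filter_upwards with ω
    rcases hZ01 ω with h | h <;> simp [h]
  have hOmZint : Integrable (fun ω => 1 - Z ω) P := (integrable_const 1).sub hZint
  have hYmeas : AEStronglyMeasurable[F] Y P := by
    have : Y = fun ω => Z ω * Y1 ω + (1 - Z ω) * Y0 ω := funext hYdef
    rw [this]
    exact ((hZmeas.aestronglyMeasurable.mul hY1int.1).add
      ((aestronglyMeasurable_const.sub hZmeas.aestronglyMeasurable).mul hY0int.1))
  -- (1-Z) Y = (1-Z) Y0 pointwise
  have hZYeq : (fun ω => (1 - Z ω) * Y0 ω) = fun ω => (1 - Z ω) * Y ω := by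
    funext ω; rcases hZ01 ω with h | h <;> rw [hYdef ω, h] <;> ring
  have hOmZYint : Integrable (fun ω => (1 - Z ω) * Y ω) P := by
    refine Integrable.mono' hY0int.abs
      ((aestronglyMeasurable_const.sub hZmeas.aestronglyMeasurable).mul hYmeas) ?_
    filter_upwards with ω
    have := congrFun hZYeq ω
    rw [← this]
    rcases hZ01 ω with h | h <;> simp [h, abs_nonneg, Real.norm_eq_abs, abs_abs, le_abs_self]
  -- Step A : P[Z Y0 | mX] = eps0 eX mu0 a.e.
  have hA : P[fun ω => Z ω * Y0 ω|mX] =ᵐ[P] fun ω => eps0 ω * eX ω * mu0 ω := by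
    have h1' : P[fun ω' => (1 - Z ω') * Y0 ω'|mX] =ᵐ[P] fun ω => mu0 ω * (1 - eX ω) := by
      rw [hZYeq]; exact hmu0.symm
    filter_upwards [hsens0, hov, h1'] with ω hs ho h1ω
    rw [h1ω] at hs
    have hne : (1 : ℝ) - eX ω ≠ 0 := by have := ho.2; intro h; linarith
    have hs2 : (1 - eX ω) * ((P[fun ω' => Z ω' * Y0 ω'|mX]) ω)
        = (1 - eX ω) * (eps0 ω * eX ω * mu0 ω) := by linear_combination hs
    exact mul_left_cancel₀ hne hs2
  have hLeft : ∫ ω, Z ω * Y0 ω ∂P = ∫ ω, eps0 ω * eX ω * mu0 ω ∂P := by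
    rw [← integral_condExp hmX (f := fun ω => Z ω * Y0 ω)]
    exact integral_congr_ae hA
  -- Integrability of the pieces
  have hh1eq : h1 = fun ω => Z ω * g ω := by
    funext ω; rcases hZ01 ω with h | h <;> simp only [hh1def, hgdef, h] <;> ring
  have hh1int : Integrable h1 P := by
    rw [hh1eq]
    refine Integrable.bdd_mul hint2 hZmeas.aestronglyMeasurable (c := 1) (ae_of_all _ fun ω => ?_)
    rcases hZ01 ω with h | h <;> simp [h]
  have hh2int : Integrable h2 P := by
    have : h2 = fun ω => g ω - h1 ω := by funext ω; simp [hgdef, hh1def, hh2def]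
    rw [this]; exact hint2.sub hh1int
  -- ∫ h1 = ∫ eps0 mu0 eX  (pull-out property)
  have hpull1 := condExp_mul_of_stronglyMeasurable_left (μ := P)
      (f := fun ω => eps0 ω * mu0 ω) (g := Z)
      ((heps0meas.mul hmu0meas).stronglyMeasurable)
      (by
        have : ((fun ω => eps0 ω * mu0 ω) * Z) = h1 := by
          funext ω; simp [hh1def]; ring
        rw [this]; exact hh1int) hZint
  have hInt1 : ∫ ω, h1 ω ∂P = ∫ ω, eps0 ω * eX ω * mu0 ω ∂P := by
    have e1 : ∫ ω, h1 ω ∂P = ∫ ω, ((fun ω => eps0 ω * mu0 ω) * Z) ω ∂P := by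
      apply integral_congr_ae; filter_upwards with ω; simp [hh1def]; ring
    rw [e1, ← integral_condExp hmX (f := (fun ω => eps0 ω * mu0 ω) * Z)]
    apply integral_congr_ae
    refine hpull1.trans ?_
    filter_upwards [heX] with ω hωe
    simp only [Pi.mul_apply]
    rw [← hωe]; ring
  -- conditional expectation of 1 - Z
  have hCondOmZ : P[fun ω => 1 - Z ω|mX] =ᵐ[P] fun ω => 1 - eX ω := by
    have h1 : P[fun ω => (1 : ℝ) - Z ω|mX]
        =ᵐ[P] P[fun _ => (1 : ℝ)|mX] - P[Z|mX] := condExp_sub (integrable_const 1) hZint mX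
    refine h1.trans ?_
    filter_upwards [heX] with ω hωe
    simp [condExp_const hmX, ← hωe]
  -- ∫ h2 = 0 via truncation
  have hh2c : h2 = fun ω => c ω * ((1 - Z ω) * (Y ω - mu0 ω)) := by
    funext ω; simp only [hh2def, hcdef]; ring
  -- the truncation sets
  set B : ℕ → Set Ω := fun n => {ω | |c ω| ≤ (n : ℝ) ∧ |mu0 ω| ≤ (n : ℝ)} with hBdef
  have hBmeas : ∀ n, MeasurableSet[mX] (B n) := by
    intro n
    exact (hcmeas.abs measurableSet_Iic).inter (hmu0meas.abs measurableSet_Iic)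
  have hBmeasF : ∀ n, MeasurableSet[F] (B n) := fun n => hmX _ (hBmeas n)
  set χ : ℕ → Ω → ℝ := fun n => (B n).indicator (fun _ => (1 : ℝ)) with hχdef
  have hχ01 : ∀ n ω, χ n ω = 0 ∨ χ n ω = 1 := by
    intro n ω
    by_cases h : ω ∈ B n <;> simp [hχdef, h]
  have hχsm : ∀ n, StronglyMeasurable[mX] (χ n) := fun n =>
    (stronglyMeasurable_const.indicator (hBmeas n))
  have hχaesm : ∀ n, AEStronglyMeasurable[F] (χ n) P := fun n =>
    ((hχsm n).mono hmX).aestronglyMeasurable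
  -- ∫ χ n * h2 = 0 for each n
  have hzero : ∀ n, ∫ ω, χ n ω * h2 ω ∂P = 0 := by
    intro n
    -- bounded mX-measurable factors
    have hf1sm : StronglyMeasurable[mX] (fun ω => χ n ω * c ω) :=
      (hχsm n).mul hcmeas.stronglyMeasurable
    have hf1bd : ∀ ω, ‖χ n ω * c ω‖ ≤ (n : ℝ) := by
      intro ω
      by_cases h : ω ∈ B n
      · simp only [hχdef, Set.indicator_of_mem h, one_mul, Real.norm_eq_abs]
        exact h.1
      · simp [hχdef, Set.indicator_of_notMem h]
    have hf2sm : StronglyMeasurable[mX] (fun ω => χ n ω * c ω * mu0 ω) :=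
      hf1sm.mul hmu0meas.stronglyMeasurable
    have hf2bd : ∀ ω, ‖χ n ω * c ω * mu0 ω‖ ≤ (n : ℝ) * (n : ℝ) := by
      intro ω
      by_cases h : ω ∈ B n
      · simp only [hχdef, Set.indicator_of_mem h, one_mul, Real.norm_eq_abs, abs_mul]
        exact mul_le_mul h.1 h.2 (abs_nonneg _) (Nat.cast_nonneg n)
      · simp [hχdef, Set.indicator_of_notMem h, mul_nonneg]
    have hint_a : Integrable (fun ω => (χ n ω * c ω) * ((1 - Z ω) * Y ω)) P :=
      Integrable.bdd_mul hOmZYint (hf1sm.mono hmX).aestronglyMeasurable (ae_of_all _ hf1bd)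
    have hint_b : Integrable (fun ω => (χ n ω * c ω * mu0 ω) * (1 - Z ω)) P :=
      Integrable.bdd_mul hOmZint (hf2sm.mono hmX).aestronglyMeasurable (ae_of_all _ hf2bd)
    -- pull-out for both
    have hpa := condExp_mul_of_stronglyMeasurable_left (μ := P)
        (f := fun ω => χ n ω * c ω) (g := fun ω => (1 - Z ω) * Y ω)
        hf1sm (by
          have : ((fun ω => χ n ω * c ω) * fun ω => (1 - Z ω) * Y ω)
              = fun ω => (χ n ω * c ω) * ((1 - Z ω) * Y ω) := rfl
          rw [this]; exact hint_a) hOmZYint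
    have hpb := condExp_mul_of_stronglyMeasurable_left (μ := P)
        (f := fun ω => χ n ω * c ω * mu0 ω) (g := fun ω => 1 - Z ω)
        hf2sm (by
          have : ((fun ω => χ n ω * c ω * mu0 ω) * fun ω => 1 - Z ω)
              = fun ω => (χ n ω * c ω * mu0 ω) * (1 - Z ω) := rfl
          rw [this]; exact hint_b) hOmZint
    have hIa : ∫ ω, (χ n ω * c ω) * ((1 - Z ω) * Y ω) ∂P
        = ∫ ω, χ n ω * c ω * (mu0 ω * (1 - eX ω)) ∂P := by
      rw [show (fun ω => (χ n ω * c ω) * ((1 - Z ω) * Y ω))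
          = ((fun ω => χ n ω * c ω) * fun ω => (1 - Z ω) * Y ω) from rfl,
        ← integral_condExp hmX (f := (fun ω => χ n ω * c ω) * fun ω => (1 - Z ω) * Y ω)]
      apply integral_congr_ae
      refine hpa.trans ?_
      filter_upwards [hmu0] with ω hω
      simp only [Pi.mul_apply]
      rw [← hω]
    have hIb : ∫ ω, (χ n ω * c ω * mu0 ω) * (1 - Z ω) ∂P
        = ∫ ω, χ n ω * c ω * (mu0 ω * (1 - eX ω)) ∂P := by
      rw [show (fun ω => (χ n ω * c ω * mu0 ω) * (1 - Z ω))
          = ((fun ω => χ n ω * c ω * mu0 ω) * fun ω => 1 - Z ω) from rfl,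
        ← integral_condExp hmX (f := (fun ω => χ n ω * c ω * mu0 ω) * fun ω => 1 - Z ω)]
      apply integral_congr_ae
      refine hpb.trans ?_
      filter_upwards [hCondOmZ] with ω hω
      simp only [Pi.mul_apply]
      rw [hω]; ring
    have hsplit : ∫ ω, χ n ω * h2 ω ∂P
        = ∫ ω, (χ n ω * c ω) * ((1 - Z ω) * Y ω) ∂P
          - ∫ ω, (χ n ω * c ω * mu0 ω) * (1 - Z ω) ∂P := by
      rw [← integral_sub hint_a hint_b]
      apply integral_congr_ae
      filter_upwards with ω
      rw [hh2c]; ring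
    rw [hsplit, hIa, hIb, sub_self]
  -- limit as n → ∞ : ∫ h2 = 0
  have hInt2 : ∫ ω, h2 ω ∂P = 0 := by
    have htend : Tendsto (fun n => ∫ ω, χ n ω * h2 ω ∂P) atTop (nhds (∫ ω, h2 ω ∂P)) := by
      refine tendsto_integral_of_dominated_convergence (fun ω => |h2 ω|)
        (fun n => (hχaesm n).mul hh2int.1) hh2int.abs ?_ ?_
      · intro n
        filter_upwards with ω
        rcases hχ01 n ω with h | h <;>
          simp [h, Real.norm_eq_abs, abs_mul, abs_nonneg, le_abs_self]
      · filter_upwards with ω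
        have hev : (fun n => χ n ω * h2 ω) =ᶠ[atTop] fun _ => h2 ω := by
          filter_upwards [eventually_ge_atTop (⌈max |c ω| |mu0 ω|⌉₊)] with n hn
          have hn' : max |c ω| |mu0 ω| ≤ (n : ℝ) :=
            (Nat.le_ceil _).trans (Nat.cast_le.mpr hn)
          have hmem : ω ∈ B n :=
            ⟨(le_max_left _ _).trans hn', (le_max_right _ _).trans hn'⟩
          simp [hχdef, Set.indicator_of_mem hmem]
        exact tendsto_const_nhds.congr' hev.symm
    have h0 : Tendsto (fun n => ∫ ω, χ n ω * h2 ω ∂P) atTop (nhds 0) :=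
      tendsto_const_nhds.congr fun n => (hzero n).symm
    exact tendsto_nhds_unique htend h0
  -- assemble
  have hgsplit : ∫ ω, g ω ∂P = ∫ ω, h1 ω ∂P + ∫ ω, h2 ω ∂P := by
    rw [← integral_add hh1int hh2int]
  calc ∫ ω, Z ω * Y0 ω ∂P = ∫ ω, eps0 ω * eX ω * mu0 ω ∂P := hLeft
    _ = ∫ ω, h1 ω ∂P + ∫ ω, h2 ω ∂P := by rw [hInt1, hInt2, add_zero]
    _ = ∫ ω, g ω ∂P := hgsplit.symm
end

section
/- (Theorem S3, double robustness for the average causal effect on the treated.) Assume e := P(Z=1) > 0. Let e*(X) be 𝔛-measurable with 0 < e*(X) < 1 almost surely and let μ0*(X) be 𝔛-measurable and integrable, and define μ_{T0}^{dr} = E[ ε0(X)·{ e*(X)·(1−Z)·Y/(1−e*(X)) − (e*(X)−Z)·μ0*(X)/(1−e*(X)) } ] / e. If either e*(X) = e(X) almost surely, or μ0*(X) = μ0(X) almost surely, then μ_{T0}^{dr} = E[Y(0) ∣ Z=1]. -/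
open MeasureTheory

/-- Theorem S3 (double robustness for the average causal effect on the treated). -/
theorem att_double_robustness
    {Ω : Type*} [F : MeasurableSpace Ω] (P : Measure Ω) [IsProbabilityMeasure P]
    (Z Y1 Y0 Y : Ω → ℝ)
    (hZmeas : Measurable Z) (hZ01 : ∀ ω, Z ω = 0 ∨ Z ω = 1)
    (hY1int : Integrable Y1 P) (hY0int : Integrable Y0 P)
    (hYdef : ∀ ω, Y ω = Z ω * Y1 ω + (1 - Z ω) * Y0 ω)
    (mX : MeasurableSpace Ω) (hmX : mX ≤ F)
    (eX : Ω → ℝ) (heXmeas : Measurable[mX] eX) (heX : eX =ᵐ[P] P[Z|mX])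
    (hov : ∀ᵐ ω ∂P, 0 < eX ω ∧ eX ω < 1)
    (mu0 : Ω → ℝ) (hmu0meas : Measurable[mX] mu0)
    (hmu0 : (fun ω => mu0 ω * (1 - eX ω)) =ᵐ[P] P[fun ω => (1 - Z ω) * Y ω|mX])
    (eps0 : Ω → ℝ) (heps0meas : Measurable[mX] eps0)
    (heps0pos : ∀ᵐ ω ∂P, 0 < eps0 ω)
    (hsens0 : ∀ᵐ ω ∂P, (1 - eX ω) * (P[fun ω' => Z ω' * Y0 ω'|mX]) ω
        = eps0 ω * eX ω * (P[fun ω' => (1 - Z ω') * Y0 ω'|mX]) ω)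
    (he : 0 < P {ω | Z ω = 1})
    (es : Ω → ℝ) (hesmeas : Measurable[mX] es)
    (hes01 : ∀ᵐ ω ∂P, 0 < es ω ∧ es ω < 1)
    (mu0s : Ω → ℝ) (hmu0smeas : Measurable[mX] mu0s) (hmu0sint : Integrable mu0s P)
    (hint : Integrable (fun ω => eps0 ω * (es ω * ((1 - Z ω) * Y ω) / (1 - es ω)
        - (es ω - Z ω) * mu0s ω / (1 - es ω))) P)
    (hcase : es =ᵐ[P] eX ∨ mu0s =ᵐ[P] mu0) :
    (∫ ω, eps0 ω * (es ω * ((1 - Z ω) * Y ω) / (1 - es ω)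
        - (es ω - Z ω) * mu0s ω / (1 - es ω)) ∂P) / (P {ω | Z ω = 1}).toReal
      = ∫ ω, Y0 ω ∂(ProbabilityTheory.cond P {ω | Z ω = 1}) := by
  -- Notation
  set f : Ω → ℝ := fun ω => eps0 ω * (es ω * ((1 - Z ω) * Y ω) / (1 - es ω)
        - (es ω - Z ω) * mu0s ω / (1 - es ω)) with hf
  set h1 : Ω → ℝ := fun ω' => (1 - Z ω') * Y0 ω' with hh1
  set g1 : Ω → ℝ := fun ω => eps0 ω * es ω / (1 - es ω) with hg1
  set g2 : Ω → ℝ := fun ω => eps0 ω * mu0s ω / (1 - es ω) with hg2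
  set CE1 : Ω → ℝ := P[h1|mX] with hCE1
  set CE0 : Ω → ℝ := P[fun ω' => Z ω' * Y0 ω'|mX] with hCE0def
  haveI : SigmaFinite (P.trim hmX) := by infer_instance
  -- (1-Z) Y = (1-Z) Y0 pointwise
  have hZY : ∀ ω, (1 - Z ω) * Y ω = (1 - Z ω) * Y0 ω := by
    intro ω
    rw [hYdef ω]
    rcases hZ01 ω with h | h <;> rw [h] <;> ring
  have hfun : (fun ω => (1 - Z ω) * Y ω) = h1 := funext hZY
  rw [hfun] at hmu0
  -- basic integrability
  have hone : Integrable (fun _ : Ω => (1 : ℝ)) P := integrable_const 1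
  have hZint : Integrable Z P := by
    have := hone.bdd_mul hZmeas.aestronglyMeasurable
      (c := 1) (Filter.Eventually.of_forall fun ω => by rcases hZ01 ω with h | h <;> simp [h])
    simpa using this
  have h1int : Integrable h1 P := by
    refine hY0int.bdd_mul ((measurable_const.sub hZmeas)).aestronglyMeasurable
      (c := 1) (Filter.Eventually.of_forall fun ω => ?_)
    rcases hZ01 ω with h | h <;> simp [h]
  have hZY0int : Integrable (fun ω => Z ω * Y0 ω) P := by
    refine hY0int.bdd_mul hZmeas.aestronglyMeasurable (c := 1) (Filter.Eventually.of_forall fun ω => ?_)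
    rcases hZ01 ω with h | h <;> simp [h]
  -- measurability of g1, g2
  have hg1m : Measurable[mX] g1 := (heps0meas.mul hesmeas).div (measurable_const.sub hesmeas)
  have hg2m : Measurable[mX] g2 := (heps0meas.mul hmu0smeas).div (measurable_const.sub hesmeas)
  have hg2em : Measurable[mX] (fun ω => g2 ω * es ω) := hg2m.mul hesmeas
  -- pointwise decomposition of f
  have hfdec : ∀ ω, f ω = g1 ω * h1 ω - g2 ω * es ω + g2 ω * Z ω := by
    intro ω
    simp only [hf, hh1, hg1, hg2, hZY ω]
    ring
  -- localization sets
  set s : ℕ → Set Ω := fun n => {ω | |g1 ω| ≤ n ∧ |g2 ω| ≤ n ∧ |g2 ω * es ω| ≤ n} with hs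
  have hsmeas : ∀ n, MeasurableSet[mX] (s n) := by
    intro n
    exact ((measurableSet_le hg1m.abs measurable_const).inter
      ((measurableSet_le hg2m.abs measurable_const).inter
        (measurableSet_le hg2em.abs measurable_const)))
  -- the key a.e. identity for the "conditional mean" of f
  have hphi : (fun ω => g1 ω * CE1 ω - g2 ω * es ω + g2 ω * eX ω) =ᵐ[P] CE0 := by
    rcases hcase with hse | hmm
    · filter_upwards [hse, hov, hsens0] with ω hse hov hsn
      simp only [hg1, hg2, hse]
      have hne : (1 : ℝ) - eX ω ≠ 0 := by linarith [hov.2]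
      field_simp
      linarith [hsn]
    · have hmu0' : (fun ω => mu0 ω * (1 - eX ω)) =ᵐ[P] CE1 := hmu0
      filter_upwards [hmm, hov, hes01, hsens0, hmu0'] with ω hmm hov hes hsn hm0
      simp only [hg1, hg2, hmm]
      have hne : (1 : ℝ) - eX ω ≠ 0 := by linarith [hov.2]
      have hnes : (1 : ℝ) - es ω ≠ 0 := by linarith [hes.2]
      have hCE0ω : CE0 ω = eps0 ω * eX ω * mu0 ω := by
        have h2 : (1 - eX ω) * CE0 ω = eps0 ω * eX ω * (mu0 ω * (1 - eX ω)) := by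
          rw [← hm0] at hsn; exact hsn
        have h3 : (1 - eX ω) * CE0 ω = (1 - eX ω) * (eps0 ω * eX ω * mu0 ω) := by
          rw [h2]; ring
        exact mul_left_cancel₀ hne h3
      rw [← hm0, hCE0ω]
      field_simp
      ring
  -- per-n conditional expectation computation
  have En : ∀ n : ℕ, (s n).indicator (P[f|mX]) =ᵐ[P] (s n).indicator CE0 := by
    intro n
    have hc1sm : StronglyMeasurable[mX] ((s n).indicator g1) :=
      (hg1m.indicator (hsmeas n)).stronglyMeasurable
    have hc2sm : StronglyMeasurable[mX] ((s n).indicator g2) :=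
      (hg2m.indicator (hsmeas n)).stronglyMeasurable
    have hdsm : StronglyMeasurable[mX] ((s n).indicator (fun ω => g2 ω * es ω)) :=
      (hg2em.indicator (hsmeas n)).stronglyMeasurable
    have hc1b : ∀ ω, ‖(s n).indicator g1 ω‖ ≤ (n : ℝ) := by
      intro ω
      by_cases h : ω ∈ s n
      · rw [Set.indicator_of_mem h, Real.norm_eq_abs]; exact h.1
      · rw [Set.indicator_of_notMem h]; simp
    have hc2b : ∀ ω, ‖(s n).indicator g2 ω‖ ≤ (n : ℝ) := by
      intro ω
      by_cases h : ω ∈ s n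
      · rw [Set.indicator_of_mem h, Real.norm_eq_abs]; exact h.2.1
      · rw [Set.indicator_of_notMem h]; simp
    have hdb : ∀ ω, ‖(s n).indicator (fun ω => g2 ω * es ω) ω‖ ≤ (n : ℝ) := by
      intro ω
      by_cases h : ω ∈ s n
      · rw [Set.indicator_of_mem h, Real.norm_eq_abs]; exact h.2.2
      · rw [Set.indicator_of_notMem h]; simp
    have hI1 : Integrable ((s n).indicator g1 * h1) P :=
      h1int.bdd_mul ((hc1sm.mono hmX).aestronglyMeasurable) (c := n) (Filter.Eventually.of_forall hc1b)
    have hI3 : Integrable ((s n).indicator g2 * Z) P :=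
      hZint.bdd_mul ((hc2sm.mono hmX).aestronglyMeasurable) (c := n) (Filter.Eventually.of_forall hc2b)
    have hI2 : Integrable ((s n).indicator (fun ω => g2 ω * es ω)) P := by
      have := hone.bdd_mul
        ((hdsm.mono hmX).aestronglyMeasurable) (c := n) (Filter.Eventually.of_forall hdb)
      simpa using this
    -- indicator of f decomposes
    have hdecomp : (s n).indicator f
        = (s n).indicator g1 * h1 - (s n).indicator (fun ω => g2 ω * es ω)
          + (s n).indicator g2 * Z := by
      funext ω
      by_cases h : ω ∈ s n
      · simp only [Set.indicator_of_mem h, Pi.add_apply, Pi.sub_apply, Pi.mul_apply,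
          Set.indicator_of_mem h]
        exact hfdec ω
      · simp [Set.indicator_of_notMem h]
    calc (s n).indicator (P[f|mX])
        =ᵐ[P] P[(s n).indicator f|mX] := (condExp_indicator hint (hsmeas n)).symm
      _ =ᵐ[P] (s n).indicator CE0 := by
          rw [hdecomp]
          have e1 : P[(s n).indicator g1 * h1 - (s n).indicator (fun ω => g2 ω * es ω)
              + (s n).indicator g2 * Z|mX]
              =ᵐ[P] P[(s n).indicator g1 * h1 - (s n).indicator (fun ω => g2 ω * es ω)|mX]
                + P[(s n).indicator g2 * Z|mX] := condExp_add (hI1.sub hI2) hI3 mX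
          have e2 : P[(s n).indicator g1 * h1 - (s n).indicator (fun ω => g2 ω * es ω)|mX]
              =ᵐ[P] P[(s n).indicator g1 * h1|mX]
                - P[(s n).indicator (fun ω => g2 ω * es ω)|mX] := condExp_sub hI1 hI2 mX
          have e3 : P[(s n).indicator g1 * h1|mX] =ᵐ[P] (s n).indicator g1 * CE1 :=
            condExp_stronglyMeasurable_mul_of_bound hmX hc1sm h1int n
              (Filter.Eventually.of_forall hc1b)
          have e4 : P[(s n).indicator (fun ω => g2 ω * es ω)|mX]
              = (s n).indicator (fun ω => g2 ω * es ω) :=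
            condExp_of_stronglyMeasurable hmX hdsm hI2
          have e5 : P[(s n).indicator g2 * Z|mX] =ᵐ[P] (s n).indicator g2 * P[Z|mX] :=
            condExp_stronglyMeasurable_mul_of_bound hmX hc2sm hZint n
              (Filter.Eventually.of_forall hc2b)
          filter_upwards [e1, e2, e3, e5, heX, hphi] with ω he1 he2 he3 he5 heXω hphiω
          rw [he1, Pi.add_apply, he2, Pi.sub_apply, he3, e4, he5]
          by_cases h : ω ∈ s n
          · simp only [Pi.mul_apply, Set.indicator_of_mem h]
            rw [← heXω]
            exact hphiω
          · simp [Set.indicator_of_notMem h]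
  -- combine over n : conditional expectation of f equals CE0 a.e.
  have hae : P[f|mX] =ᵐ[P] CE0 := by
    have hall : ∀ᵐ ω ∂P, ∀ n : ℕ,
        (s n).indicator (P[f|mX]) ω = (s n).indicator CE0 ω := ae_all_iff.mpr En
    filter_upwards [hall] with ω hω
    obtain ⟨n, hn⟩ := exists_nat_ge (max (|g1 ω|) (max (|g2 ω|) (|g2 ω * es ω|)))
    have hmem : ω ∈ s n := by
      refine ⟨le_trans (le_max_left _ _) hn, le_trans (le_trans (le_max_left _ _)
        (le_max_right _ _)) hn, le_trans (le_trans (le_max_right _ _)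
        (le_max_right _ _)) hn⟩
    have := hω n
    rwa [Set.indicator_of_mem hmem, Set.indicator_of_mem hmem] at this
  -- integrals
  have key : ∫ ω, f ω ∂P = ∫ ω in {ω | Z ω = 1}, Y0 ω ∂P := by
    have h1' : ∫ ω, f ω ∂P = ∫ ω, (P[f|mX]) ω ∂P := (integral_condExp hmX).symm
    have h2' : ∫ ω, (P[f|mX]) ω ∂P = ∫ ω, CE0 ω ∂P := integral_congr_ae hae
    have h3' : ∫ ω, CE0 ω ∂P = ∫ ω, Z ω * Y0 ω ∂P := integral_condExp hmX
    have h4' : (fun ω => Z ω * Y0 ω) = {ω | Z ω = 1}.indicator Y0 := by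
      funext ω
      rcases hZ01 ω with h | h
      · simp [Set.indicator, h, Set.mem_setOf_eq]
      · simp [Set.indicator, h, Set.mem_setOf_eq]
    have hs1 : MeasurableSet[F] {ω | Z ω = 1} := hZmeas (measurableSet_singleton 1)
    rw [h1', h2', h3', h4', @integral_indicator Ω ℝ F _ _ Y0 {ω | Z ω = 1} P hs1]
  -- conditional measure on the right
  rw [ProbabilityTheory.cond, integral_smul_measure, ENNReal.toReal_inv, key,
    div_eq_inv_mul, smul_eq_mul]
end

section
/- (Proposition S1, worst-case bounds for the average causal effect on the treated with non-negative outcomes.) Assume e := P(Z=1) > 0, Y(0) ≥ 0 almost surely, and there are constants 0 < ε_{0,L} ≤ ε_{0,U} with ε_{0,L} ≤ ε0(X) ≤ ε_{0,U} almost surely. Let τ_T = E[Y(1) − Y(0) ∣ Z=1]. Then E[Z·Y]/e − ε_{0,U}·E[Z·μ0(X)]/e ≤ τ_T ≤ E[Z·Y]/e − ε_{0,L}·E[Z·μ0(X)]/e. -/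
open MeasureTheory

/-- Proposition S1 (worst-case bounds for the average causal effect on the treated
with non-negative outcomes). -/
theorem att_worst_case_bounds_nonneg_outcomes
    {Ω : Type*} [F : MeasurableSpace Ω] (P : Measure Ω) [IsProbabilityMeasure P]
    (Z Y1 Y0 Y : Ω → ℝ)
    (hZmeas : Measurable Z) (hZ01 : ∀ ω, Z ω = 0 ∨ Z ω = 1)
    (hY1int : Integrable Y1 P) (hY0int : Integrable Y0 P)
    (hYdef : ∀ ω, Y ω = Z ω * Y1 ω + (1 - Z ω) * Y0 ω)
    (mX : MeasurableSpace Ω) (hmX : mX ≤ F)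
    (eX : Ω → ℝ) (heXmeas : Measurable[mX] eX) (heX : eX =ᵐ[P] P[Z|mX])
    (hov : ∀ᵐ ω ∂P, 0 < eX ω ∧ eX ω < 1)
    (mu0 : Ω → ℝ) (hmu0meas : Measurable[mX] mu0)
    (hmu0 : (fun ω => mu0 ω * (1 - eX ω)) =ᵐ[P] P[fun ω => (1 - Z ω) * Y ω|mX])
    (eps0 : Ω → ℝ) (heps0meas : Measurable[mX] eps0)
    (heps0pos : ∀ᵐ ω ∂P, 0 < eps0 ω)
    (hsens0 : ∀ᵐ ω ∂P, (1 - eX ω) * (P[fun ω' => Z ω' * Y0 ω'|mX]) ω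
        = eps0 ω * eX ω * (P[fun ω' => (1 - Z ω') * Y0 ω'|mX]) ω)
    (he : 0 < P {ω | Z ω = 1})
    (hY0nn : ∀ᵐ ω ∂P, 0 ≤ Y0 ω)
    (e0L e0U : ℝ) (he0L : 0 < e0L) (he0LU : e0L ≤ e0U)
    (hb0 : ∀ᵐ ω ∂P, e0L ≤ eps0 ω ∧ eps0 ω ≤ e0U)
    (hintZY : Integrable (fun ω => Z ω * Y ω) P)
    (hintZmu0 : Integrable (fun ω => Z ω * mu0 ω) P)
    (tauT : ℝ)
    (htauT : tauT = ∫ ω, (Y1 ω - Y0 ω) ∂(ProbabilityTheory.cond P {ω | Z ω = 1})) :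
    ((∫ ω, Z ω * Y ω ∂P) / (P {ω | Z ω = 1}).toReal
        - e0U * (∫ ω, Z ω * mu0 ω ∂P) / (P {ω | Z ω = 1}).toReal ≤ tauT)
    ∧ (tauT ≤ (∫ ω, Z ω * Y ω ∂P) / (P {ω | Z ω = 1}).toReal
        - e0L * (∫ ω, Z ω * mu0 ω ∂P) / (P {ω | Z ω = 1}).toReal) := by
  -- basic pointwise identities
  have hZY : ∀ ω, Z ω * Y ω = Z ω * Y1 ω := by
    intro ω
    rcases hZ01 ω with h | h <;> simp [hYdef ω, h]
  have hZ1Y : (fun ω => (1 - Z ω) * Y ω) = fun ω => (1 - Z ω) * Y0 ω := by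
    funext ω
    rcases hZ01 ω with h | h <;> simp [hYdef ω, h]
  rw [hZ1Y] at hmu0
  -- integrability of Z*Y0
  have hZY0int : Integrable (fun ω => Z ω * Y0 ω) P := by
    refine hY0int.abs.mono' (hZmeas.aestronglyMeasurable.mul hY0int.1) ?_
    filter_upwards with ω
    rcases hZ01 ω with h | h <;> simp [h, abs_nonneg]
  have hZint : Integrable Z P := by
    refine (integrable_const (1 : ℝ)).mono' hZmeas.aestronglyMeasurable ?_
    filter_upwards with ω
    rcases hZ01 ω with h | h <;> simp [h]
  -- conditional expectation of (1-Z)Y0 is nonnegative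
  have h1ZY0nn : 0 ≤ᵐ[P] P[fun ω => (1 - Z ω) * Y0 ω|mX] := by
    refine condExp_nonneg ?_
    filter_upwards [hY0nn] with ω h0
    rcases hZ01 ω with h | h <;> simp [h, h0]
  -- mu0 ≥ 0 a.e.
  have hmu0nn : ∀ᵐ ω ∂P, 0 ≤ mu0 ω := by
    filter_upwards [hmu0, h1ZY0nn, hov] with ω h1 h2 h3
    have h4 : 0 ≤ mu0 ω * (1 - eX ω) := h1 ▸ h2
    nlinarith [h3.2]
  -- P[Z*Y0 | mX] = eps0 * eX * mu0 a.e.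
  have hC : ∀ᵐ ω ∂P, (P[fun ω' => Z ω' * Y0 ω'|mX]) ω = eps0 ω * (eX ω * mu0 ω) := by
    filter_upwards [hsens0, hmu0, hov] with ω h1 h2 h3
    have hne : (1 - eX ω) ≠ 0 := by linarith [h3.2]
    have : (1 - eX ω) * (P[fun ω' => Z ω' * Y0 ω'|mX]) ω
        = (1 - eX ω) * (eps0 ω * (eX ω * mu0 ω)) := by
      rw [h1, ← h2]; ring
    exact mul_left_cancel₀ hne this
  -- P[mu0*Z | mX] = mu0 * eX a.e.
  have hintmu0Z : Integrable (fun ω => mu0 ω * Z ω) P := by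
    have := hintZmu0
    simpa [mul_comm] using this
  have hD : P[(fun ω => mu0 ω) * Z|mX] =ᵐ[P] (fun ω => mu0 ω) * P[Z|mX] :=
    condExp_mul_of_stronglyMeasurable_left (hmu0meas.stronglyMeasurable) (by exact hintmu0Z) hZint
  have hD' : P[fun ω => mu0 ω * Z ω|mX] =ᵐ[P] fun ω => eX ω * mu0 ω := by
    have : (fun ω => mu0 ω * Z ω) = (fun ω => mu0 ω) * Z := rfl
    rw [this]
    filter_upwards [hD, heX] with ω h1 h2
    simp only [Pi.mul_apply] at h1
    rw [h1, ← h2, mul_comm]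
  -- integral identities
  have hIZY0 : ∫ ω, Z ω * Y0 ω ∂P = ∫ ω, (P[fun ω' => Z ω' * Y0 ω'|mX]) ω ∂P :=
    (integral_condExp hmX).symm
  have hIZmu0 : ∫ ω, Z ω * mu0 ω ∂P = ∫ ω, eX ω * mu0 ω ∂P := by
    have h1 : ∫ ω, Z ω * mu0 ω ∂P = ∫ ω, mu0 ω * Z ω ∂P := by
      simp_rw [mul_comm]
    rw [h1, ← integral_condExp hmX (f := fun ω => mu0 ω * Z ω)]
    exact integral_congr_ae hD'
  have hhint : Integrable (fun ω => eX ω * mu0 ω) P := (integrable_condExp).congr hD'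
  have hcondint : Integrable (fun ω => (P[fun ω' => Z ω' * Y0 ω'|mX]) ω) P := integrable_condExp
  -- key bounds on ∫ Z Y0
  have hub : ∫ ω, Z ω * Y0 ω ∂P ≤ e0U * ∫ ω, Z ω * mu0 ω ∂P := by
    rw [hIZY0, hIZmu0, ← integral_const_mul]
    refine integral_mono_ae hcondint (hhint.const_mul e0U) ?_
    filter_upwards [hC, hb0, hov, hmu0nn] with ω h1 h2 h3 h4
    rw [h1]
    have : 0 ≤ eX ω * mu0 ω := mul_nonneg h3.1.le h4
    nlinarith [h2.2]
  have hlb : e0L * ∫ ω, Z ω * mu0 ω ∂P ≤ ∫ ω, Z ω * Y0 ω ∂P := by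
    rw [hIZY0, hIZmu0, ← integral_const_mul]
    refine integral_mono_ae (hhint.const_mul e0L) hcondint ?_
    filter_upwards [hC, hb0, hov, hmu0nn] with ω h1 h2 h3 h4
    rw [h1]
    have : 0 ≤ eX ω * mu0 ω := mul_nonneg h3.1.le h4
    nlinarith [h2.1]
  -- compute tauT
  set s : Set Ω := {ω | Z ω = 1} with hs
  have hsmeas : MeasurableSet[F] s := hZmeas (measurableSet_singleton 1)
  have hind : (fun ω => s.indicator (fun ω' => Y1 ω' - Y0 ω') ω)
      = fun ω => Z ω * Y ω - Z ω * Y0 ω := by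
    funext ω
    rw [hZY ω]
    by_cases h : ω ∈ s
    · have hz : Z ω = 1 := h
      simp [Set.indicator_of_mem h, hz]
    · have hz : Z ω = 0 := by
        rcases hZ01 ω with h' | h'
        · exact h'
        · exact absurd h' h
      simp [Set.indicator_of_notMem h, hz]
  have heR : (0:ℝ) < (P s).toReal := ENNReal.toReal_pos he.ne' (measure_ne_top P s)
  have htau : tauT = ((∫ ω, Z ω * Y ω ∂P) - ∫ ω, Z ω * Y0 ω ∂P) / (P s).toReal := by
    rw [htauT]
    have hkey := @MeasureTheory.integral_indicator Ω ℝ F _ _ (fun ω' => Y1 ω' - Y0 ω') s P hsmeas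
    rw [ProbabilityTheory.cond, integral_smul_measure, ← hkey, hind,
      integral_sub hintZY hZY0int, ENNReal.toReal_inv, smul_eq_mul]
    ring
  constructor
  · rw [htau, ← sub_div, div_le_div_iff_of_pos_right heR]
    linarith
  · rw [htau, ← sub_div, div_le_div_iff_of_pos_right heR]
    linarith
end
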